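/- arXiv:2308.10102 — 6 statements merged into one kernel-verified Lean document; each statement's English description precedes it below -/
import Mathlib

section
/- Let d, k, n be positive integers and let ‖·‖ be any norm on ℝ^d. Let A = (a_i^j) be a k×n matrix with entries a_i^j ∈ ℝ^d such that ‖a_i^j‖ ≤ 1 for all i, j and the total sum of all entries is zero. Then there exist permutations π_1, …, π_k of {1,…,n} such that the row-permuted matrix C with c_i^j = a_{π_j(i)}^j satisfies ‖∑_{j=1}^k ∑_{i=1}^m c_i^j‖ ≤ min{dk, 40d^5} for every m ∈ {1,…,n}. -/
open Finset

section Descent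
variable {ι : Type*} [Fintype ι] [DecidableEq ι]
variable {W : Type*} [AddCommGroup W] [Module ℝ W]

private lemma push (L : (ι → ℝ) →ₗ[ℝ] W) (lam : ι → ℝ)
    (hbox : ∀ i, 0 ≤ lam i ∧ lam i ≤ 1) (μ : ι → ℝ) (hμ : μ ≠ 0)
    (hsupp : ∀ i, μ i ≠ 0 → lam i ≠ 0 ∧ lam i ≠ 1) (hLμ : L μ = 0) :
    ∃ (lam' : ι → ℝ) (i0 : ι),
      (∀ i, 0 ≤ lam' i ∧ lam' i ≤ 1) ∧ L lam' = L lam ∧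
      (∀ i, lam i = 0 ∨ lam i = 1 → lam' i = lam i) ∧
      (∀ i, (lam' i ≠ 0 ∧ lam' i ≠ 1) → (lam i ≠ 0 ∧ lam i ≠ 1)) ∧
      (lam i0 ≠ 0 ∧ lam i0 ≠ 1) ∧ (lam' i0 = 0 ∨ lam' i0 = 1) := by
  classical
  -- wlog some positive coordinate
  have hex : ∃ μ' : ι → ℝ, (∀ i, μ' i ≠ 0 → lam i ≠ 0 ∧ lam i ≠ 1) ∧ L μ' = 0 ∧
      ∃ i, 0 < μ' i := by
    rcases Function.ne_iff.1 hμ with ⟨i, hi⟩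
    rcases lt_or_gt_of_ne hi with h | h
    · exact ⟨-μ, fun i hi => hsupp i (by simpa using hi), by simp [hLμ], i, by simpa using h⟩
    · exact ⟨μ, hsupp, hLμ, i, h⟩
  clear hμ hsupp hLμ
  obtain ⟨μ, hsupp, hLμ, ipos, hipos⟩ := hex
  set S : Finset ι := univ.filter (fun i => μ i ≠ 0) with hS
  have hSne : S.Nonempty := ⟨ipos, by simp [hS, ne_of_gt hipos]⟩
  set bnd : ι → ℝ := fun i => if 0 < μ i then (1 - lam i) / μ i else lam i / (-μ i) with hbnd
  set t : ℝ := S.inf' hSne bnd with ht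
  have hfrac : ∀ i ∈ S, 0 < lam i ∧ lam i < 1 := by
    intro i hi
    have hi' : μ i ≠ 0 := by simpa [hS] using hi
    obtain ⟨h0, h1⟩ := hsupp i hi'
    exact ⟨lt_of_le_of_ne (hbox i).1 (Ne.symm h0), lt_of_le_of_ne (hbox i).2 h1⟩
  have hbndpos : ∀ i ∈ S, 0 < bnd i := by
    intro i hi
    have hi' : μ i ≠ 0 := by simpa [hS] using hi
    obtain ⟨h0, h1⟩ := hfrac i hi
    by_cases h : 0 < μ i
    · simp only [hbnd, if_pos h]
      exact div_pos (by linarith) h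
    · simp only [hbnd, if_neg h]
      have : μ i < 0 := lt_of_le_of_ne (not_lt.1 h) hi'
      exact div_pos h0 (by linarith)
  have htpos : 0 < t := by
    rw [ht]
    exact (Finset.lt_inf'_iff hSne).2 hbndpos
  have htle : ∀ i ∈ S, t ≤ bnd i := fun i hi => Finset.inf'_le bnd hi
  obtain ⟨i0, hi0S, hi0⟩ := Finset.exists_mem_eq_inf' hSne bnd
  set lam' : ι → ℝ := fun i => lam i + t * μ i with hlam'
  have hunch : ∀ i, μ i = 0 → lam' i = lam i := by
    intro i h; simp [hlam', h]
  have hbox' : ∀ i, 0 ≤ lam' i ∧ lam' i ≤ 1 := by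
    intro i
    by_cases h : μ i = 0
    · rw [hunch i h]; exact hbox i
    have hiS : i ∈ S := by simp [hS, h]
    rcases lt_or_gt_of_ne h with hneg | hpos
    · have hb : bnd i = lam i / (-μ i) := by simp [hbnd, not_lt.2 hneg.le]
      have h1 : t * (-μ i) ≤ lam i := by
        have := htle i hiS
        rw [hb] at this
        calc t * (-μ i) ≤ (lam i / (-μ i)) * (-μ i) := by
              apply mul_le_mul_of_nonneg_right this (by linarith)
          _ = lam i := by field_simp
      constructor
      · simp only [hlam']; nlinarith
      · have := (hbox i).2
        simp only [hlam']; nlinarith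
    · have hb : bnd i = (1 - lam i) / μ i := by simp [hbnd, hpos]
      have h1 : t * μ i ≤ 1 - lam i := by
        have := htle i hiS
        rw [hb] at this
        calc t * μ i ≤ ((1 - lam i) / μ i) * μ i := by
              apply mul_le_mul_of_nonneg_right this hpos.le
          _ = 1 - lam i := by field_simp
      constructor
      · have := (hbox i).1; simp only [hlam']; nlinarith
      · simp only [hlam']; linarith
  have hL' : L lam' = L lam := by
    have : lam' = lam + t • μ := by funext i; simp [hlam', smul_eq_mul]
    rw [this, map_add, map_smul, hLμ, smul_zero, add_zero]
  have hkeep : ∀ i, lam i = 0 ∨ lam i = 1 → lam' i = lam i := by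
    intro i hi
    have : μ i = 0 := by
      by_contra h
      rcases hsupp i h with ⟨h0, h1⟩
      rcases hi with h | h
      exacts [h0 h, h1 h]
    exact hunch i this
  refine ⟨lam', i0, hbox', hL', hkeep, ?_, ?_, ?_⟩
  · intro i hi
    by_contra h
    push_neg at h
    have : lam' i = lam i := by
      apply hkeep i
      by_cases h0 : lam i = 0
      · exact Or.inl h0
      · exact Or.inr (h h0)
    rcases hi with ⟨a, b⟩
    by_cases h0 : lam i = 0
    · exact a (this.trans h0)
    · exact b (this.trans (h h0))
  · have : μ i0 ≠ 0 := by simpa [hS] using hi0S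
    exact hsupp i0 this
  · have hμ0 : μ i0 ≠ 0 := by simpa [hS] using hi0S
    rcases lt_or_gt_of_ne hμ0 with hneg | hpos
    · left
      have hb : t = lam i0 / (-μ i0) := by rw [ht, hi0]; simp [hbnd, not_lt.2 hneg.le]
      have h2 : lam i0 / (-μ i0) * μ i0 = -lam i0 := by
        rw [div_mul_eq_mul_div, div_eq_iff (neg_ne_zero.2 hμ0)]
        ring
      simp only [hlam']
      rw [hb, h2]
      ring
    · right
      have hb : t = (1 - lam i0) / μ i0 := by rw [ht, hi0]; simp [hbnd, hpos]
      have h2 : (1 - lam i0) / μ i0 * μ i0 = 1 - lam i0 := div_mul_cancel₀ _ hμ0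
      simp only [hlam']
      rw [hb, h2]
      ring

private lemma descent_aux (L : (ι → ℝ) →ₗ[ℝ] W) :
    ∀ (c : ℕ) (lam0 : ι → ℝ), (∀ i, 0 ≤ lam0 i ∧ lam0 i ≤ 1) →
    (Finset.univ.filter (fun i => lam0 i ≠ 0 ∧ lam0 i ≠ 1) : Finset ι).card ≤ c →
    ∃ lam : ι → ℝ, (∀ i, 0 ≤ lam i ∧ lam i ≤ 1) ∧ L lam = L lam0 ∧
      (∀ i, lam0 i = 0 ∨ lam0 i = 1 → lam i = lam0 i) ∧
      (∀ μ : ι → ℝ, (∀ i, μ i ≠ 0 → lam i ≠ 0 ∧ lam i ≠ 1) → L μ = 0 → μ = 0) := by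
  classical
  intro c
  induction c with
  | zero =>
    intro lam0 hbox hcard
    refine ⟨lam0, hbox, rfl, fun _ _ => rfl, ?_⟩
    intro μ hμ hLμ
    funext i
    by_contra h
    have : i ∈ (Finset.univ.filter (fun i => lam0 i ≠ 0 ∧ lam0 i ≠ 1) : Finset ι) := by
      simp [hμ i h]
    have := Finset.card_pos.2 ⟨i, this⟩
    omega
  | succ c ih =>
    intro lam0 hbox hcard
    by_cases hker : ∃ μ : ι → ℝ, μ ≠ 0 ∧ (∀ i, μ i ≠ 0 → lam0 i ≠ 0 ∧ lam0 i ≠ 1) ∧ L μ = 0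
    · obtain ⟨μ, hμ, hsupp, hLμ⟩ := hker
      obtain ⟨lam1, i0, hbox1, hL1, hkeep1, hfrac1, hi0frac, hi0int⟩ :=
        push L lam0 hbox μ hμ hsupp hLμ
      have hsub : (Finset.univ.filter (fun i => lam1 i ≠ 0 ∧ lam1 i ≠ 1) : Finset ι) ⊆
          (Finset.univ.filter (fun i => lam0 i ≠ 0 ∧ lam0 i ≠ 1)).erase i0 := by
        intro i hi
        simp only [mem_filter, mem_univ, true_and] at hi
        refine Finset.mem_erase.2 ⟨?_, by simp [hfrac1 i hi]⟩
        rintro rfl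
        rcases hi0int with h | h
        exacts [hi.1 h, hi.2 h]
      have hcard1 : (Finset.univ.filter (fun i => lam1 i ≠ 0 ∧ lam1 i ≠ 1) : Finset ι).card ≤ c := by
        have h1 := Finset.card_le_card hsub
        have h2 : i0 ∈ (Finset.univ.filter (fun i => lam0 i ≠ 0 ∧ lam0 i ≠ 1) : Finset ι) := by
          simp [hi0frac]
        have := Finset.card_erase_of_mem h2
        omega
      obtain ⟨lam, hbox2, hL2, hkeep2, hnk⟩ := ih lam1 hbox1 hcard1
      refine ⟨lam, hbox2, hL2.trans hL1, ?_, hnk⟩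
      intro i hi
      have h1 : lam1 i = lam0 i := hkeep1 i hi
      have h2 : lam i = lam1 i := by
        apply hkeep2
        rw [h1]; exact hi
      rw [h2, h1]
    · push_neg at hker
      refine ⟨lam0, hbox, rfl, fun _ _ => rfl, ?_⟩
      intro μ hμ hLμ
      by_contra h
      exact hker μ h hμ hLμ

private lemma descent (L : (ι → ℝ) →ₗ[ℝ] W) (lam0 : ι → ℝ)
    (hbox : ∀ i, 0 ≤ lam0 i ∧ lam0 i ≤ 1) :
    ∃ lam : ι → ℝ, (∀ i, 0 ≤ lam i ∧ lam i ≤ 1) ∧ L lam = L lam0 ∧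
      (∀ i, lam0 i = 0 ∨ lam0 i = 1 → lam i = lam0 i) ∧
      (∀ μ : ι → ℝ, (∀ i, μ i ≠ 0 → lam i ≠ 0 ∧ lam i ≠ 1) → L μ = 0 → μ = 0) := by
  classical
  exact descent_aux L (Finset.univ.filter (fun i => lam0 i ≠ 0 ∧ lam0 i ≠ 1)).card lam0 hbox le_rfl

private lemma card_le_of_no_kernel [FiniteDimensional ℝ W] (L : (ι → ℝ) →ₗ[ℝ] W)
    (F : Finset ι)
    (hker : ∀ μ : ι → ℝ, (∀ i, μ i ≠ 0 → i ∈ F) → L μ = 0 → μ = 0) :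
    F.card ≤ Module.finrank ℝ W := by
  classical
  let ext : ({ x // x ∈ F } → ℝ) →ₗ[ℝ] (ι → ℝ) :=
    { toFun := fun μ i => if h : i ∈ F then μ ⟨i, h⟩ else 0
      map_add' := by intro x y; funext i; by_cases h : i ∈ F <;> simp [h]
      map_smul' := by intro c x; funext i; by_cases h : i ∈ F <;> simp [h] }
  have hinj : Function.Injective (L.comp ext) := by
    rw [← LinearMap.ker_eq_bot, LinearMap.ker_eq_bot']
    intro μ hμ
    have h1 : ext μ = 0 := by
      apply hker
      · intro i hi
        by_contra h
        exact hi (by simp [ext, h])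
      · exact hμ
    funext x
    have := congrFun h1 x.1
    simpa [ext, x.2] using this
  have h2 := LinearMap.finrank_le_finrank_of_injective hinj
  rwa [Module.finrank_fintype_fun_eq_card, Fintype.card_coe] at h2

end Descent

open Finset

section Steinitz
variable {E : Type*} [NormedAddCommGroup E] [NormedSpace ℝ E] [FiniteDimensional ℝ E]

private def SInv (d N : ℕ) (v : Fin N → E) (A : Finset (Fin N)) (lam : Fin N → ℝ) : Prop :=
  (∀ i, 0 ≤ lam i ∧ lam i ≤ 1) ∧ (∀ i, i ∉ A → lam i = 0) ∧
  (∑ i, lam i) = (A.card : ℝ) - d ∧ (∑ i, lam i • v i) = 0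

private lemma norm_sum_le_card_mul {N : ℕ} (v : Fin N → E) (α : ℝ)
    (hv : ∀ i, ‖v i‖ ≤ α) (s : Finset (Fin N)) : ‖∑ i ∈ s, v i‖ ≤ s.card * α := by
  calc ‖∑ i ∈ s, v i‖ ≤ ∑ i ∈ s, ‖v i‖ := norm_sum_le _ _
    _ ≤ ∑ _i ∈ s, α := Finset.sum_le_sum (fun i _ => hv i)
    _ = s.card * α := by rw [Finset.sum_const, nsmul_eq_mul]

private lemma sinv_bound {d N : ℕ} {v : Fin N → E} {α : ℝ} (hα : 0 ≤ α)
    (hv : ∀ i, ‖v i‖ ≤ α) {A : Finset (Fin N)} {lam : Fin N → ℝ}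
    (h : SInv d N v A lam) : ‖∑ i ∈ A, v i‖ ≤ d * α := by
  obtain ⟨hbox, hsupp, hs1, hs2⟩ := h
  have hA2 : ∑ i ∈ A, lam i • v i = 0 := by
    rw [Finset.sum_subset (Finset.subset_univ A)
      (fun i _ hi => by rw [hsupp i hi, zero_smul])]
    exact hs2
  have hA1 : ∑ i ∈ A, lam i = (A.card : ℝ) - d := by
    rw [Finset.sum_subset (Finset.subset_univ A) (fun i _ hi => hsupp i hi)]
    exact hs1
  have key : ∑ i ∈ A, v i = ∑ i ∈ A, (1 - lam i) • v i := by
    simp only [sub_smul, one_smul, Finset.sum_sub_distrib, hA2, sub_zero]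
  rw [key]
  calc ‖∑ i ∈ A, (1 - lam i) • v i‖ ≤ ∑ i ∈ A, ‖(1 - lam i) • v i‖ := norm_sum_le _ _
    _ ≤ ∑ i ∈ A, (1 - lam i) * α := by
        apply Finset.sum_le_sum
        intro i _
        rw [norm_smul, Real.norm_eq_abs, abs_of_nonneg (by linarith [(hbox i).2])]
        exact mul_le_mul_of_nonneg_left (hv i) (by linarith [(hbox i).2])
    _ = ((A.card : ℝ) - ∑ i ∈ A, lam i) * α := by
        rw [Finset.sum_congr rfl (fun i (_ : i ∈ A) => by ring :
            ∀ i ∈ A, (1 - lam i) * α = α - lam i * α),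
          Finset.sum_sub_distrib, Finset.sum_const, nsmul_eq_mul, sub_mul, Finset.sum_mul]
    _ = d * α := by rw [hA1]; ring

private lemma steinitz_step {d N : ℕ} (hdim : Module.finrank ℝ E = d) (v : Fin N → E)
    (A : Finset (Fin N)) (lam : Fin N → ℝ) (h : SInv d N v A lam) (hgt : d < A.card) :
    ∃ i0 ∈ A, ∃ lam', SInv d N v (A.erase i0) lam' := by
  classical
  obtain ⟨hbox, hsupp, hs1, hs2⟩ := h
  set t : ℕ := A.card with htdef
  have htd : (0:ℝ) < (t:ℝ) - d := by
    have : (d:ℝ) < t := by exact_mod_cast hgt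
    linarith
  set c : ℝ := ((t:ℝ) - 1 - d) / ((t:ℝ) - d) with hc
  have hc0 : 0 ≤ c := by
    apply div_nonneg _ htd.le
    have : (d:ℝ) + 1 ≤ t := by exact_mod_cast hgt
    linarith
  have hc1 : c ≤ 1 := by
    rw [hc, div_le_one htd]
    linarith
  set lam1 : Fin N → ℝ := fun i => c * lam i with hlam1
  have hbox1 : ∀ i, 0 ≤ lam1 i ∧ lam1 i ≤ 1 := by
    intro i
    constructor
    · exact mul_nonneg hc0 (hbox i).1
    · exact mul_le_one₀ hc1 (hbox i).1 (hbox i).2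
  let L : (Fin N → ℝ) →ₗ[ℝ] E × ℝ :=
    { toFun := fun x => (∑ i, x i • v i, ∑ i, x i)
      map_add' := by
        intro x y
        simp [add_smul, Finset.sum_add_distrib, Prod.ext_iff]
      map_smul' := by
        intro r x
        simp [smul_smul, Finset.mul_sum, Prod.ext_iff, Finset.smul_sum] }
  obtain ⟨lam2, hbox2, hL2, hkeep2, hker⟩ := descent L lam1 hbox1
  have hsupp2 : ∀ i, i ∉ A → lam2 i = 0 := by
    intro i hi
    have h0 : lam1 i = 0 := by simp [hlam1, hsupp i hi]
    rw [hkeep2 i (Or.inl h0), h0]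
  have hsum2 : ∑ i, lam2 i = (t:ℝ) - 1 - d := by
    have := congrArg Prod.snd hL2
    simp only [L, LinearMap.coe_mk, AddHom.coe_mk] at this
    rw [this]
    have : ∑ i, lam1 i = c * ∑ i, lam i := by
      rw [Finset.mul_sum]
    rw [this, hs1, hc]
    field_simp
  have hsumv2 : ∑ i, lam2 i • v i = 0 := by
    have := congrArg Prod.fst hL2
    simp only [L, LinearMap.coe_mk, AddHom.coe_mk] at this
    rw [this]
    have h1 : ∑ i, lam1 i • v i = c • ∑ i, lam i • v i := by
      rw [Finset.smul_sum]
      exact Finset.sum_congr rfl (fun i _ => by rw [smul_smul])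
    rw [h1, hs2, smul_zero]
  -- counting fractional coordinates
  set F : Finset (Fin N) := univ.filter (fun i => lam2 i ≠ 0 ∧ lam2 i ≠ 1) with hF
  have hFcard : F.card ≤ d + 1 := by
    have h1 := card_le_of_no_kernel L F (by
      intro μ hμ hLμ
      apply hker μ _ hLμ
      intro i hi
      have := hμ i hi
      simpa [hF] using this)
    have h2 : Module.finrank ℝ (E × ℝ) = d + 1 := by
      rw [Module.finrank_prod, hdim, Module.finrank_self]
    rw [h2] at h1
    exact h1
  have hFsub : F ⊆ A := by
    intro i hi
    simp only [hF, mem_filter, mem_univ, true_and] at hi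
    by_contra h
    exact hi.1 (hsupp2 i h)
  set Z : Finset (Fin N) := A.filter (fun i => lam2 i = 0) with hZ
  have hZne : Z.Nonempty := by
    by_contra hz
    rw [Finset.not_nonempty_iff_eq_empty] at hz
    have hzero : ∀ i ∈ A, lam2 i ≠ 0 := by
      intro i hi h0
      have hiZ : i ∈ Z := by simp [hZ, hi, h0]
      rw [hz] at hiZ
      exact absurd hiZ (Finset.notMem_empty i)
    set O : Finset (Fin N) := A.filter (fun i => lam2 i = 1) with hO
    have hFeq : F = A.filter (fun i => ¬ lam2 i = 1) := by
      ext i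
      simp only [hF, hO, mem_filter, mem_univ, true_and]
      constructor
      · intro h
        refine ⟨hFsub ?_, h.2⟩
        simp only [hF, mem_filter, mem_univ, true_and]
        exact h
      · intro h
        exact ⟨hzero i h.1, h.2⟩
    have hsplit : O.card + F.card = A.card := by
      rw [hO, hFeq]
      exact Finset.card_filter_add_card_filter_not (p := fun i => lam2 i = 1)
    have hsA : ∑ i ∈ A, lam2 i = (t:ℝ) - 1 - d := by
      rw [Finset.sum_subset (Finset.subset_univ A) (fun i _ hi => hsupp2 i hi)]
      exact hsum2
    have hsO : ∑ i ∈ O, lam2 i = (O.card : ℝ) := by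
      rw [Finset.sum_congr rfl (fun i hi => (Finset.mem_filter.1 hi).2), Finset.sum_const,
        nsmul_eq_mul, mul_one]
    have hdisj : Disjoint O F := by
      rw [hO, hFeq]
      exact Finset.disjoint_filter_filter_not A A _
    have hunion : O ∪ F = A := by
      rw [hO, hFeq]
      exact Finset.filter_union_filter_not_eq _ A
    have hsum_split : ∑ i ∈ O, lam2 i + ∑ i ∈ F, lam2 i = ∑ i ∈ A, lam2 i := by
      rw [← Finset.sum_union hdisj, hunion]
    have hOF : (O.card : ℝ) + F.card = (t:ℝ) := by exact_mod_cast congrArg (Nat.cast (R := ℝ)) hsplit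
    have hFsum : ∑ i ∈ F, lam2 i = (F.card : ℝ) - 1 - d := by
      rw [hsO, hsA] at hsum_split
      linarith
    have hFcR : (F.card : ℝ) ≤ (d:ℝ) + 1 := by exact_mod_cast hFcard
    rcases Finset.eq_empty_or_nonempty F with hFe | hFne
    · rw [hFe] at hFsum
      simp only [Finset.sum_empty, Finset.card_empty, Nat.cast_zero] at hFsum
      have : (0:ℝ) ≤ (d:ℝ) := Nat.cast_nonneg d
      linarith
    · have hpos : 0 < ∑ i ∈ F, lam2 i := by
        apply Finset.sum_pos _ hFne
        intro i hi
        simp only [hF, mem_filter, mem_univ, true_and] at hi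
        exact lt_of_le_of_ne (hbox2 i).1 (Ne.symm hi.1)
      linarith
  obtain ⟨i0, hi0⟩ := hZne
  rw [hZ, Finset.mem_filter] at hi0
  refine ⟨i0, hi0.1, lam2, hbox2, ?_, ?_, hsumv2⟩
  · intro i hi
    by_cases h : i = i0
    · rw [h]; exact hi0.2
    · exact hsupp2 i (fun hiA => hi (Finset.mem_erase.2 ⟨h, hiA⟩))
  · rw [Finset.card_erase_of_mem hi0.1, hsum2]
    have h1 : 1 ≤ t := by omega
    rw [Nat.cast_sub h1]
    push_cast
    ring


end Steinitz
private lemma steinitz_chain {E : Type*} [NormedAddCommGroup E] [NormedSpace ℝ E]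
    [FiniteDimensional ℝ E] {d N : ℕ} (hdim : Module.finrank ℝ E = d) (α : ℝ) (hα : 0 ≤ α)
    (v : Fin N → E) (hv : ∀ i, ‖v i‖ ≤ α) (hsum : ∑ i, v i = 0) (hdN : d ≤ N) (hN : 0 < N) :
    ∀ j : ℕ, j ≤ N → ∃ f : ℕ → Finset (Fin N), f 0 = Finset.univ ∧
      (∀ t, f (t + 1) ⊆ f t) ∧ (∀ t, t ≤ j → (f t).card = N - t) ∧
      (∀ t, t ≤ j → ‖∑ i ∈ f t, v i‖ ≤ d * α) ∧
      (d ≤ N - j → ∃ lam, SInv d N v (f j) lam) := by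
  intro j
  induction j with
  | zero =>
    intro _
    refine ⟨fun _ => Finset.univ, rfl, fun t => le_rfl, ?_, ?_, ?_⟩
    · intro t ht
      interval_cases t
      simp
    · intro t ht
      interval_cases t
      rw [hsum]
      simp only [norm_zero]
      positivity
    · intro _
      refine ⟨fun _ => ((N:ℝ) - d) / N, ?_, by simp, ?_, ?_⟩
      · intro i
        constructor
        · apply div_nonneg _ (Nat.cast_nonneg N)
          have : (d:ℝ) ≤ N := by exact_mod_cast hdN
          linarith
        · rw [div_le_one (by exact_mod_cast hN)]
          have : (0:ℝ) ≤ d := Nat.cast_nonneg d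
          linarith
      · simp only [Finset.sum_const, Finset.card_univ, Fintype.card_fin, nsmul_eq_mul]
        have hN0 : (N:ℝ) ≠ 0 := Nat.cast_ne_zero.2 (by omega)
        field_simp
      · have : ∑ i : Fin N, (((N:ℝ) - d) / N) • v i = (((N:ℝ) - d) / N) • ∑ i, v i := by
          rw [Finset.smul_sum]
        rw [this, hsum, smul_zero]
  | succ j ih =>
    intro hj
    obtain ⟨f, hf0, hfsub, hfcard, hfbound, hflam⟩ := ih (by omega)
    by_cases hd : d ≤ N - (j + 1)
    · obtain ⟨lam, hlam⟩ := hflam (by omega)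
      have hgt : d < (f j).card := by rw [hfcard j le_rfl]; omega
      obtain ⟨i0, hi0, lam', hlam'⟩ := steinitz_step hdim v (f j) lam hlam hgt
      refine ⟨fun t => if t ≤ j then f t else (f j).erase i0, by simp [hf0], ?_, ?_, ?_, ?_⟩
      · intro t
        by_cases h1 : t + 1 ≤ j
        · simp only [if_pos h1, if_pos (by omega : t ≤ j)]
          exact hfsub t
        · by_cases h2 : t ≤ j
          · have ht' : t = j := by omega
            subst ht'
            simp only [if_neg h1, if_pos h2]
            exact Finset.erase_subset _ _
          · simp only [if_neg h1, if_neg h2]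
            exact subset_rfl
      · intro t ht
        by_cases h2 : t ≤ j
        · simp only [if_pos h2]
          exact hfcard t h2
        · simp only [if_neg h2]
          rw [Finset.card_erase_of_mem hi0, hfcard j le_rfl]
          omega
      · intro t ht
        by_cases h2 : t ≤ j
        · simp only [if_pos h2]
          exact hfbound t h2
        · simp only [if_neg h2]
          exact sinv_bound hα hv hlam'
      · intro _
        simp only [if_neg (by omega : ¬ j + 1 ≤ j)]
        exact ⟨lam', hlam'⟩
    · have hne : (f j).Nonempty := by
        rw [← Finset.card_pos, hfcard j le_rfl]
        omega
      set i0 := hne.choose with hi0def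
      have hi0 : i0 ∈ f j := hne.choose_spec
      refine ⟨fun t => if t ≤ j then f t else (f j).erase i0, by simp [hf0], ?_, ?_, ?_, ?_⟩
      · intro t
        by_cases h1 : t + 1 ≤ j
        · simp only [if_pos h1, if_pos (by omega : t ≤ j)]
          exact hfsub t
        · by_cases h2 : t ≤ j
          · have ht' : t = j := by omega
            subst ht'
            simp only [if_neg h1, if_pos h2]
            exact Finset.erase_subset _ _
          · simp only [if_neg h1, if_neg h2]
            exact subset_rfl
      · intro t ht
        by_cases h2 : t ≤ j
        · simp only [if_pos h2]
          exact hfcard t h2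
        · simp only [if_neg h2]
          rw [Finset.card_erase_of_mem hi0, hfcard j le_rfl]
          omega
      · intro t ht
        by_cases h2 : t ≤ j
        · simp only [if_pos h2]
          exact hfbound t h2
        · simp only [if_neg h2]
          calc ‖∑ i ∈ (f j).erase i0, v i‖ ≤ ((f j).erase i0).card * α :=
                norm_sum_le_card_mul v α hv _
            _ ≤ d * α := by
                apply mul_le_mul_of_nonneg_right _ hα
                rw [Finset.card_erase_of_mem hi0, hfcard j le_rfl]
                have : N - j - 1 ≤ d := by omega
                exact_mod_cast Nat.cast_le.2 this
      · intro h
        omega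
private lemma card_filter_val_lt (N m : ℕ) (hm : m ≤ N) :
    (Finset.univ.filter (fun i : Fin N => (i : ℕ) < m)).card = m := by
  apply Finset.card_eq_of_bijective (fun i hi => ⟨i, lt_of_lt_of_le hi hm⟩)
  · intro a ha
    simp only [Finset.mem_filter, Finset.mem_univ, true_and] at ha
    exact ⟨a.val, ha, rfl⟩
  · intro i hi
    simp only [Finset.mem_filter, Finset.mem_univ, true_and]
    exact hi
  · intro i j hi hj h
    exact Fin.mk.inj_iff.1 h

private lemma steinitz_perm {E : Type*} [NormedAddCommGroup E] [NormedSpace ℝ E]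
    [FiniteDimensional ℝ E] {d N : ℕ} (hdim : Module.finrank ℝ E = d) (α : ℝ) (hα : 0 ≤ α)
    (v : Fin N → E) (hv : ∀ i, ‖v i‖ ≤ α) (hsum : ∑ i, v i = 0) :
    ∃ τ : Equiv.Perm (Fin N), ∀ m : ℕ, m ≤ N →
      ‖∑ i ∈ Finset.univ.filter (fun i : Fin N => (i : ℕ) < m), v (τ i)‖ ≤ d * α := by
  classical
  by_cases hdN : d ≤ N ∧ 0 < N
  swap
  · -- easy case : N < d or N = 0 : any permutation works
    refine ⟨Equiv.refl _, ?_⟩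
    intro m hm
    calc ‖∑ i ∈ Finset.univ.filter (fun i : Fin N => (i : ℕ) < m), v (Equiv.refl _ i)‖
        ≤ (Finset.univ.filter (fun i : Fin N => (i : ℕ) < m)).card * α :=
          norm_sum_le_card_mul v α hv _
      _ ≤ d * α := by
          apply mul_le_mul_of_nonneg_right _ hα
          have h1 : (Finset.univ.filter (fun i : Fin N => (i : ℕ) < m)).card ≤ N :=
            le_trans (Finset.card_filter_le _ _) (by simp)
          have h2 : (Finset.univ.filter (fun i : Fin N => (i : ℕ) < m)).card ≤ d := by
            rcases Nat.lt_or_ge N d with h | h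
            · omega
            · have hN0 : N = 0 := by
                by_contra hN
                exact hdN ⟨h, Nat.pos_of_ne_zero hN⟩
              omega
          exact_mod_cast Nat.cast_le.2 h2
  obtain ⟨hdN, hN⟩ := hdN
  obtain ⟨f, hf0, hfsub, hfcard, hfbound, -⟩ :=
    steinitz_chain hdim α hα v hv hsum hdN hN N le_rfl
  have hmono : ∀ s t : ℕ, s ≤ t → f t ⊆ f s := by
    intro s t h
    induction h with
    | refl => exact subset_rfl
    | step h ih => exact fun x hx => (by exact ih (hfsub _ hx) : _)
  have hne : ∀ i : Fin N, (f (N - 1 - i.val) \ f (N - i.val)).Nonempty := by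
    intro i
    rw [← Finset.card_pos, Finset.card_sdiff_of_subset]
    · rw [hfcard _ (by omega), hfcard _ (by omega)]
      omega
    · have : N - i.val = (N - 1 - i.val) + 1 := by omega
      rw [this]
      exact hfsub _
  set w : Fin N → Fin N := fun i => (f (N - 1 - i.val) \ f (N - i.val)).min' (hne i) with hw
  have hw1 : ∀ i : Fin N, w i ∈ f (N - 1 - i.val) :=
    fun i => (Finset.mem_sdiff.1 (Finset.min'_mem _ (hne i))).1
  have hw2 : ∀ i : Fin N, w i ∉ f (N - i.val) :=
    fun i => (Finset.mem_sdiff.1 (Finset.min'_mem _ (hne i))).2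
  have hinj : Function.Injective w := by
    intro i i' heq
    by_contra hne'
    have hvne : i.val ≠ i'.val := fun h => hne' (Fin.ext h)
    rcases Nat.lt_or_ge i.val i'.val with h | h
    · have hmem := hmono (N - i'.val) (N - 1 - i.val) (by omega) (hw1 i)
      rw [heq] at hmem
      exact (hw2 i') hmem
    · have h' : i'.val < i.val := by omega
      have hmem := hmono (N - i.val) (N - 1 - i'.val) (by omega) (hw1 i')
      rw [← heq] at hmem
      exact (hw2 i) hmem
  have himage : ∀ m : ℕ, m ≤ N →
      (Finset.univ.filter (fun i : Fin N => (i : ℕ) < m)).image w = f (N - m) := by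
    intro m hm
    apply Finset.eq_of_subset_of_card_le
    · intro x hx
      rw [Finset.mem_image] at hx
      obtain ⟨i, hi, rfl⟩ := hx
      rw [Finset.mem_filter] at hi
      exact hmono (N - m) (N - 1 - i.val) (by omega) (hw1 i)
    · rw [hfcard _ (by omega), Finset.card_image_of_injective _ hinj,
        card_filter_val_lt N m hm]
      omega
  refine ⟨Equiv.ofBijective w (Finite.injective_iff_bijective.1 hinj), ?_⟩
  intro m hm
  have : ∑ i ∈ Finset.univ.filter (fun i : Fin N => (i : ℕ) < m), v (w i) =
      ∑ x ∈ (Finset.univ.filter (fun i : Fin N => (i : ℕ) < m)).image w, v x := by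
    rw [Finset.sum_image (fun x _ y _ h => hinj h)]
  calc ‖∑ i ∈ Finset.univ.filter (fun i : Fin N => (i : ℕ) < m),
          v ((Equiv.ofBijective w (Finite.injective_iff_bijective.1 hinj)) i)‖
      = ‖∑ x ∈ f (N - m), v x‖ := by rw [← himage m hm, ← this]; rfl
    _ ≤ d * α := hfbound (N - m) (by omega)
private lemma selection {E : Type*} [NormedAddCommGroup E] [NormedSpace ℝ E]
    [FiniteDimensional ℝ E] {d k n : ℕ} (hdim : Module.finrank ℝ E = d)
    (a : Fin k → Fin n → E) (ha : ∀ j i, ‖a j i‖ ≤ 1)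
    (B : Fin k → Finset (Fin n)) (s p : ℕ)
    (hs : ∀ j, (B j).card = s) (hs0 : 0 < s) (hp : p ≤ s) :
    ∃ S : Fin k → Finset (Fin n), (∀ j, S j ⊆ B j) ∧ (∀ j, (S j).card = p) ∧
      ‖(∑ j, ∑ i ∈ S j, a j i) - ((p:ℝ)/s) • ∑ j, ∑ i ∈ B j, a j i‖ ≤ 2 * d := by
  classical
  set lam0 : (Fin k × Fin n) → ℝ := fun z => if z.2 ∈ B z.1 then (p:ℝ)/s else 0 with hlam0
  have hps0 : 0 ≤ (p:ℝ)/s := by positivity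
  have hps1 : (p:ℝ)/s ≤ 1 := by
    rw [div_le_one (by exact_mod_cast hs0)]
    exact_mod_cast hp
  have hbox0 : ∀ z, 0 ≤ lam0 z ∧ lam0 z ≤ 1 := by
    intro z
    simp only [hlam0]
    split_ifs
    · exact ⟨hps0, hps1⟩
    · norm_num
  let L : ((Fin k × Fin n) → ℝ) →ₗ[ℝ] E × (Fin k → ℝ) :=
    { toFun := fun x => (∑ z : Fin k × Fin n, x z • a z.1 z.2, fun j => ∑ i, x (j, i))
      map_add' := by
        intro x y
        simp [add_smul, Finset.sum_add_distrib, Prod.ext_iff, funext_iff]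
      map_smul' := by
        intro r x
        simp only [Prod.ext_iff, funext_iff, Pi.smul_apply, smul_eq_mul, Prod.smul_fst,
          Prod.smul_snd, Finset.smul_sum, Finset.mul_sum]
        constructor
        · exact Finset.sum_congr rfl (fun z _ => by rw [smul_smul]; rfl)
        · intro j; rfl }
  obtain ⟨lam, hbox, hL, hkeep, hker⟩ := descent L lam0 hbox0
  have hsupp : ∀ z : Fin k × Fin n, z.2 ∉ B z.1 → lam z = 0 := by
    intro z hz
    have h0 : lam0 z = 0 := by simp [hlam0, hz]
    rw [hkeep z (Or.inl h0), h0]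
  -- row sums
  have hrow : ∀ j, ∑ i, lam (j, i) = (p : ℝ) := by
    intro j
    have h1 := congrFun (congrArg Prod.snd hL) j
    simp only [L, LinearMap.coe_mk, AddHom.coe_mk] at h1
    rw [h1]
    have h2 : ∑ i ∈ B j, lam0 (j, i) = ∑ i, lam0 (j, i) :=
      Finset.sum_subset (Finset.subset_univ _) (fun i _ hi => by simp [hlam0, hi])
    rw [← h2, Finset.sum_congr rfl (fun i hi => by simp [hlam0, hi] : ∀ i ∈ B j, lam0 (j, i) = (p:ℝ)/s),
      Finset.sum_const, hs j, nsmul_eq_mul]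
    field_simp
  have hEc : ∑ z : Fin k × Fin n, lam z • a z.1 z.2 =
      ((p:ℝ)/s) • ∑ j, ∑ i ∈ B j, a j i := by
    have h1 := congrArg Prod.fst hL
    simp only [L, LinearMap.coe_mk, AddHom.coe_mk] at h1
    rw [h1, Fintype.sum_prod_type, Finset.smul_sum]
    apply Finset.sum_congr rfl
    intro j _
    have h2 : ∑ i ∈ B j, lam0 (j, i) • a j i = ∑ i, lam0 (j, i) • a j i :=
      Finset.sum_subset (Finset.subset_univ _) (fun i _ hi => by simp [hlam0, hi])
    rw [← h2, Finset.smul_sum]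
    exact Finset.sum_congr rfl (fun i hi => by simp [hlam0, hi])
  -- fractional set and its rows
  set F : Finset (Fin k × Fin n) := Finset.univ.filter (fun z => lam z ≠ 0 ∧ lam z ≠ 1)
    with hF
  set R : Finset (Fin k) := F.image Prod.fst with hR
  have hmemF : ∀ z : Fin k × Fin n, z ∈ F ↔ (lam z ≠ 0 ∧ lam z ≠ 1) := by
    intro z
    simp [hF]
  -- each row meeting F has at least two fractional entries
  have htwo : ∀ j ∈ R, 2 ≤ (F.filter (fun z => z.1 = j)).card := by
    intro j hj
    rw [hR, Finset.mem_image] at hj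
    obtain ⟨z0, hz0F, hz0⟩ := hj
    by_contra hcc
    push_neg at hcc
    have hz0mem : z0 ∈ F.filter (fun z => z.1 = j) := Finset.mem_filter.2 ⟨hz0F, hz0⟩
    have hcard1 : (F.filter (fun z => z.1 = j)).card = 1 := by
      have := Finset.card_pos.2 ⟨z0, hz0mem⟩
      omega
    obtain ⟨z1, hz1⟩ := Finset.card_eq_one.1 hcard1
    have hz1F : z1 ∈ F.filter (fun z => z.1 = j) := by rw [hz1]; exact Finset.mem_singleton_self z1
    have hz1j : z1.1 = j := (Finset.mem_filter.1 hz1F).2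
    set i1 : Fin n := z1.2 with hi1
    have hz1eq : z1 = (j, i1) := by rw [← hz1j]
    have hint : ∀ i : Fin n, i ≠ i1 → lam (j, i) = 0 ∨ lam (j, i) = 1 := by
      intro i hi
      by_contra hc
      push_neg at hc
      have hmem : ((j, i) : Fin k × Fin n) ∈ F.filter (fun z => z.1 = j) := by
        rw [Finset.mem_filter]
        exact ⟨(hmemF _).2 ⟨hc.1, hc.2⟩, rfl⟩
      rw [hz1, Finset.mem_singleton, hz1eq] at hmem
      exact hi (by injection hmem)
    have hfr : lam (j, i1) ≠ 0 ∧ lam (j, i1) ≠ 1 := by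
      have := (Finset.mem_filter.1 hz1F).1
      rw [hz1eq] at this
      exact (hmemF _).1 this
    -- sum over row j equals lam (j, i1) plus an integer
    set O1 : Finset (Fin n) := (Finset.univ.erase i1).filter (fun i => lam (j, i) = 1)
      with hO1
    have hsplit : ∑ i, lam (j, i) = lam (j, i1) + ∑ i ∈ Finset.univ.erase i1, lam (j, i) :=
      (Finset.add_sum_erase _ _ (Finset.mem_univ i1)).symm
    have hsum01 : ∑ i ∈ Finset.univ.erase i1, lam (j, i) = (O1.card : ℝ) := by
      rw [← Finset.sum_filter_add_sum_filter_not (Finset.univ.erase i1)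
        (fun i => lam (j, i) = 1) (fun i => lam (j, i))]
      have e1 : ∑ i ∈ (Finset.univ.erase i1).filter (fun i => lam (j, i) = 1), lam (j, i)
          = (O1.card : ℝ) := by
        rw [Finset.sum_congr rfl (fun i hi => (Finset.mem_filter.1 hi).2), Finset.sum_const,
          nsmul_eq_mul, mul_one, hO1]
      have e2 : ∑ i ∈ (Finset.univ.erase i1).filter (fun i => ¬ lam (j, i) = 1), lam (j, i)
          = 0 := by
        apply Finset.sum_eq_zero
        intro i hi
        rw [Finset.mem_filter] at hi
        rcases hint i (Finset.ne_of_mem_erase hi.1) with h | h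
        · exact h
        · exact absurd h hi.2
      rw [e1, e2, add_zero]
    rw [hrow j, hsum01] at hsplit
    have hfr0 : 0 < lam (j, i1) := lt_of_le_of_ne (hbox _).1 (Ne.symm hfr.1)
    have hfr1 : lam (j, i1) < 1 := lt_of_le_of_ne (hbox _).2 hfr.2
    have hlt1 : (O1.card : ℝ) < p := by linarith
    have hlt2 : (p : ℝ) < O1.card + 1 := by linarith
    have : O1.card < p := by exact_mod_cast hlt1
    have : p < O1.card + 1 := by exact_mod_cast hlt2
    omega
  -- counting: F.card ≤ d + R.card
  have hFR : ∀ z ∈ F, z.1 ∈ R := fun z hz => Finset.mem_image_of_mem Prod.fst hz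
  have hFcard : F.card ≤ d + R.card := by
    let L2 : ((Fin k × Fin n) → ℝ) →ₗ[ℝ] E × ({ x // x ∈ R } → ℝ) :=
      { toFun := fun x => (∑ z : Fin k × Fin n, x z • a z.1 z.2, fun j => ∑ i, x (j.1, i))
        map_add' := by
          intro x y
          simp [add_smul, Finset.sum_add_distrib, Prod.ext_iff, funext_iff]
        map_smul' := by
          intro r x
          simp only [Prod.ext_iff, funext_iff, Pi.smul_apply, smul_eq_mul, Prod.smul_fst,
            Prod.smul_snd, Finset.smul_sum, Finset.mul_sum]
          constructor
          · exact Finset.sum_congr rfl (fun z _ => by rw [smul_smul]; rfl)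
          · intro j; rfl }
    have h1 := card_le_of_no_kernel L2 F (by
      intro μ hμ hL2
      have hfst : ∑ z : Fin k × Fin n, μ z • a z.1 z.2 = 0 := by
        have := congrArg Prod.fst hL2
        simpa [L2] using this
      have hsnd : ∀ j : Fin k, (hj : j ∈ R) → ∑ i, μ (j, i) = 0 := by
        intro j hj
        have := congrFun (congrArg Prod.snd hL2) ⟨j, hj⟩
        simpa [L2] using this
      apply hker μ (fun z hz => (hmemF z).1 (hμ z hz))
      have h2 : (fun j => ∑ i, μ (j, i)) = (0 : Fin k → ℝ) := by
        funext j
        by_cases hjR : j ∈ R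
        · simpa using hsnd j hjR
        · show ∑ i, μ (j, i) = 0
          apply Finset.sum_eq_zero
          intro i _
          by_contra hne
          exact hjR (hFR _ (hμ (j, i) hne))
      have h3 : L μ = (∑ z : Fin k × Fin n, μ z • a z.1 z.2, fun j => ∑ i, μ (j, i)) := rfl
      rw [h3, hfst, h2]
      rfl)
    have h2 : Module.finrank ℝ (E × ({ x // x ∈ R } → ℝ)) = d + R.card := by
      rw [Module.finrank_prod, hdim, Module.finrank_fintype_fun_eq_card, Fintype.card_coe]
    rw [h2] at h1
    exact h1
  have hfiber : F.card = ∑ j ∈ R, (F.filter (fun z => z.1 = j)).card :=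
    Finset.card_eq_sum_card_fiberwise hFR
  have hRF : 2 * R.card ≤ F.card := by
    rw [hfiber, two_mul]
    calc R.card + R.card = ∑ _j ∈ R, 2 := by
          rw [Finset.sum_const, smul_eq_mul]
          ring
      _ ≤ ∑ j ∈ R, (F.filter (fun z => z.1 = j)).card := Finset.sum_le_sum htwo
  have hF2d : F.card ≤ 2 * d := by omega
  -- rounding within each row
  have hrowB : ∀ j, ∑ i ∈ B j, lam (j, i) = (p:ℝ) := by
    intro j
    rw [Finset.sum_subset (Finset.subset_univ _) (fun i _ hi => hsupp (j, i) hi)]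
    exact hrow j
  set O : Fin k → Finset (Fin n) := fun j => (B j).filter (fun i => lam (j, i) = 1) with hO
  set Fr : Fin k → Finset (Fin n) :=
    fun j => (B j).filter (fun i => lam (j, i) ≠ 0 ∧ lam (j, i) ≠ 1) with hFr
  have hOFr : ∀ j, Disjoint (O j) (Fr j) := by
    intro j
    rw [Finset.disjoint_left]
    intro x hx hx'
    exact ((Finset.mem_filter.1 hx').2).2 (Finset.mem_filter.1 hx).2
  have hOsum : ∀ j, ∑ i ∈ (B j).filter (fun i => lam (j, i) = 1), lam (j, i)
      = ((O j).card : ℝ) := by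
    intro j
    rw [Finset.sum_congr rfl (fun i hi => (Finset.mem_filter.1 hi).2), Finset.sum_const,
      nsmul_eq_mul, mul_one, hO]
  have hFrsum : ∀ j, ∑ i ∈ Fr j, lam (j, i)
      = ∑ i ∈ (B j).filter (fun i => ¬ lam (j, i) = 1), lam (j, i) := by
    intro j
    apply Finset.sum_subset
    · intro i hi
      rw [Finset.mem_filter] at hi ⊢
      exact ⟨hi.1, hi.2.2⟩
    · intro i hi hni
      rw [Finset.mem_filter] at hi
      by_contra h0
      exact hni (Finset.mem_filter.2 ⟨hi.1, ⟨h0, hi.2⟩⟩)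
  have hsplitB : ∀ j, ((O j).card : ℝ) + ∑ i ∈ Fr j, lam (j, i) = (p : ℝ) := by
    intro j
    rw [← hrowB j, ← Finset.sum_filter_add_sum_filter_not (B j)
      (fun i => lam (j, i) = 1) (fun i => lam (j, i)), hOsum j, hFrsum j]
  have hOle : ∀ j, (O j).card ≤ p := by
    intro j
    have h1 : (0:ℝ) ≤ ∑ i ∈ Fr j, lam (j, i) :=
      Finset.sum_nonneg (fun i _ => (hbox _).1)
    have := hsplitB j
    exact_mod_cast (by linarith : ((O j).card : ℝ) ≤ (p:ℝ))
  have hgle : ∀ j, p - (O j).card ≤ (Fr j).card := by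
    intro j
    have h1 : ∑ i ∈ Fr j, lam (j, i) ≤ ((Fr j).card : ℝ) := by
      calc ∑ i ∈ Fr j, lam (j, i) ≤ ∑ _i ∈ Fr j, (1:ℝ) :=
            Finset.sum_le_sum (fun i _ => (hbox _).2)
        _ = ((Fr j).card : ℝ) := by simp
    have h2 := hsplitB j
    have h3 : ((p - (O j).card : ℕ) : ℝ) ≤ ((Fr j).card : ℝ) := by
      rw [Nat.cast_sub (hOle j)]
      linarith
    exact_mod_cast h3
  have hGex : ∀ j, ∃ G : Finset (Fin n), G ⊆ Fr j ∧ G.card = p - (O j).card :=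
    fun j => Finset.exists_subset_card_eq (hgle j)
  choose G hGsub hGcard using hGex
  set S : Fin k → Finset (Fin n) := fun j => O j ∪ G j with hS
  have hSsubB : ∀ j, S j ⊆ B j := by
    intro j
    apply Finset.union_subset (Finset.filter_subset _ _)
    exact (hGsub j).trans (Finset.filter_subset _ _)
  have hScard : ∀ j, (S j).card = p := by
    intro j
    rw [hS]
    rw [Finset.card_union_of_disjoint
      (Finset.disjoint_of_subset_right (hGsub j) (hOFr j)), hGcard j]
    have := hOle j
    omega
  refine ⟨S, hSsubB, hScard, ?_⟩
  -- the error estimate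
  have hEc2 : ((p:ℝ)/s) • ∑ j, ∑ i ∈ B j, a j i
      = ∑ j, ∑ i ∈ B j, lam (j, i) • a j i := by
    rw [← hEc, Fintype.sum_prod_type]
    apply Finset.sum_congr rfl
    intro j _
    exact (Finset.sum_subset (Finset.subset_univ (B j))
      (fun i _ hi => by rw [hsupp (j, i) hi, zero_smul])).symm
  have hSsum : ∀ j, ∑ i ∈ S j, a j i
      = ∑ i ∈ B j, (if i ∈ S j then (1:ℝ) else 0) • a j i := by
    intro j
    have h1 : ∑ i ∈ B j, (if i ∈ S j then (1:ℝ) else 0) • a j i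
        = ∑ i ∈ B j, (if i ∈ S j then a j i else 0) := by
      apply Finset.sum_congr rfl
      intro i _
      split_ifs <;> simp
    rw [h1, ← Finset.sum_filter, Finset.filter_mem_eq_inter,
      Finset.inter_eq_right.2 (hSsubB j)]
  have hkey : (∑ j, ∑ i ∈ S j, a j i) - ((p:ℝ)/s) • ∑ j, ∑ i ∈ B j, a j i
      = ∑ j, ∑ i ∈ B j, ((if i ∈ S j then (1:ℝ) else 0) - lam (j, i)) • a j i := by
    rw [hEc2, ← Finset.sum_sub_distrib]
    apply Finset.sum_congr rfl
    intro j _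
    rw [hSsum j, ← Finset.sum_sub_distrib]
    apply Finset.sum_congr rfl
    intro i _
    rw [sub_smul]
  have hzeroB : ∀ j, ∀ i ∈ B j, i ∉ Fr j →
      ((if i ∈ S j then (1:ℝ) else 0) - lam (j, i)) = 0 := by
    intro j i hiB hiFr
    by_cases hiO : i ∈ O j
    · have h1 : lam (j, i) = 1 := (Finset.mem_filter.1 hiO).2
      have h2 : i ∈ S j := Finset.mem_union_left _ hiO
      rw [if_pos h2, h1, sub_self]
    · have h1 : lam (j, i) = 0 := by
        by_contra h0
        apply hiFr
        rw [hFr]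
        rw [Finset.mem_filter]
        refine ⟨hiB, h0, ?_⟩
        intro h1
        exact hiO (Finset.mem_filter.2 ⟨hiB, h1⟩)
      have h2 : i ∉ S j := by
        intro h2
        rcases Finset.mem_union.1 h2 with h | h
        · exact hiO h
        · exact hiFr (hGsub j h)
      rw [if_neg h2, h1, sub_self]
  have hFrF : ∑ j, (Fr j).card = F.card := by
    rw [Finset.card_eq_sum_card_fiberwise
      (f := Prod.fst) (t := Finset.univ) (fun z _ => Finset.mem_univ _)]
    apply Finset.sum_congr rfl
    intro j _
    have him : F.filter (fun z => z.1 = j) = (Fr j).image (fun i => (j, i)) := by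
      ext z
      rcases z with ⟨j', i⟩
      simp only [Finset.mem_filter, Finset.mem_image]
      constructor
      · rintro ⟨hzF, rfl⟩
        refine ⟨i, ?_, rfl⟩
        have hfr := (hmemF _).1 hzF
        have hiB : i ∈ B j' := by
          by_contra hniB
          exact hfr.1 (hsupp (j', i) hniB)
        rw [hFr]
        exact Finset.mem_filter.2 ⟨hiB, hfr⟩
      · rintro ⟨i', hi', heq⟩
        obtain ⟨h1, h2⟩ := Prod.mk_inj.1 heq
        subst h1
        subst h2
        have := Finset.mem_filter.1 hi'
        exact ⟨(hmemF _).2 this.2, rfl⟩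
    rw [him, Finset.card_image_of_injective _
      (fun x y hxy => by simpa using congrArg Prod.snd hxy)]
  rw [hkey]
  calc ‖∑ j, ∑ i ∈ B j, ((if i ∈ S j then (1:ℝ) else 0) - lam (j, i)) • a j i‖
      ≤ ∑ j, ‖∑ i ∈ B j, ((if i ∈ S j then (1:ℝ) else 0) - lam (j, i)) • a j i‖ :=
        norm_sum_le _ _
    _ ≤ ∑ j, ((Fr j).card : ℝ) := by
        apply Finset.sum_le_sum
        intro j _
        calc ‖∑ i ∈ B j, ((if i ∈ S j then (1:ℝ) else 0) - lam (j, i)) • a j i‖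
            ≤ ∑ i ∈ B j, ‖((if i ∈ S j then (1:ℝ) else 0) - lam (j, i)) • a j i‖ :=
              norm_sum_le _ _
          _ ≤ ∑ i ∈ B j, (if i ∈ Fr j then (1:ℝ) else 0) := by
              apply Finset.sum_le_sum
              intro i hiB
              by_cases hiFr : i ∈ Fr j
              · rw [if_pos hiFr, norm_smul, Real.norm_eq_abs]
                have hb1 : |(if i ∈ S j then (1:ℝ) else 0) - lam (j, i)| ≤ 1 := by
                  rw [abs_le]
                  have := (hbox (j, i)).1
                  have := (hbox (j, i)).2
                  split_ifs <;> constructor <;> linarith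
                calc |(if i ∈ S j then (1:ℝ) else 0) - lam (j, i)| * ‖a j i‖
                    ≤ 1 * 1 := by
                      apply mul_le_mul hb1 (ha j i) (norm_nonneg _) zero_le_one
                  _ = 1 := by ring
              · rw [if_neg hiFr, hzeroB j i hiB hiFr, zero_smul, norm_zero]
          _ = ((Fr j).card : ℝ) := by
              rw [Finset.sum_ite_mem, Finset.inter_eq_right.2
                ((Finset.filter_subset _ _ : Fr j ⊆ B j))]
              simp
              rfl
    _ = ((∑ j, (Fr j).card : ℕ) : ℝ) := by rw [Nat.cast_sum]
    _ ≤ 2 * d := by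
        rw [hFrF]
        exact_mod_cast hF2d
private lemma balance {E : Type*} [NormedAddCommGroup E] [NormedSpace ℝ E]
    [FiniteDimensional ℝ E] {d k n : ℕ} (hdim : Module.finrank ℝ E = d)
    (a : Fin k → Fin n → E) (ha : ∀ j i, ‖a j i‖ ≤ 1) :
    ∀ s : ℕ, 0 < s → ∀ B : Fin k → Finset (Fin n), (∀ j, (B j).card = s) →
    ∃ ψ : Fin k → Fin s → Fin n, (∀ j, Function.Injective (ψ j)) ∧
      (∀ j c, ψ j c ∈ B j) ∧
      ∀ c : Fin s, ‖(∑ j, a j (ψ j c)) - (s:ℝ)⁻¹ • ∑ j, ∑ i ∈ B j, a j i‖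
        ≤ 8 * d * (1 - 1 / s) := by
  intro s
  induction s using Nat.strong_induction_on with
  | _ s ih =>
    intro hs0 B hB
    rcases Nat.lt_or_ge s 2 with hs1 | hs2
    · -- base case s = 1
      have hs : s = 1 := by omega
      subst hs
      have hBne : ∀ j, ∃ b, B j = {b} := fun j => Finset.card_eq_one.1 (hB j)
      choose b hb using hBne
      refine ⟨fun j _ => b j, fun j => Function.injective_of_subsingleton _, ?_, ?_⟩
      · intro j c
        rw [hb j]
        exact Finset.mem_singleton_self _
      · intro c
        have h1 : ∀ j, ∑ i ∈ B j, a j i = a j (b j) := by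
          intro j
          rw [hb j, Finset.sum_singleton]
        rw [Finset.sum_congr rfl (fun j _ => h1 j)]
        simp
    · -- inductive step
      set p : ℕ := (s + 1) / 2 with hpdef
      set q : ℕ := s - p with hqdef
      have hp1 : 1 ≤ p := by omega
      have hq1 : 1 ≤ q := by omega
      have hps : p < s := by omega
      have hqs : q < s := by omega
      have hpq : p + q = s := by omega
      have hp34 : 4 * p ≤ 3 * s := by omega
      have hq34 : 4 * q ≤ 3 * s := by omega
      obtain ⟨S, hSsub, hScard, hSnorm⟩ :=
        selection hdim a ha B s p hB hs0 (by omega)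
      set B' : Fin k → Finset (Fin n) := fun j => B j \ S j with hB'
      have hB'card : ∀ j, (B' j).card = q := by
        intro j
        rw [hB', Finset.card_sdiff_of_subset (hSsub j), hB j, hScard j]
      obtain ⟨ψL, hψLinj, hψLmem, hψLnorm⟩ := ih p hps hp1 S hScard
      obtain ⟨ψR, hψRinj, hψRmem, hψRnorm⟩ := ih q hqs hq1 B' hB'card
      set ψ : Fin k → Fin s → Fin n := fun j c =>
        if h : (c : ℕ) < p then ψL j ⟨c, h⟩ else ψR j ⟨(c : ℕ) - p, by omega⟩ with hψ
      have hmemL : ∀ (j : Fin k) (c : Fin s) (h : (c:ℕ) < p), ψ j c = ψL j ⟨(c:ℕ), h⟩ := by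
        intro j c h
        simp [hψ, h]
      have hmemR : ∀ (j : Fin k) (c : Fin s) (h : ¬ (c:ℕ) < p), ψ j c = ψR j ⟨(c:ℕ) - p, by omega⟩ := by
        intro j c h
        simp [hψ, h]
      have hmem : ∀ j c, ψ j c ∈ B j := by
        intro j c
        by_cases h : (c : ℕ) < p
        · rw [hmemL j c h]
          exact hSsub j (hψLmem j _)
        · rw [hmemR j c h]
          exact Finset.sdiff_subset (hψRmem j _)
      have hinj : ∀ j, Function.Injective (ψ j) := by
        intro j c c' heq
        by_cases h : (c : ℕ) < p <;> by_cases h' : (c' : ℕ) < p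
        · rw [hmemL j c h, hmemL j c' h'] at heq
          have := hψLinj j heq
          have := Fin.mk.inj_iff.1 this
          exact Fin.ext this
        · rw [hmemL j c h, hmemR j c' h'] at heq
          exfalso
          have h1 := hψLmem j (⟨c, h⟩ : Fin p)
          rw [heq] at h1
          have h2 := hψRmem j (⟨(c':ℕ) - p, by omega⟩ : Fin q)
          rw [hB', Finset.mem_sdiff] at h2
          exact h2.2 h1
        · rw [hmemR j c h, hmemL j c' h'] at heq
          exfalso
          have h1 := hψLmem j (⟨c', h'⟩ : Fin p)
          rw [← heq] at h1
          have h2 := hψRmem j (⟨(c:ℕ) - p, by omega⟩ : Fin q)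
          rw [hB', Finset.mem_sdiff] at h2
          exact h2.2 h1
        · rw [hmemR j c h, hmemR j c' h'] at heq
          have := hψRinj j heq
          have := Fin.mk.inj_iff.1 this
          exact Fin.ext (by omega)
      refine ⟨ψ, hinj, hmem, ?_⟩
      intro c
      -- totals
      set T : E := ∑ j, ∑ i ∈ B j, a j i with hT
      set TL : E := ∑ j, ∑ i ∈ S j, a j i with hTL
      set TR : E := ∑ j, ∑ i ∈ B' j, a j i with hTR
      have hTsplit : TL + TR = T := by
        rw [hTL, hTR, hT, ← Finset.sum_add_distrib]
        apply Finset.sum_congr rfl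
        intro j _
        rw [hB', ← Finset.sum_sdiff (hSsub j)]
        ring_nf
        rw [add_comm]
      have hcast : ∀ m : ℕ, 1 ≤ m → ((m:ℝ) ≠ 0) := by
        intro m hm
        exact_mod_cast (by omega : m ≠ 0)
      have hdist : ‖TL - ((p:ℝ)/s) • T‖ ≤ 2 * d := hSnorm
      by_cases h : (c : ℕ) < p
      · -- left column
        have hcol := hψLnorm ⟨c, h⟩
        have heq : ∑ j, a j (ψ j c) = ∑ j, a j (ψL j ⟨c, h⟩) :=
          Finset.sum_congr rfl (fun j _ => by rw [hmemL j c h])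
        rw [heq]
        have htri : ‖(∑ j, a j (ψL j ⟨c, h⟩)) - (s:ℝ)⁻¹ • T‖
            ≤ ‖(∑ j, a j (ψL j ⟨c, h⟩)) - (p:ℝ)⁻¹ • TL‖ + ‖(p:ℝ)⁻¹ • TL - (s:ℝ)⁻¹ • T‖ := by
          have := norm_sub_le_norm_sub_add_norm_sub
            (∑ j, a j (ψL j ⟨c, h⟩)) ((p:ℝ)⁻¹ • TL) ((s:ℝ)⁻¹ • T)
          exact this
        have h2 : ‖(p:ℝ)⁻¹ • TL - (s:ℝ)⁻¹ • T‖ ≤ (2 * d) / p := by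
          have hp0 : (p:ℝ) ≠ 0 := by exact_mod_cast (by omega : p ≠ 0)
          have hs0' : (s:ℝ) ≠ 0 := by exact_mod_cast (by omega : s ≠ 0)
          have e4 : (p:ℝ)⁻¹ * ((p:ℝ)/s) = (s:ℝ)⁻¹ := by field_simp
          have heq2 : (p:ℝ)⁻¹ • TL - (s:ℝ)⁻¹ • T = (p:ℝ)⁻¹ • (TL - ((p:ℝ)/s) • T) := by
            rw [smul_sub, smul_smul, e4]
          rw [heq2, norm_smul, Real.norm_eq_abs,
            abs_of_nonneg (by positivity : (0:ℝ) ≤ (p:ℝ)⁻¹)]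
          calc (p:ℝ)⁻¹ * ‖TL - ((p:ℝ)/s) • T‖ ≤ (p:ℝ)⁻¹ * (2 * d) :=
                mul_le_mul_of_nonneg_left hdist (by positivity)
            _ = 2 * d / p := by ring
        have hfinal : 8 * (d:ℝ) * (1 - 1/p) + 2 * d / p ≤ 8 * d * (1 - 1/s) := by
          have hpR : (0:ℝ) < p := by exact_mod_cast hp1
          have hsR : (0:ℝ) < s := by exact_mod_cast hs0
          have hdR : (0:ℝ) ≤ d := Nat.cast_nonneg d
          have h34 : 4 * (p:ℝ) ≤ 3 * s := by exact_mod_cast hp34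
          have key : 8 * (d:ℝ) / s ≤ 6 * d / p := by
            rw [div_le_div_iff₀ hsR hpR]
            nlinarith
          have e1 : 8 * (d:ℝ) * (1 - 1/p) + 2 * d / p = 8 * d - 6 * d / p := by ring
          have e2 : 8 * (d:ℝ) * (1 - 1/s) = 8 * d - 8 * d / s := by ring
          rw [e1, e2]
          linarith
        calc ‖(∑ j, a j (ψL j ⟨c, h⟩)) - (s:ℝ)⁻¹ • T‖
            ≤ ‖(∑ j, a j (ψL j ⟨c, h⟩)) - (p:ℝ)⁻¹ • TL‖ + ‖(p:ℝ)⁻¹ • TL - (s:ℝ)⁻¹ • T‖ := htri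
          _ ≤ 8 * d * (1 - 1/p) + 2 * d / p := add_le_add hcol h2
          _ ≤ 8 * d * (1 - 1/s) := hfinal
      · -- right column
        have hcol := hψRnorm ⟨(c:ℕ) - p, by omega⟩
        have heq : ∑ j, a j (ψ j c) = ∑ j, a j (ψR j ⟨(c:ℕ) - p, by omega⟩) :=
          Finset.sum_congr rfl (fun j _ => by rw [hmemR j c h])
        rw [heq]
        have hq0 : (q:ℝ) ≠ 0 := by exact_mod_cast (by omega : q ≠ 0)
        have hs0' : (s:ℝ) ≠ 0 := by exact_mod_cast (by omega : s ≠ 0)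
        have hpq' : (p:ℝ) + q = s := by exact_mod_cast hpq
        have h2 : ‖(q:ℝ)⁻¹ • TR - (s:ℝ)⁻¹ • T‖ ≤ (2 * d) / q := by
          have hTReq : TR = T - TL := by rw [← hTsplit]; abel
          have e3 : (q:ℝ)⁻¹ - (s:ℝ)⁻¹ = (q:ℝ)⁻¹ * ((p:ℝ)/s) := by
            field_simp
            linarith
          have heq2 : (q:ℝ)⁻¹ • TR - (s:ℝ)⁻¹ • T = -((q:ℝ)⁻¹ • (TL - ((p:ℝ)/s) • T)) := by
            rw [hTReq, smul_sub, smul_sub, smul_smul, ← e3, sub_smul]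
            abel
          rw [heq2, norm_neg, norm_smul, Real.norm_eq_abs,
            abs_of_nonneg (by positivity : (0:ℝ) ≤ (q:ℝ)⁻¹)]
          calc (q:ℝ)⁻¹ * ‖TL - ((p:ℝ)/s) • T‖ ≤ (q:ℝ)⁻¹ * (2 * d) :=
                mul_le_mul_of_nonneg_left hdist (by positivity)
            _ = 2 * d / q := by ring
        have hfinal : 8 * (d:ℝ) * (1 - 1/q) + 2 * d / q ≤ 8 * d * (1 - 1/s) := by
          have hqR : (0:ℝ) < q := by exact_mod_cast hq1
          have hsR : (0:ℝ) < s := by exact_mod_cast hs0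
          have hdR : (0:ℝ) ≤ d := Nat.cast_nonneg d
          have h34 : 4 * (q:ℝ) ≤ 3 * s := by exact_mod_cast hq34
          have key : 8 * (d:ℝ) / s ≤ 6 * d / q := by
            rw [div_le_div_iff₀ hsR hqR]
            nlinarith
          have e1 : 8 * (d:ℝ) * (1 - 1/q) + 2 * d / q = 8 * d - 6 * d / q := by ring
          have e2 : 8 * (d:ℝ) * (1 - 1/s) = 8 * d - 8 * d / s := by ring
          rw [e1, e2]
          linarith
        calc ‖(∑ j, a j (ψR j ⟨(c:ℕ) - p, by omega⟩)) - (s:ℝ)⁻¹ • T‖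
            ≤ ‖(∑ j, a j (ψR j ⟨(c:ℕ) - p, by omega⟩)) - (q:ℝ)⁻¹ • TR‖
              + ‖(q:ℝ)⁻¹ • TR - (s:ℝ)⁻¹ • T‖ :=
              norm_sub_le_norm_sub_add_norm_sub _ _ _
          _ ≤ 8 * d * (1 - 1/q) + 2 * d / q := add_le_add hcol h2
          _ ≤ 8 * d * (1 - 1/s) := hfinal

/-- The colourful Steinitz lemma of Oertel, Paat, and Weismantel: if `A` is a
`k × n` matrix whose entries are vectors of norm at most `1` in a
`d`-dimensional real normed space and the total sum of the entries is zero,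
then the rows of `A` can be rearranged (each row by its own permutation) so
that the sum of the entries in the first `m` columns has norm at most
`min (dk) (40 d^5)` for every `m ∈ {1, …, n}`. -/
theorem colourful_steinitz
    (d k n : ℕ) (hd : 0 < d) (hk : 0 < k) (hn : 0 < n)
    {E : Type*} [NormedAddCommGroup E] [NormedSpace ℝ E]
    [FiniteDimensional ℝ E] (hdim : Module.finrank ℝ E = d)
    (A : Fin k → Fin n → E)
    (hA : ∀ j i, ‖A j i‖ ≤ 1)
    (hsum : ∑ j : Fin k, ∑ i : Fin n, A j i = 0) :
    ∃ π : Fin k → Equiv.Perm (Fin n),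
      ∀ m : ℕ, 1 ≤ m → m ≤ n →
        ‖∑ j : Fin k, ∑ i ∈ Finset.univ.filter (fun i : Fin n => (i : ℕ) < m),
            A j (π j i)‖ ≤ min ((d : ℝ) * k) (40 * d ^ 5) := by
  classical
  obtain ⟨ψ, hinj, hmem, hnorm⟩ := balance hdim A hA n hn (fun _ => Finset.univ)
    (fun _ => by simp)
  have hbij : ∀ j, Function.Bijective (ψ j) :=
    fun j => Finite.injective_iff_bijective.1 (hinj j)
  set b : Fin n → E := fun c => ∑ j, A j (ψ j c) with hb
  have htotal : ∑ j : Fin k, ∑ i ∈ (Finset.univ : Finset (Fin n)), A j i = 0 := hsum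
  have hsumb : ∑ c, b c = 0 := by
    rw [hb]
    rw [Finset.sum_comm]
    rw [Finset.sum_congr rfl (fun j _ =>
      Fintype.sum_bijective (ψ j) (hbij j) _ _ (fun c => rfl))]
    exact hsum
  set α : ℝ := min ((k:ℝ)) (8 * d) with hα
  have hα0 : 0 ≤ α := le_min (Nat.cast_nonneg k) (by positivity)
  have hvb : ∀ c, ‖b c‖ ≤ α := by
    intro c
    apply le_min
    · calc ‖b c‖ ≤ ∑ j, ‖A j (ψ j c)‖ := norm_sum_le _ _
        _ ≤ ∑ _j : Fin k, (1:ℝ) := Finset.sum_le_sum (fun j _ => hA j _)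
        _ = k := by simp
    · have h1 := hnorm c
      rw [htotal, smul_zero, sub_zero] at h1
      have h2 : 8 * (d:ℝ) * (1 - 1 / n) ≤ 8 * d := by
        have hn0 : (0:ℝ) < n := by exact_mod_cast hn
        have : (0:ℝ) ≤ 1 / n := by positivity
        nlinarith [Nat.cast_nonneg (α := ℝ) d]
      exact h1.trans h2
  obtain ⟨τ, hτ⟩ := steinitz_perm hdim α hα0 b hvb hsumb
  refine ⟨fun j => τ.trans (Equiv.ofBijective (ψ j) (hbij j)), ?_⟩
  intro m hm1 hmn
  have hswap : ∑ j : Fin k, ∑ i ∈ Finset.univ.filter (fun i : Fin n => (i : ℕ) < m),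
      A j ((τ.trans (Equiv.ofBijective (ψ j) (hbij j))) i)
      = ∑ i ∈ Finset.univ.filter (fun i : Fin n => (i : ℕ) < m), b (τ i) := by
    rw [Finset.sum_comm]
    rfl
  rw [hswap]
  have hbound := hτ m hmn
  have hd1 : (1:ℝ) ≤ d := by exact_mod_cast hd
  apply le_trans hbound
  apply le_min
  · exact mul_le_mul_of_nonneg_left (min_le_left _ _) (Nat.cast_nonneg d)
  · have h3 : (d:ℝ) * α ≤ (d:ℝ) * (8 * d) :=
      mul_le_mul_of_nonneg_left (min_le_right _ _) (Nat.cast_nonneg d)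
    have h4 : (d:ℝ)^2 ≤ (d:ℝ)^5 := pow_le_pow_right₀ hd1 (by norm_num)
    nlinarith [h4]
end

section
/- Let d be a positive integer, let K ⊂ ℝ^d be a compact convex set containing the origin in its interior, and let ‖x‖_K = min{t ≥ 0 : x ∈ tK} be its gauge (Minkowski functional). If a_1, …, a_N ∈ ℝ^d satisfy ‖a_i‖_K ≤ 1 for all i and ∑_{i=1}^N a_i = 0, then there is a permutation π of {1,…,N} such that the reordered sequence c_i = a_{π(i)} satisfies ‖∑_{i=1}^m c_i‖_K ≤ d for every m ∈ {1,…,N}. -/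
open Finset

/-- Invariant: coefficients in `[0,1]` supported on `A`, summing to `m - d`,
with vanishing weighted vector sum. -/
def SteinitzInv (d N : ℕ) (a : Fin N → (Fin d → ℝ)) (A : Finset (Fin N)) (m : ℕ) : Prop :=
  ∃ x : Fin N → ℝ, (∀ i, 0 ≤ x i) ∧ (∀ i, x i ≤ 1) ∧ (∀ i, i ∉ A → x i = 0) ∧
    (∑ i, x i) = (m : ℝ) - d ∧ (∑ i, x i • a i) = 0

lemma gauge_sum_le' {d : ℕ} {K : Set (Fin d → ℝ)} (hc : Convex ℝ K) (habs : Absorbent ℝ K)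
    {ι : Type*} [DecidableEq ι] (s : Finset ι) (f : ι → (Fin d → ℝ)) :
    gauge K (∑ i ∈ s, f i) ≤ ∑ i ∈ s, gauge K (f i) := by
  induction s using Finset.induction with
  | empty => simp [gauge_zero]
  | insert i s' h ih =>
    rw [Finset.sum_insert h, Finset.sum_insert h]
    exact (gauge_add_le hc habs _ _).trans (by linarith)

lemma inv_gauge_le {d N : ℕ} {K : Set (Fin d → ℝ)} (hc : Convex ℝ K) (habs : Absorbent ℝ K)
    {a : Fin N → (Fin d → ℝ)} (ha : ∀ i, gauge K (a i) ≤ 1)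
    (A : Finset (Fin N)) (m : ℕ) (hcard : A.card = m) (h : SteinitzInv d N a A m) :
    gauge K (∑ i ∈ A, a i) ≤ d := by
  obtain ⟨x, hx0, hx1, hsupp, hsum, hvec⟩ := h
  have hvecA : (∑ i ∈ A, x i • a i) = 0 := by
    rw [← hvec]
    exact Finset.sum_subset (Finset.subset_univ A) (fun i _ hi => by
      simp [hsupp i hi])
  have hsumA : (∑ i ∈ A, x i) = (m : ℝ) - d := by
    rw [← hsum]
    exact Finset.sum_subset (Finset.subset_univ A) (fun i _ hi => hsupp i hi)
  have key : (∑ i ∈ A, a i) = ∑ i ∈ A, (1 - x i) • a i := by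
    simp [sub_smul, Finset.sum_sub_distrib, hvecA]
  rw [key]
  calc gauge K (∑ i ∈ A, (1 - x i) • a i) ≤ ∑ i ∈ A, gauge K ((1 - x i) • a i) :=
        gauge_sum_le' hc habs _ _
    _ = ∑ i ∈ A, (1 - x i) * gauge K (a i) := by
        refine Finset.sum_congr rfl fun i _ => ?_
        rw [gauge_smul_of_nonneg (by linarith [hx1 i]), smul_eq_mul]
    _ ≤ ∑ i ∈ A, (1 - x i) := by
        refine Finset.sum_le_sum fun i _ => ?_
        have h1 : 0 ≤ 1 - x i := by linarith [hx1 i]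
        nlinarith [ha i, gauge_nonneg (s := K) (a i)]
    _ = (A.card : ℝ) - ∑ i ∈ A, x i := by rw [Finset.sum_sub_distrib]; simp
    _ ≤ d := by rw [hsumA, hcard]; ring_nf; rfl
lemma steinitz_step_s4 {d N : ℕ} (a : Fin N → (Fin d → ℝ)) (A : Finset (Fin N)) (k : ℕ)
    (hcard : A.card = k) (hk : d + 1 ≤ k) (h : SteinitzInv d N a A k) :
    ∃ i0 ∈ A, SteinitzInv d N a (A.erase i0) (k - 1) := by
  classical
  set P : Set (Fin N → ℝ) := {x | (∀ i, x i ∈ Set.Icc (0:ℝ) 1) ∧ (∀ i, i ∉ A → x i = 0) ∧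
    (∑ i, x i) = (k : ℝ) - 1 - d ∧ (∑ i, x i • a i) = 0} with hP
  have hkd : (1:ℝ) ≤ (k : ℝ) - (d:ℝ) := by
    have : (d:ℝ) + 1 ≤ (k:ℝ) := by exact_mod_cast hk
    linarith
  have hkdpos : (0:ℝ) < (k:ℝ) - (d:ℝ) := by linarith
  -- nonempty
  have hPne : P.Nonempty := by
    obtain ⟨x, hx0, hx1, hsupp, hsum, hvec⟩ := h
    set c : ℝ := ((k:ℝ) - 1 - d) / ((k:ℝ) - d) with hc
    have hc0 : 0 ≤ c := by
      apply div_nonneg <;> linarith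
    have hc1 : c ≤ 1 := by
      rw [hc, div_le_one hkdpos]; linarith
    refine ⟨fun i => c * x i, fun i => ⟨mul_nonneg hc0 (hx0 i),
      le_trans (mul_le_mul hc1 (hx1 i) (hx0 i) zero_le_one) (by norm_num)⟩,
      fun i hi => by simp [hsupp i hi], ?_, ?_⟩
    · rw [← Finset.mul_sum, hsum, hc]
      field_simp
    · have : (∑ i, (c * x i) • a i) = c • ∑ i, x i • a i := by
        rw [Finset.smul_sum]
        exact Finset.sum_congr rfl fun i _ => by rw [smul_smul]
      rw [this, hvec, smul_zero]
  -- convex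
  have hPconv : Convex ℝ P := by
    rintro x hx y hy s t hs ht hst
    obtain ⟨hx01, hxsupp, hxsum, hxvec⟩ := hx
    obtain ⟨hy01, hysupp, hysum, hyvec⟩ := hy
    refine ⟨fun i => ?_, fun i hi => ?_, ?_, ?_⟩
    · have := (convex_Icc (0:ℝ) 1) (hx01 i) (hy01 i) hs ht hst
      simpa using this
    · simp [hxsupp i hi, hysupp i hi]
    · have : (∑ i, (s • x + t • y) i) = s * (∑ i, x i) + t * (∑ i, y i) := by
        simp [Finset.sum_add_distrib, Finset.mul_sum]
      rw [this, hxsum, hysum]; nlinarith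
    · have : (∑ i, ((s • x + t • y) i) • a i)
          = s • (∑ i, x i • a i) + t • (∑ i, y i • a i) := by
        rw [Finset.smul_sum, Finset.smul_sum, ← Finset.sum_add_distrib]
        refine Finset.sum_congr rfl fun i _ => ?_
        simp [add_smul, smul_smul]
      rw [this, hxvec, hyvec, smul_zero, smul_zero, add_zero]
  -- compact
  have hPclosed : IsClosed P := by
    have h1 : IsClosed {x : Fin N → ℝ | ∀ i, x i ∈ Set.Icc (0:ℝ) 1} := by
      have : {x : Fin N → ℝ | ∀ i, x i ∈ Set.Icc (0:ℝ) 1}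
          = ⋂ i, (fun x : Fin N → ℝ => x i) ⁻¹' Set.Icc (0:ℝ) 1 := by
        ext x; simp
      rw [this]
      exact isClosed_iInter fun i => isClosed_Icc.preimage (continuous_apply i)
    have h2 : IsClosed {x : Fin N → ℝ | ∀ i, i ∉ A → x i = 0} := by
      have : {x : Fin N → ℝ | ∀ i, i ∉ A → x i = 0}
          = ⋂ i, {x : Fin N → ℝ | i ∉ A → x i = 0} := by ext x; simp
      rw [this]
      refine isClosed_iInter fun i => ?_
      by_cases hi : i ∈ A
      · simp [hi]
      · have : {x : Fin N → ℝ | i ∉ A → x i = 0} = {x : Fin N → ℝ | x i = 0} := by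
          ext x; simp [hi]
        rw [this]
        exact isClosed_eq (continuous_apply i) continuous_const
    have h3 : IsClosed {x : Fin N → ℝ | (∑ i, x i) = (k : ℝ) - 1 - d} :=
      isClosed_eq (by continuity) continuous_const
    have h4 : IsClosed {x : Fin N → ℝ | (∑ i, x i • a i) = 0} := by
      refine isClosed_eq ?_ continuous_const
      exact continuous_finset_sum _ fun i _ => (continuous_apply i).smul continuous_const
    have : P = {x : Fin N → ℝ | ∀ i, x i ∈ Set.Icc (0:ℝ) 1}
        ∩ ({x | ∀ i, i ∉ A → x i = 0} ∩ ({x | (∑ i, x i) = (k : ℝ) - 1 - d}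
          ∩ {x | (∑ i, x i • a i) = 0})) := by
      ext x; simp [hP, Set.mem_setOf_eq, and_assoc]
    rw [this]
    exact h1.inter (h2.inter (h3.inter h4))
  have hPcomp : IsCompact P := by
    refine IsCompact.of_isClosed_subset
      (isCompact_univ_pi fun _ : Fin N => isCompact_Icc (a := (0:ℝ)) (b := 1))
      hPclosed ?_
    intro x hx
    exact Set.mem_univ_pi.mpr fun i => hx.1 i
  obtain ⟨μ, hμext⟩ := hPcomp.extremePoints_nonempty hPne
  rw [mem_extremePoints] at hμext
  obtain ⟨hμP, hext⟩ := hμext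
  obtain ⟨hμ01, hμsupp, hμsum, hμvec⟩ := hμP
  -- find a zero coordinate
  have hzero : ∃ i0 ∈ A, μ i0 = 0 := by
    by_contra h0
    push_neg at h0
    have hμpos : ∀ i ∈ A, 0 < μ i := fun i hi => lt_of_le_of_ne (hμ01 i).1 (Ne.symm (h0 i hi))
    set F : Finset (Fin N) := A.filter (fun i => μ i < 1) with hF
    have hFA : F ⊆ A := Finset.filter_subset _ _
    have hFcard : F.card ≤ d + 1 := by
      by_contra hFc
      push_neg at hFc
      set v : F → (Fin d → ℝ) × ℝ := fun i => (a i, 1) with hv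
      have hnli : ¬ LinearIndependent ℝ v := by
        intro hli
        have hle := hli.fintype_card_le_finrank
        have hfr : Module.finrank ℝ ((Fin d → ℝ) × ℝ) = d + 1 := by
          simp [Module.finrank_prod]
        rw [hfr, Fintype.card_coe] at hle
        omega
      obtain ⟨g, hg0, i1, hi1⟩ := Fintype.not_linearIndependent_iff.mp hnli
      have hva : (∑ i : F, g i • a (i : Fin N)) = 0 := by
        have := congrArg Prod.fst hg0
        simpa [Prod.fst_sum, hv] using this
      have hvs : (∑ i : F, g i) = 0 := by
        have := congrArg Prod.snd hg0
        simpa [Prod.snd_sum, hv, smul_eq_mul] using this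
      set g' : Fin N → ℝ := fun i => if h : i ∈ F then g ⟨i, h⟩ else 0 with hg'
      have hg'supp : ∀ i, i ∉ F → g' i = 0 := fun i hi => dif_neg hi
      have hg'F : ∀ (i : Fin N) (hi : i ∈ F), g' i = g ⟨i, hi⟩ := fun i hi => dif_pos hi
      have hg'sum : (∑ i, g' i) = 0 := by
        rw [← hvs]
        rw [Finset.sum_subset (Finset.subset_univ F) (fun i _ hi => hg'supp i hi) |>.symm]
        rw [← Finset.sum_attach F g']
        rw [Finset.univ_eq_attach]
        exact Finset.sum_congr rfl fun i _ => hg'F i.1 i.2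
      have hg'vec : (∑ i, g' i • a i) = 0 := by
        rw [← hva]
        rw [Finset.sum_subset (Finset.subset_univ F)
          (fun i _ hi => by rw [hg'supp i hi, zero_smul]) |>.symm]
        rw [← Finset.sum_attach F (fun i => g' i • a i)]
        rw [Finset.univ_eq_attach]
        exact Finset.sum_congr rfl fun i _ => by rw [hg'F i.1 i.2]
      have hFne : F.Nonempty := Finset.card_pos.mp (by omega)
      set β : Fin N → ℝ := fun i => min (μ i) (1 - μ i) / (|g' i| + 1) with hβ
      set ε : ℝ := F.inf' hFne β with hε
      have hβpos : ∀ i ∈ F, 0 < β i := by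
        intro i hi
        have hi' := Finset.mem_filter.mp hi
        have h1 : 0 < μ i := hμpos i hi'.1
        have h2 : 0 < 1 - μ i := by linarith [hi'.2]
        apply div_pos (lt_min h1 h2)
        positivity
      have hεpos : 0 < ε := by
        rw [hε, Finset.lt_inf'_iff]
        exact hβpos
      have hkey : ∀ i ∈ F, |ε * g' i| ≤ min (μ i) (1 - μ i) := by
        intro i hi
        have hεβ : ε ≤ β i := Finset.inf'_le β hi
        have habs : (0:ℝ) ≤ |g' i| := abs_nonneg _
        have hmin : 0 < min (μ i) (1 - μ i) := by
          have hi' := Finset.mem_filter.mp hi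
          exact lt_min (hμpos i hi'.1) (by linarith [hi'.2])
        rw [abs_mul, abs_of_pos hεpos]
        have h1 : ε * |g' i| ≤ β i * |g' i| :=
          mul_le_mul_of_nonneg_right hεβ habs
        have h2 : β i * |g' i| ≤ min (μ i) (1 - μ i) := by
          rw [hβ]
          rw [div_mul_eq_mul_div, div_le_iff₀ (by positivity)]
          nlinarith
        linarith
      -- the two perturbed points
      have hmem : ∀ s : ℝ, |s| ≤ ε → (fun i => μ i + s * g' i) ∈ P := by
        intro s hs
        refine ⟨fun i => ?_, fun i hi => ?_, ?_, ?_⟩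
        · show μ i + s * g' i ∈ Set.Icc (0:ℝ) 1
          rw [Set.mem_Icc]
          by_cases hiF : i ∈ F
          · have hk1 := hkey i hiF
            have : |s * g' i| ≤ min (μ i) (1 - μ i) := by
              rw [abs_mul]
              calc |s| * |g' i| ≤ ε * |g' i| :=
                    mul_le_mul_of_nonneg_right hs (abs_nonneg _)
                _ = |ε * g' i| := by rw [abs_mul, abs_of_pos hεpos]
                _ ≤ _ := hk1
            have h1 := abs_le.mp this
            constructor
            · have := min_le_left (μ i) (1 - μ i); linarith [h1.1]
            · have := min_le_right (μ i) (1 - μ i); linarith [h1.2]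
          · rw [hg'supp i hiF, mul_zero, add_zero]; exact hμ01 i
        · show μ i + s * g' i = 0
          rw [hμsupp i hi, hg'supp i (fun hiF => hi (hFA hiF)), mul_zero, add_zero]
        · rw [Finset.sum_add_distrib, hμsum, ← Finset.mul_sum, hg'sum, mul_zero, add_zero]
        · have : (∑ i, (μ i + s * g' i) • a i)
              = (∑ i, μ i • a i) + s • (∑ i, g' i • a i) := by
            rw [Finset.smul_sum, ← Finset.sum_add_distrib]
            refine Finset.sum_congr rfl fun i _ => ?_
            simp [add_smul, smul_smul]
          rw [this, hμvec, hg'vec, smul_zero, add_zero]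
      have hy1 : (fun i => μ i + (-ε) * g' i) ∈ P := hmem (-ε) (by rw [abs_neg, abs_of_pos hεpos])
      have hy2 : (fun i => μ i + ε * g' i) ∈ P := hmem ε (by rw [abs_of_pos hεpos])
      have hseg : μ ∈ openSegment ℝ (fun i => μ i + (-ε) * g' i) (fun i => μ i + ε * g' i) := by
        refine ⟨1/2, 1/2, by norm_num, by norm_num, by norm_num, ?_⟩
        funext i
        simp only [Pi.add_apply, Pi.smul_apply, smul_eq_mul]
        ring
      obtain ⟨he1, _⟩ := hext _ hy1 _ hy2 hseg
      have : (-ε) * g' i1 = 0 := by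
        have := congrFun he1 (i1 : Fin N)
        linarith [this]
      have hgi1 : g' (i1 : Fin N) = g i1 := by
        rw [hg'F i1.1 i1.2]
      rcases mul_eq_zero.mp this with h' | h'
      · linarith
      · rw [hgi1] at h'; exact hi1 h'
    -- counting argument
    have hμA : (∑ i ∈ A, μ i) = (k:ℝ) - 1 - d := by
      rw [← hμsum]
      exact Finset.sum_subset (Finset.subset_univ A) (fun i _ hi => hμsupp i hi)
    have hsplit : (∑ i ∈ A, μ i) = (∑ i ∈ F, μ i) + ∑ i ∈ A \ F, μ i := by
      rw [add_comm, Finset.sum_sdiff hFA]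
    have hones : (∑ i ∈ A \ F, μ i) = ((A \ F).card : ℝ) := by
      rw [Finset.sum_congr rfl (fun i hi => ?_), Finset.sum_const, nsmul_eq_mul, mul_one]
      obtain ⟨hiA, hiF⟩ := Finset.mem_sdiff.mp hi
      have : ¬ μ i < 1 := fun hlt => hiF (Finset.mem_filter.mpr ⟨hiA, hlt⟩)
      linarith [(hμ01 i).2, not_lt.mp this]
    have hFk : F.card ≤ k := hcard ▸ Finset.card_le_card hFA
    have hsd : ((A \ F).card : ℝ) = (k : ℝ) - F.card := by
      rw [Finset.card_sdiff_of_subset hFA, hcard, Nat.cast_sub hFk]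
    have hFsum : (∑ i ∈ F, μ i) = (F.card : ℝ) - 1 - d := by
      linarith [hμA, hsplit, hones, hsd]
    have hFcard' : (F.card : ℝ) ≤ (d:ℝ) + 1 := by exact_mod_cast hFcard
    rcases F.eq_empty_or_nonempty with hFe | hFne
    · rw [hFe] at hFsum
      simp at hFsum
      have : (0:ℝ) ≤ d := Nat.cast_nonneg d
      linarith
    · have hpos : 0 < ∑ i ∈ F, μ i :=
        Finset.sum_pos (fun i hi => hμpos i (hFA hi)) hFne
      linarith
  obtain ⟨i0, hi0A, hi0⟩ := hzero
  refine ⟨i0, hi0A, μ, fun i => (hμ01 i).1, fun i => (hμ01 i).2, ?_, ?_, hμvec⟩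
  · intro i hi
    by_cases hiA : i ∈ A
    · have : i = i0 := by
        by_contra hne
        exact hi (Finset.mem_erase.mpr ⟨hne, hiA⟩)
      rw [this]; exact hi0
    · exact hμsupp i hiA
  · rw [hμsum, Nat.cast_sub (by omega : 1 ≤ k)]
    push_cast
    ring
lemma steinitz_chain_s4 {d N : ℕ} (a : Fin N → (Fin d → ℝ)) :
    ∀ k, ∀ A : Finset (Fin N), A.card = k → d ≤ k → SteinitzInv d N a A k →
    ∃ l : List (Fin N), l.Nodup ∧ l.toFinset = A ∧
      ∀ m, d ≤ m → m ≤ k → SteinitzInv d N a (l.take m).toFinset m := by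
  intro k
  induction k with
  | zero =>
    intro A hcard hdk hinv
    refine ⟨A.toList, A.nodup_toList, A.toList_toFinset, fun m hm1 hm2 => ?_⟩
    have hm0 : m = 0 := Nat.le_zero.mp hm2
    have hd0 : d = 0 := Nat.le_zero.mp hdk
    subst hm0
    rw [Finset.card_eq_zero.mp hcard] at hinv
    simpa using hinv
  | succ j ih =>
    intro A hcard hdk hinv
    by_cases hdj : d ≤ j
    · obtain ⟨i0, hi0A, hinv'⟩ := steinitz_step_s4 a A (j + 1) hcard (by omega) hinv
      have hcard' : (A.erase i0).card = j := by
        rw [Finset.card_erase_of_mem hi0A, hcard]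
        omega
      have hinv'' : SteinitzInv d N a (A.erase i0) j := by
        rwa [Nat.succ_sub_one] at hinv'
      obtain ⟨l', hnd', htf', hpref'⟩ := ih (A.erase i0) hcard' hdj hinv''
      have hlen' : l'.length = j := by
        rw [← List.toFinset_card_of_nodup hnd', htf', hcard']
      have hi0l' : i0 ∉ l' := by
        rw [← List.mem_toFinset, htf']
        simp
      refine ⟨l' ++ [i0], ?_, ?_, ?_⟩
      · rw [List.nodup_append]
        exact ⟨hnd', List.nodup_singleton i0, by
          intro x hx y hy hxy; rw [List.mem_singleton] at hy; rw [hxy, hy] at hx; exact hi0l' hx⟩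
      · rw [List.toFinset_append]
        simp only [List.toFinset_cons, List.toFinset_nil, insert_empty_eq]
        rw [htf', Finset.union_comm, ← Finset.insert_eq, Finset.insert_erase hi0A]
      · intro m hm1 hm2
        by_cases hmj : m ≤ j
        · rw [List.take_append_of_le_length (by omega : m ≤ l'.length)]
          exact hpref' m hm1 hmj
        · have hmeq : m = j + 1 := by omega
          subst hmeq
          rw [List.take_of_length_le (by simp [hlen'])]
          have : (l' ++ [i0]).toFinset = A := by
            rw [List.toFinset_append]
            simp only [List.toFinset_cons, List.toFinset_nil, insert_empty_eq]
            rw [htf', Finset.union_comm, ← Finset.insert_eq, Finset.insert_erase hi0A]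
          rw [this]
          exact hinv
    · have hdeq : d = j + 1 := by omega
      refine ⟨A.toList, A.nodup_toList, A.toList_toFinset, fun m hm1 hm2 => ?_⟩
      have hmeq : m = j + 1 := by omega
      subst hmeq
      rw [List.take_of_length_le (by rw [A.length_toList, hcard])]
      rw [A.toList_toFinset]
      exact hinv

/-- The Steinitz lemma of Grinberg and Sevastyanov for non-symmetric seminorms:
if `K ⊂ ℝ^d` is a compact convex set containing the origin in its interior and
`a_1, …, a_N ∈ ℝ^d` have gauge (Minkowski functional) at most `1` and sum to
zero, then the sequence can be reordered so that every partial sum of the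
reordered sequence has gauge at most `d`. -/
theorem steinitz_lemma_gauge
    (d N : ℕ) (hd : 0 < d) (hN : 0 < N)
    (K : Set (Fin d → ℝ)) (hKcomp : IsCompact K) (hKconv : Convex ℝ K)
    (hK0 : 0 ∈ interior K)
    (a : Fin N → (Fin d → ℝ))
    (ha : ∀ i, gauge K (a i) ≤ 1)
    (hsum : ∑ i : Fin N, a i = 0) :
    ∃ π : Equiv.Perm (Fin N),
      ∀ m : ℕ, 1 ≤ m → m ≤ N →
        gauge K (∑ i ∈ Finset.univ.filter (fun i : Fin N => (i : ℕ) < m), a (π i))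
          ≤ d := by
  classical
  have habs : Absorbent ℝ K := absorbent_nhds_zero (mem_interior_iff_mem_nhds.mp hK0)
  have htriv : ∀ S : Finset (Fin N), gauge K (∑ i ∈ S, a i) ≤ (S.card : ℝ) := by
    intro S
    refine (gauge_sum_le' hKconv habs S a).trans ?_
    calc (∑ i ∈ S, gauge K (a i)) ≤ ∑ _i ∈ S, (1:ℝ) := Finset.sum_le_sum fun i _ => ha i
      _ = S.card := by simp
  by_cases hNd : d ≤ N
  · -- main case
    have hNpos : (0:ℝ) < N := by exact_mod_cast hN
    have hinv : SteinitzInv d N a Finset.univ N := by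
      refine ⟨fun _ => ((N:ℝ) - d) / N, fun i => ?_, fun i => ?_, fun i hi => ?_, ?_, ?_⟩
      · apply div_nonneg _ (le_of_lt hNpos)
        have : (d:ℝ) ≤ N := by exact_mod_cast hNd
        linarith
      · rw [div_le_one hNpos]
        have : (0:ℝ) ≤ d := Nat.cast_nonneg d
        linarith
      · exact absurd (Finset.mem_univ i) hi
      · rw [Finset.sum_const, Finset.card_univ, Fintype.card_fin, nsmul_eq_mul]
        field_simp
      · rw [← Finset.smul_sum, hsum, smul_zero]
    obtain ⟨l, hnd, htf, hpref⟩ := steinitz_chain_s4 a N Finset.univ (by simp) hNd hinv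
    have hlen : l.length = N := by
      rw [← List.toFinset_card_of_nodup hnd, htf]
      simp
    set f : Fin N → Fin N := fun i => l.get (Fin.cast hlen.symm i) with hf
    have hfinj : Function.Injective f :=
      (List.nodup_iff_injective_get.mp hnd).comp (Fin.cast_injective _)
    refine ⟨Equiv.ofBijective f (Finite.injective_iff_bijective.mp hfinj), ?_⟩
    intro m hm1 hm2
    have himg : (Finset.univ.filter (fun i : Fin N => (i : ℕ) < m)).image f
        = (l.take m).toFinset := by
      ext j
      simp only [Finset.mem_image, Finset.mem_filter, Finset.mem_univ, true_and,
        List.mem_toFinset]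
      constructor
      · rintro ⟨i, him, rfl⟩
        have h1 : (i : ℕ) < (l.take m).length := by
          rw [List.length_take, hlen]
          exact lt_min him i.isLt
        have h2 : (l.take m)[(i:ℕ)]'h1 = f i := by
          rw [List.getElem_take]
          rfl
        rw [← h2]
        exact List.getElem_mem h1
      · intro hj
        obtain ⟨idx, hidx, hje⟩ := List.getElem_of_mem hj
        have hidxm : idx < m := by
          rw [List.length_take] at hidx
          omega
        have hidxN : idx < N := by
          rw [List.length_take, hlen] at hidx
          omega
        refine ⟨⟨idx, hidxN⟩, hidxm, ?_⟩
        rw [← hje, List.getElem_take]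
        rfl
    have hsum_eq : (∑ i ∈ Finset.univ.filter (fun i : Fin N => (i : ℕ) < m),
        a ((Equiv.ofBijective f (Finite.injective_iff_bijective.mp hfinj)) i))
        = ∑ j ∈ (l.take m).toFinset, a j := by
      rw [← himg, Finset.sum_image (fun x _ y _ h => hfinj h)]
      exact Finset.sum_congr rfl fun i _ => by rw [Equiv.ofBijective_apply]
    rw [hsum_eq]
    have hndm : (l.take m).Nodup := hnd.sublist (List.take_sublist m l)
    have hcardm : (l.take m).toFinset.card = m := by
      rw [List.toFinset_card_of_nodup hndm, List.length_take, hlen]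
      omega
    by_cases hmd : d ≤ m
    · exact inv_gauge_le hKconv habs ha _ m hcardm (hpref m hmd hm2)
    · refine (htriv _).trans ?_
      rw [hcardm]
      exact_mod_cast (by omega : m ≤ d)
  · -- trivial case N < d
    refine ⟨Equiv.refl _, fun m hm1 hm2 => ?_⟩
    have h1 : (∑ i ∈ Finset.univ.filter (fun i : Fin N => (i : ℕ) < m),
        a ((Equiv.refl (Fin N)) i))
        = ∑ i ∈ Finset.univ.filter (fun i : Fin N => (i : ℕ) < m), a i := rfl
    rw [h1]
    refine (htriv _).trans ?_
    have h2 : (Finset.univ.filter (fun i : Fin N => (i : ℕ) < m)).card ≤ N := by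
      calc _ ≤ (Finset.univ : Finset (Fin N)).card := Finset.card_filter_le _ _
        _ = N := by simp
    have : (Finset.univ.filter (fun i : Fin N => (i : ℕ) < m)).card ≤ d := by omega
    exact_mod_cast this
end

section
/- Let d, N be positive integers and let ‖·‖ be any norm on ℝ^d. If a_1, …, a_N ∈ ℝ^d satisfy ‖a_i‖ ≤ 1 for all i, then there exist signs ε_1, …, ε_N ∈ {−1, 1} such that ‖∑_{i=1}^m ε_i a_i‖ ≤ 2d − 1 for every m ∈ {1,…,N}. -/
open Finset

private lemma bg_protected_cost {s x : ℝ} (hs : s = 1 ∨ s = -1) (hx : |x| ≤ 1)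
    (hsx : 0 ≤ s * x) : |s - x| ≤ 1 := by
  have h1 := abs_le.mp hx
  rw [abs_le]
  rcases hs with h | h <;> subst h <;> constructor <;> nlinarith [h1.1, h1.2]

private lemma bg_sign_eq {s x : ℝ} (hs : s = 1 ∨ s = -1) (hx : x = 1 ∨ x = -1)
    (hsx : 0 ≤ s * x) : x = s := by
  rcases hs with h | h <;> rcases hx with h' | h' <;> subst h <;> subst h' <;>
    first | rfl | (exfalso; norm_num at hsx)

private lemma bg_cost_two {e l : ℝ} (he : e = 1 ∨ e = -1) (hl : |l| ≤ 1) : |e - l| ≤ 2 := by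
  have h1 : |e| ≤ 1 := by rcases he with h | h <;> simp [h]
  calc |e - l| ≤ |e| + |l| := by
        simpa [sub_eq_add_neg] using abs_add_le e (-l)
    _ ≤ 2 := by linarith

private lemma bg_sum_bound {E : Type*} [NormedAddCommGroup E] [NormedSpace ℝ E]
    {N : ℕ} (U : Finset (Fin N)) (c : Fin N → ℝ) (v : Fin N → E)
    (hv : ∀ i, ‖v i‖ ≤ 1) (hc : ∀ i ∈ U, |c i| ≤ 2)
    {p : Fin N} (hp : p ∈ U) (hcp : |c p| ≤ 1) {d : ℕ} (hcard : U.card ≤ d) :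
    ‖∑ i ∈ U, c i • v i‖ ≤ 2 * d - 1 := by
  have h1 : ‖∑ i ∈ U, c i • v i‖ ≤ ∑ i ∈ U, |c i| := by
    refine (norm_sum_le _ _).trans (Finset.sum_le_sum fun i _ => ?_)
    rw [norm_smul, Real.norm_eq_abs]
    calc |c i| * ‖v i‖ ≤ |c i| * 1 := mul_le_mul_of_nonneg_left (hv i) (abs_nonneg _)
      _ = |c i| := mul_one _
  have h2 : ∑ i ∈ U, |c i| = |c p| + ∑ i ∈ U.erase p, |c i| :=
    (Finset.add_sum_erase U _ hp).symm
  have h3 : ∑ i ∈ U.erase p, |c i| ≤ 2 * ((U.card : ℝ) - 1) := by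
    have h4 : ∑ i ∈ U.erase p, |c i| ≤ ∑ i ∈ U.erase p, (2 : ℝ) :=
      Finset.sum_le_sum fun i hi => hc i (Finset.mem_of_mem_erase hi)
    have h5 : ∑ i ∈ U.erase p, (2 : ℝ) = ((U.erase p).card : ℝ) * 2 := by
      rw [Finset.sum_const, nsmul_eq_mul]
    have h6 : (U.erase p).card = U.card - 1 := Finset.card_erase_of_mem hp
    have h7 : 1 ≤ U.card := Finset.card_pos.mpr ⟨p, hp⟩
    have h8 : ((U.card - 1 : ℕ) : ℝ) = (U.card : ℝ) - 1 := by
      rw [Nat.cast_sub h7]; norm_num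
    rw [h5, h6, h8] at h4
    linarith
  have h9 : (U.card : ℝ) ≤ (d : ℝ) := Nat.cast_le.mpr hcard
  calc ‖∑ i ∈ U, c i • v i‖ ≤ ∑ i ∈ U, |c i| := h1
    _ = |c p| + ∑ i ∈ U.erase p, |c i| := h2
    _ ≤ 1 + 2 * ((U.card : ℝ) - 1) := by linarith
    _ ≤ 2 * d - 1 := by linarith

private lemma bg_fresh {E : Type*} [NormedAddCommGroup E] [NormedSpace ℝ E]
    {N d : ℕ} (a : Fin N → E) (ha : ∀ i, ‖a i‖ ≤ 1) (m : ℕ)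
    (lam : Fin N → ℝ) (U : Finset (Fin N)) (p : Fin N) (sig : ℝ)
    (hU1 : ∀ i ∈ U, (i : ℕ) < m) (hUcard : U.card ≤ d)
    (hbox : ∀ i ∈ U, |lam i| ≤ 1)
    (hsum : ∑ i ∈ Finset.univ.filter (fun i : Fin N => (i : ℕ) < m), lam i • a i = 0)
    (hpU : p ∈ U) (hsig : sig = 1 ∨ sig = -1) (hplam : 0 ≤ sig * lam p)
    (ε : Fin N → ℝ) (hε : ∀ i, ε i = 1 ∨ ε i = -1)
    (hfr : ∀ i : Fin N, (i : ℕ) < m → i ∉ U → ε i = lam i)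
    (hpr : ε p = sig) :
    ‖∑ i ∈ Finset.univ.filter (fun i : Fin N => (i : ℕ) < m), ε i • a i‖ ≤ 2 * d - 1 := by
  classical
  have hsub : U ⊆ Finset.univ.filter (fun i : Fin N => (i : ℕ) < m) := fun i hi =>
    Finset.mem_filter.mpr ⟨Finset.mem_univ _, hU1 i hi⟩
  have hkey : ∑ i ∈ Finset.univ.filter (fun i : Fin N => (i : ℕ) < m), ε i • a i
      = ∑ i ∈ U, (ε i - lam i) • a i := by
    have h1 : ∑ i ∈ U, (ε i - lam i) • a i
        = ∑ i ∈ Finset.univ.filter (fun i : Fin N => (i : ℕ) < m), (ε i - lam i) • a i :=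
      Finset.sum_subset hsub fun i hi hni => by
        rw [hfr i (by simpa using (Finset.mem_filter.mp hi).2) hni, sub_self, zero_smul]
    rw [h1]
    simp only [sub_smul]
    rw [Finset.sum_sub_distrib, hsum, sub_zero]
  rw [hkey]
  exact bg_sum_bound U (fun i => ε i - lam i) a ha
    (fun i hi => bg_cost_two (hε i) (hbox i hi)) hpU
    (by show |ε p - lam p| ≤ 1; rw [hpr]; exact bg_protected_cost hsig (hbox p hpU) hplam) hUcard


set_option maxHeartbeats 1000000 in
/-- The sign-sequence theorem of Bárány and Grinberg: for any sequence of
vectors of norm at most `1` in a `d`-dimensional real normed space there are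
signs `ε_i ∈ {-1, 1}` such that every partial sum of the signed sequence has
norm at most `2d - 1`. -/
theorem barany_grinberg_signs
    (d N : ℕ) (hd : 0 < d) (hN : 0 < N)
    {E : Type*} [NormedAddCommGroup E] [NormedSpace ℝ E]
    [FiniteDimensional ℝ E] (hdim : Module.finrank ℝ E = d)
    (a : Fin N → E)
    (ha : ∀ i, ‖a i‖ ≤ 1) :
    ∃ ε : Fin N → ℝ, (∀ i, ε i = 1 ∨ ε i = -1) ∧
      ∀ m : ℕ, 1 ≤ m → m ≤ N →
        ‖∑ i ∈ Finset.univ.filter (fun i : Fin N => (i : ℕ) < m), ε i • a i‖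
          ≤ 2 * d - 1 := by
  classical
  have hd1 : (1 : ℝ) ≤ 2 * d - 1 := by
    have : (1 : ℝ) ≤ (d : ℝ) := by exact_mod_cast hd
    linarith
  have key : ∀ m : ℕ, m ≤ N →
      ∃ (lam : Fin N → ℝ) (U : Finset (Fin N)) (p : Fin N) (sig : ℝ),
        (∀ i ∈ U, (i : ℕ) < m) ∧
        U.card ≤ d ∧
        (∀ i ∈ U, |lam i| ≤ 1) ∧
        (∀ i : Fin N, (i : ℕ) < m → i ∉ U → lam i = 1 ∨ lam i = -1) ∧
        (∑ i ∈ Finset.univ.filter (fun i : Fin N => (i : ℕ) < m), lam i • a i = 0) ∧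
        (U ≠ ∅ → p ∈ U ∧ (sig = 1 ∨ sig = -1) ∧ 0 ≤ sig * lam p) ∧
        (∀ ε : Fin N → ℝ, (∀ i, ε i = 1 ∨ ε i = -1) →
          (∀ i : Fin N, (i : ℕ) < m → i ∉ U → ε i = lam i) →
          (U ≠ ∅ → ε p = sig) →
          ∀ k, k ≤ m →
            ‖∑ i ∈ Finset.univ.filter (fun i : Fin N => (i : ℕ) < k), ε i • a i‖ ≤ 2 * d - 1) := by
    intro m
    induction m with
    | zero =>
      intro _
      have hemp : Finset.univ.filter (fun i : Fin N => (i : ℕ) < 0) = ∅ := by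
        apply Finset.filter_false_of_mem; intro i _; omega
      refine ⟨fun _ => 1, ∅, ⟨0, hN⟩, 1, by simp, by simp, by simp,
        by intro i hi; omega, by rw [hemp, Finset.sum_empty], by simp, ?_⟩
      intro ε _ _ _ k hk
      have hk0 : k = 0 := Nat.le_zero.mp hk
      subst hk0
      rw [hemp, Finset.sum_empty, norm_zero]
      linarith
    | succ m ih =>
      intro hm1
      have hmN : m < N := hm1
      obtain ⟨lam, U, p, sig, hU1, hUcard, hbox, hfroz, hsum, hprot, hhist⟩ :=
        ih (le_of_lt hmN)
      set im : Fin N := ⟨m, hmN⟩ with him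
      have him2 : (im : ℕ) = m := rfl
      have himU : im ∉ U := fun h => absurd (hU1 im h) (by omega)
      set lamp : Fin N → ℝ := Function.update lam im 0 with hlamp
      have hlamp_im : lamp im = 0 := Function.update_self im 0 lam
      have hlamp_eq : ∀ i : Fin N, i ≠ im → lamp i = lam i := by
        intro i hi
        rw [hlamp, Function.update_apply, if_neg hi]
      have hne_im : ∀ i : Fin N, (i : ℕ) < m → i ≠ im := by
        intro i hi h
        rw [h] at hi; omega
      have hfilter : Finset.univ.filter (fun i : Fin N => (i : ℕ) < m + 1)
          = insert im (Finset.univ.filter (fun i : Fin N => (i : ℕ) < m)) := by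
        ext i
        simp only [Finset.mem_filter, Finset.mem_univ, true_and, Finset.mem_insert,
          Fin.ext_iff, him2]
        omega
      have himf : im ∉ Finset.univ.filter (fun i : Fin N => (i : ℕ) < m) := by
        simp [him2]
      have hsump : ∑ i ∈ Finset.univ.filter (fun i : Fin N => (i : ℕ) < m + 1),
          lamp i • a i = 0 := by
        rw [hfilter, Finset.sum_insert himf, hlamp_im, zero_smul, zero_add]
        rw [Finset.sum_congr rfl fun i hi => by
          rw [hlamp_eq i (hne_im i (by simpa using (Finset.mem_filter.mp hi).2))]]
        exact hsum
      have hboxp : ∀ i ∈ insert im U, |lamp i| ≤ 1 := by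
        intro i hi
        rcases Finset.mem_insert.mp hi with rfl | hiU
        · rw [hlamp_im]; norm_num
        · rw [hlamp_eq i (hne_im i (hU1 i hiU))]; exact hbox i hiU
      by_cases hcd : U.card < d
      · -- Case A : no pivot needed
        obtain ⟨p', sig', hp'U, hsig', hp'lam, hptrans⟩ :
            ∃ (p' : Fin N) (sig' : ℝ), p' ∈ insert im U ∧ (sig' = 1 ∨ sig' = -1) ∧
              0 ≤ sig' * lamp p' ∧ (∀ ε : Fin N → ℝ, ε p' = sig' → (U ≠ ∅ → ε p = sig)) := by
          rcases eq_or_ne U ∅ with hUe | hUe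
          · exact ⟨im, 1, Finset.mem_insert_self _ _, Or.inl rfl,
              by rw [hlamp_im]; norm_num, fun ε _ h => absurd hUe h⟩
          · obtain ⟨hpU, hsig, hplam⟩ := hprot hUe
            refine ⟨p, sig, Finset.mem_insert_of_mem hpU, hsig, ?_, fun ε h _ => h⟩
            rwa [hlamp_eq p (hne_im p (hU1 p hpU))]
        have hU1A : ∀ i ∈ insert im U, (i : ℕ) < m + 1 := by
          intro i hi
          rcases Finset.mem_insert.mp hi with rfl | hiU
          · omega
          · exact Nat.lt_succ_of_lt (hU1 i hiU)
        have hcardA : (insert im U).card ≤ d := by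
          rw [Finset.card_insert_of_notMem himU]; omega
        have hfrozA : ∀ i : Fin N, (i : ℕ) < m + 1 → i ∉ insert im U →
            lamp i = 1 ∨ lamp i = -1 := by
          intro i hi hni
          have h1 : i ≠ im := fun h => hni (h ▸ Finset.mem_insert_self _ _)
          have h2 : i ∉ U := fun h => hni (Finset.mem_insert_of_mem h)
          have h3 : (i : ℕ) < m := by
            have := Fin.ext_iff.not.mp h1
            omega
          rw [hlamp_eq i h1]
          exact hfroz i h3 h2
        refine ⟨lamp, insert im U, p', sig', hU1A, hcardA, hboxp, hfrozA, hsump,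
          fun _ => ⟨hp'U, hsig', hp'lam⟩, ?_⟩
        intro ε hε hfr hpr k hk
        by_cases hkm : k ≤ m
        · refine hhist ε hε ?_ ?_ k hkm
          · intro i hi hiU
            have h1 : i ∉ insert im U := by
              intro h
              rcases Finset.mem_insert.mp h with rfl | h2
              · omega
              · exact hiU h2
            rw [← hlamp_eq i (hne_im i hi)]
            exact hfr i (Nat.lt_succ_of_lt hi) h1
          · exact hptrans ε (hpr (Finset.insert_ne_empty _ _))
        · have hk1 : k = m + 1 := by omega
          subst hk1
          exact bg_fresh a ha (m + 1) lamp (insert im U) p' sig' hU1A hcardA hboxp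
            hsump hp'U hsig' hp'lam ε hε hfr (hpr (Finset.insert_ne_empty _ _))
      · -- Case B : pivot
        have hcardd : U.card = d := le_antisymm hUcard (not_lt.mp hcd)
        have hUne : U ≠ ∅ := by
          intro h
          rw [h, Finset.card_empty] at hcardd
          omega
        obtain ⟨hpU, hsig, hplam⟩ := hprot hUne
        have hpim : p ≠ im := hne_im p (hU1 p hpU)
        have hlamp_p : lamp p = lam p := hlamp_eq p hpim
        set Up : Finset (Fin N) := insert im U with hUp
        have hpUp : p ∈ Up := Finset.mem_insert_of_mem hpU
        have hUpcard : Up.card = d + 1 := by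
          rw [hUp, Finset.card_insert_of_notMem himU, hcardd]
        have hUpsub : ∀ i ∈ Up, (i : ℕ) < m + 1 := by
          intro i hi
          rcases Finset.mem_insert.mp hi with rfl | hiU
          · omega
          · exact Nat.lt_succ_of_lt (hU1 i hiU)
        -- a nontrivial kernel combination
        have hdep : ¬ LinearIndependent ℝ (fun i : ↥Up => a ↑i) := by
          intro h
          have hle := h.fintype_card_le_finrank
          rw [Fintype.card_coe, hUpcard, hdim] at hle
          omega
        obtain ⟨g, hg0, i0, hi0⟩ := Fintype.not_linearIndependent_iff.mp hdep
        obtain ⟨κ, hksupp, hksum, iκ, hiκU, hiκ, hkp⟩ :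
            ∃ κ : Fin N → ℝ, (∀ i, i ∉ Up → κ i = 0) ∧
              (∑ i ∈ Up, κ i • a i = 0) ∧ ∃ iκ, iκ ∈ Up ∧ κ iκ ≠ 0 ∧ 0 ≤ sig * κ p := by
          set κ0 : Fin N → ℝ := fun i => if h : i ∈ Up then g ⟨i, h⟩ else 0 with hκ0
          have hsupp0 : ∀ i, i ∉ Up → κ0 i = 0 := by
            intro i hi; rw [hκ0]; exact dif_neg hi
          have hs0 : ∑ i ∈ Up, κ0 i • a i = 0 := by
            rw [← Finset.sum_coe_sort Up (fun i => κ0 i • a i)]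
            rw [Finset.sum_congr rfl fun i _ => by rw [show κ0 ↑i = g i from dif_pos i.2]]
            exact hg0
          have hnz0 : κ0 ↑i0 ≠ 0 := by
            rw [show κ0 ↑i0 = g i0 from dif_pos i0.2]
            exact hi0
          by_cases hdir : 0 ≤ sig * κ0 p
          · exact ⟨κ0, hsupp0, hs0, ↑i0, i0.2, hnz0, hdir⟩
          · refine ⟨fun i => -κ0 i, fun i hi => by show -κ0 i = 0; rw [hsupp0 i hi, neg_zero], ?_,
              ↑i0, i0.2, by simpa using hnz0, ?_⟩
            · rw [← neg_zero, ← hs0, ← Finset.sum_neg_distrib]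
              exact Finset.sum_congr rfl fun i _ => by rw [neg_smul]
            · have h9 : sig * κ0 p ≤ 0 := le_of_lt (not_le.mp hdir)
              show 0 ≤ sig * -κ0 p
              have h10 : sig * -κ0 p = -(sig * κ0 p) := by ring
              rw [h10]
              linarith
        set sE : Finset (Fin N) := Up.filter (fun i => κ i ≠ 0) with hsE
        have hsEne : sE.Nonempty := ⟨iκ, Finset.mem_filter.mpr ⟨hiκU, hiκ⟩⟩
        set f : Fin N → ℝ :=
          fun i => if 0 < κ i then (1 - lamp i) / κ i else (-1 - lamp i) / κ i with hf
        obtain ⟨j, hjE, hjmin⟩ := Finset.exists_min_image sE f hsEne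
        have hjUp : j ∈ Up := (Finset.mem_filter.mp hjE).1
        have hκj : κ j ≠ 0 := (Finset.mem_filter.mp hjE).2
        set t : ℝ := f j with ht
        have hf_nonneg : ∀ i ∈ sE, 0 ≤ f i := by
          intro i hi
          obtain ⟨hiU, hκi⟩ := Finset.mem_filter.mp hi
          have hb := abs_le.mp (hboxp i hiU)
          by_cases hpos : 0 < κ i
          · have : f i = (1 - lamp i) / κ i := by simp only [hf]; exact if_pos hpos
            rw [this]
            exact div_nonneg (by linarith [hb.2]) hpos.le
          · have hneg : κ i < 0 := lt_of_le_of_ne (not_lt.mp hpos) hκi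
            have : f i = (-1 - lamp i) / κ i := by simp only [hf]; exact if_neg hpos
            rw [this, div_nonneg_iff]
            right
            exact ⟨by linarith [hb.1], hneg.le⟩
        have ht0 : 0 ≤ t := hf_nonneg j hjE
        set lam' : Fin N → ℝ := fun i => lamp i + t * κ i with hlam'
        have hlam'_out : ∀ i, i ∉ Up → lam' i = lamp i := by
          intro i hi
          show lamp i + t * κ i = lamp i
          rw [hksupp i hi]; ring
        have hlam'box : ∀ i ∈ Up, |lam' i| ≤ 1 := by
          intro i hiU
          by_cases hκi : κ i = 0
          · rw [show lam' i = lamp i by show lamp i + t * κ i = lamp i; rw [hκi]; ring]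
            exact hboxp i hiU
          · have hiE : i ∈ sE := Finset.mem_filter.mpr ⟨hiU, hκi⟩
            have hti : t ≤ f i := hjmin i hiE
            have hb := abs_le.mp (hboxp i hiU)
            have hli : lam' i = lamp i + t * κ i := rfl
            rw [abs_le, hli]
            rcases lt_or_gt_of_ne hκi with hneg | hpos
            · have hfi : f i = (-1 - lamp i) / κ i := by
                rw [hf]; exact if_neg (not_lt.mpr hneg.le)
              have hfik : f i * κ i = -1 - lamp i := by
                rw [hfi]; exact div_mul_cancel₀ _ hκi
              have h1 : f i * κ i ≤ t * κ i := mul_le_mul_of_nonpos_right hti hneg.le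
              have h2 : t * κ i ≤ 0 := mul_nonpos_of_nonneg_of_nonpos ht0 hneg.le
              constructor <;> linarith
            · have hfi : f i = (1 - lamp i) / κ i := by
                rw [hf]; exact if_pos hpos
              have hfik : f i * κ i = 1 - lamp i := by
                rw [hfi]; exact div_mul_cancel₀ _ hκi
              have h1 : t * κ i ≤ f i * κ i := mul_le_mul_of_nonneg_right hti hpos.le
              have h2 : 0 ≤ t * κ i := mul_nonneg ht0 hpos.le
              constructor <;> linarith
        have hjval : lam' j = 1 ∨ lam' j = -1 := by
          rcases lt_or_gt_of_ne hκj with hneg | hpos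
          · right
            show lamp j + t * κ j = -1
            have hfj : f j = (-1 - lamp j) / κ j := by
              simp only [hf]; exact if_neg (not_lt.mpr hneg.le)
            rw [ht, hfj, div_mul_cancel₀ _ hκj]
            ring
          · left
            show lamp j + t * κ j = 1
            have hfj : f j = (1 - lamp j) / κ j := by
              simp only [hf]; exact if_pos hpos
            rw [ht, hfj, div_mul_cancel₀ _ hκj]
            ring
        have hsum' : ∑ i ∈ Finset.univ.filter (fun i : Fin N => (i : ℕ) < m + 1),
            lam' i • a i = 0 := by
          have hterm : ∀ i : Fin N, lam' i • a i = lamp i • a i + t • (κ i • a i) := by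
            intro i
            show (lamp i + t * κ i) • a i = _
            rw [add_smul, smul_smul]
          rw [Finset.sum_congr rfl fun i _ => hterm i, Finset.sum_add_distrib, hsump,
            zero_add, ← Finset.smul_sum]
          have hκsum : ∑ i ∈ Finset.univ.filter (fun i : Fin N => (i : ℕ) < m + 1),
              κ i • a i = 0 := by
            rw [← Finset.sum_subset
              (fun i hi => Finset.mem_filter.mpr ⟨Finset.mem_univ _, hUpsub i hi⟩)
              (fun i _ hni => by rw [hksupp i hni, zero_smul])]
            exact hksum
          rw [hκsum, smul_zero]
        set U' : Finset (Fin N) := Up.erase j with hU'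
        have hU'card : U'.card = d := by
          rw [hU', Finset.card_erase_of_mem hjUp, hUpcard]
          omega
        have hU'sub : ∀ i ∈ U', (i : ℕ) < m + 1 := fun i hi =>
          hUpsub i (Finset.mem_of_mem_erase hi)
        have hU'box : ∀ i ∈ U', |lam' i| ≤ 1 := fun i hi =>
          hlam'box i (Finset.mem_of_mem_erase hi)
        have hU'ne : U'.Nonempty := by
          rw [← Finset.card_pos, hU'card]; omega
        have hplam' : 0 ≤ sig * lam' p := by
          have h1 : 0 ≤ t * (sig * κ p) := mul_nonneg ht0 hkp
          have h2 : lam' p = lam p + t * κ p := by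
            show lamp p + t * κ p = _
            rw [hlamp_p]
          have h3 : sig * (lam p + t * κ p) = sig * lam p + t * (sig * κ p) := by ring
          rw [h2, h3]
          linarith
        have hfroz' : ∀ i : Fin N, (i : ℕ) < m + 1 → i ∉ U' →
            lam' i = 1 ∨ lam' i = -1 := by
          intro i hi hni
          by_cases hij : i = j
          · subst hij; exact hjval
          · have hiUp : i ∉ Up := by
              intro h
              exact hni (Finset.mem_erase.mpr ⟨hij, h⟩)
            have h1 : i ≠ im := fun h => hiUp (h ▸ Finset.mem_insert_self _ _)
            have h2 : i ∉ U := fun h => hiUp (Finset.mem_insert_of_mem h)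
            have h3 : (i : ℕ) < m := by
              have := Fin.ext_iff.not.mp h1
              omega
            rw [hlam'_out i hiUp, hlamp_eq i h1]
            exact hfroz i h3 h2
        -- new protected pair
        obtain ⟨p', sig', hp'U, hsig', hp'lam, hptrans⟩ :
            ∃ (p' : Fin N) (sig' : ℝ), p' ∈ U' ∧ (sig' = 1 ∨ sig' = -1) ∧
              0 ≤ sig' * lam' p' ∧
              (∀ ε : Fin N → ℝ,
                (∀ i : Fin N, (i : ℕ) < m + 1 → i ∉ U' → ε i = lam' i) →
                ε p' = sig' → ε p = sig) := by
          by_cases hpj : p = j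
          · -- protected got frozen at its sign; re-designate
            have hsignp : lam' p = sig := by
              apply bg_sign_eq hsig _ hplam'
              rw [hpj]; exact hjval
            obtain ⟨q, hq⟩ := hU'ne
            refine ⟨q, if 0 ≤ lam' q then 1 else -1, hq, ?_, ?_, ?_⟩
            · by_cases h : 0 ≤ lam' q
              · rw [if_pos h]; exact Or.inl rfl
              · rw [if_neg h]; exact Or.inr rfl
            · by_cases h : 0 ≤ lam' q
              · rw [if_pos h]; linarith
              · rw [if_neg h]
                have := not_le.mp h
                nlinarith
            · intro ε hfr _
              have hpnU' : p ∉ U' := by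
                rw [hpj]; exact Finset.notMem_erase j Up
              rw [hfr p (hUpsub p hpUp) hpnU', hsignp]
          · refine ⟨p, sig, Finset.mem_erase.mpr ⟨hpj, hpUp⟩, hsig, hplam', ?_⟩
            intro ε _ h; exact h
        refine ⟨lam', U', p', sig', hU'sub, le_of_eq hU'card, hU'box, hfroz', hsum',
          fun _ => ⟨hp'U, hsig', hp'lam⟩, ?_⟩
        intro ε hε hfr hpr k hk
        by_cases hkm : k ≤ m
        · refine hhist ε hε ?_ ?_ k hkm
          · intro i hi hiU
            have hiUp : i ∉ Up := by
              intro h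
              rcases Finset.mem_insert.mp h with rfl | h2
              · omega
              · exact hiU h2
            have hiU' : i ∉ U' := fun h => hiUp (Finset.mem_of_mem_erase h)
            rw [hfr i (Nat.lt_succ_of_lt hi) hiU', hlam'_out i hiUp,
              hlamp_eq i (hne_im i hi)]
          · intro _
            exact hptrans ε hfr (hpr (Finset.ne_empty_of_mem hp'U))
        · have hk1 : k = m + 1 := by omega
          subst hk1
          exact bg_fresh a ha (m + 1) lam' U' p' sig' hU'sub (le_of_eq hU'card) hU'box
            hsum' hp'U hsig' hp'lam ε hε hfr (hpr (Finset.ne_empty_of_mem hp'U))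
  obtain ⟨lam, U, p, sig, hU1, hUcard, hbox, hfroz, hsum, hprot, hhist⟩ := key N le_rfl
  set ε : Fin N → ℝ := fun i => if i ∈ U then (if i = p then sig else 1) else lam i with hε
  have hε1 : ∀ i, ε i = 1 ∨ ε i = -1 := by
    intro i
    simp only [hε]
    by_cases hiU : i ∈ U
    · rw [if_pos hiU]
      by_cases hip : i = p
      · rw [if_pos hip]
        exact (hprot (Finset.ne_empty_of_mem hiU)).2.1
      · rw [if_neg hip]; exact Or.inl rfl
    · rw [if_neg hiU]
      exact hfroz i i.isLt hiU
  have hfr : ∀ i : Fin N, (i : ℕ) < N → i ∉ U → ε i = lam i := by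
    intro i _ hiU
    simp only [hε]; exact if_neg hiU
  have hpr : U ≠ ∅ → ε p = sig := by
    intro hUne
    have hpU := (hprot hUne).1
    simp [hε, hpU]
  exact ⟨ε, hε1, fun m _ h2 => hhist ε hε1 hfr hpr m h2⟩
end

section
/- Let d, k, n be positive integers and let ‖·‖ be any norm on ℝ^d. Let B = (b_i^j) be a k×n matrix with entries b_i^j ∈ ℝ^d such that ‖b_i^j‖ ≤ 1 for all i, j. Then there exists a k×n sign matrix ε = (ε_i^j) with ε_i^j ∈ {−1, 1} such that ‖∑_{j=1}^k ∑_{i=1}^m ε_i^j b_i^j‖ ≤ 2d − 1 for every m ∈ {1,…,n}. -/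
set_option linter.unusedVariables false
set_option linter.unusedSectionVars false

open Finset


section
variable {E : Type*} [NormedAddCommGroup E] [NormedSpace ℝ E] [FiniteDimensional ℝ E]

lemma seg_ivt {d : ℕ} (x p : Fin d → ℝ) (hx : ‖x‖ ≤ 1) (hp : 1 ≤ ‖p‖) :
    ∃ s : ℝ, 0 ≤ s ∧ s ≤ 1 ∧ ‖x + s • (p - x)‖ = 1 := by
  have hcont : Continuous fun s : ℝ => ‖x + s • (p - x)‖ :=
    (continuous_const.add ((continuous_id).smul continuous_const)).norm
  have h01 : (0:ℝ) ≤ 1 := zero_le_one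
  have hsub := intermediate_value_Icc h01 hcont.continuousOn
  have hf0 : ‖x + (0:ℝ) • (p - x)‖ = ‖x‖ := by simp
  have hf1 : ‖x + (1:ℝ) • (p - x)‖ = ‖p‖ := by simp
  have h1mem : (1:ℝ) ∈ Set.Icc (‖x + (0:ℝ) • (p - x)‖) (‖x + (1:ℝ) • (p - x)‖) := by
    rw [hf0, hf1]; exact ⟨hx, hp⟩
  obtain ⟨s, hs, hfs⟩ := hsub h1mem
  exact ⟨s, hs.1, hs.2, hfs⟩

lemma pi_norm_exists_eq {d : ℕ} (hd : 0 < d) (y : Fin d → ℝ) : ∃ j, |y j| = ‖y‖ := by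
  have hne : (Finset.univ : Finset (Fin d)).Nonempty := ⟨⟨0, hd⟩, mem_univ _⟩
  obtain ⟨j, _, hj⟩ := Finset.exists_mem_eq_sup univ hne (fun b => ‖y b‖₊)
  refine ⟨j, ?_⟩
  have : ‖y‖ = ↑(Finset.univ.sup fun b => ‖y b‖₊) := Pi.norm_def y
  rw [this, hj]
  simp [Real.norm_eq_abs]

lemma claimC {d : ℕ} (hd : 0 < d) (hdim : Module.finrank ℝ E = d)
    (w : Fin d → E) (hw : ∀ j, ‖w j‖ ≤ 1)
    (x : Fin d → ℝ) (hx : ∀ j, |x j| ≤ 1) (e : E) (he : ‖e‖ ≤ 1) :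
    ∃ y : Fin d → ℝ, (∀ j, |y j| ≤ 1) ∧ (∃ j, |y j| = 1) ∧
      ‖e + ∑ j, (y j - x j) • w j‖ ≤ 1 := by
  have key : ∃ p : Fin d → ℝ, (∃ j, 1 ≤ |p j|) ∧ ‖e + ∑ j, (p j - x j) • w j‖ ≤ 1 := by
    by_cases hli : LinearIndependent ℝ w
    · haveI : Nonempty (Fin d) := ⟨⟨0, hd⟩⟩
      have hcard : Fintype.card (Fin d) = Module.finrank ℝ E := by simp [hdim]
      set b := basisOfLinearIndependentOfCardEqFinrank hli hcard with hbdef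
      have hb : ∀ j, b j = w j := fun j =>
        congrFun (coe_basisOfLinearIndependentOfCardEqFinrank hli hcard) j
      set u := (∑ j, x j • w j) - e with hu
      set z : Fin d → ℝ := fun j => b.repr u j with hz
      have hzu : ∑ j, z j • w j = u := by
        conv_rhs => rw [← b.sum_repr u]
        exact Finset.sum_congr rfl fun j _ => by rw [hb]
      set j0 : Fin d := ⟨0, hd⟩
      set σ : ℝ := if 0 ≤ z j0 then 1 else -1 with hσ
      refine ⟨fun j => z j + if j = j0 then σ else 0, ⟨j0, ?_⟩, ?_⟩
      · show 1 ≤ |z j0 + if j0 = j0 then σ else 0|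
        rw [if_pos rfl]
        by_cases h0 : 0 ≤ z j0
        · have hnn : (0:ℝ) ≤ z j0 + 1 := by linarith
          rw [hσ, if_pos h0, abs_of_nonneg hnn]; linarith
        · push_neg at h0
          have hnp : z j0 + (-1:ℝ) ≤ 0 := by linarith
          rw [hσ, if_neg (not_le.mpr h0), abs_of_nonpos hnp]; linarith
      · have hsum : ∑ j, ((z j + if j = j0 then σ else 0) - x j) • w j
            = σ • w j0 - e := by
          have : ∀ j, ((z j + if j = j0 then σ else 0) - x j) • w j
              = z j • w j + (if j = j0 then σ else 0) • w j - x j • w j := by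
            intro j; rw [sub_smul, add_smul]
          rw [Finset.sum_congr rfl fun j _ => this j, Finset.sum_sub_distrib,
            Finset.sum_add_distrib, hzu]
          have : ∑ j, (if j = j0 then σ else 0) • w j = σ • w j0 := by
            rw [Finset.sum_eq_single j0]
            · simp
            · intro j _ hj; rw [if_neg hj, zero_smul]
            · intro h; exact absurd (mem_univ _) h
          rw [this, hu]
          abel
        rw [hsum]
        have : e + (σ • w j0 - e) = σ • w j0 := by abel
        rw [this, norm_smul]
        have : ‖σ‖ = 1 := by
          rw [hσ]; by_cases h0 : 0 ≤ z j0 <;> simp [h0]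
        rw [this, one_mul]; exact hw j0
    · obtain ⟨g, hgsum, j1, hgj⟩ := Fintype.not_linearIndependent_iff.mp hli
      have hgj' : 0 < |g j1| := abs_pos.mpr hgj
      refine ⟨fun j => x j + (2 / |g j1|) * g j, ⟨j1, ?_⟩, ?_⟩
      · have h2 : |(2 / |g j1|) * g j1| = 2 := by
          rw [abs_mul, abs_div, abs_abs, abs_two]
          field_simp
        calc (1:ℝ) = 2 - 1 := by norm_num
        _ ≤ |(2 / |g j1|) * g j1| - |x j1| := by rw [h2]; linarith [hx j1]
        _ ≤ |x j1 + (2 / |g j1|) * g j1| := by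
            have := abs_add_le (x j1) ((2 / |g j1|) * g j1)
            have h3 := abs_sub_abs_le_abs_sub ((2 / |g j1|) * g j1) (-(x j1))
            rw [abs_neg, sub_neg_eq_add] at h3
            calc |(2 / |g j1|) * g j1| - |x j1| ≤ |(2 / |g j1|) * g j1 + x j1| := h3
            _ = |x j1 + (2 / |g j1|) * g j1| := by rw [add_comm]
      · have : ∑ j, ((x j + (2 / |g j1|) * g j) - x j) • w j
            = (2 / |g j1|) • ∑ j, g j • w j := by
          rw [Finset.smul_sum]
          refine Finset.sum_congr rfl fun j _ => ?_
          rw [smul_smul]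
          congr 1
          ring
        rw [this, hgsum, smul_zero, add_zero]
        exact he
  obtain ⟨p, ⟨j1, hpj⟩, hP⟩ := key
  have hxn : ‖x‖ ≤ 1 := by
    rw [pi_norm_le_iff_of_nonneg zero_le_one]
    intro j; rw [Real.norm_eq_abs]; exact hx j
  have hpn : 1 ≤ ‖p‖ := le_trans hpj (by rw [← Real.norm_eq_abs]; exact norm_le_pi_norm p j1)
  obtain ⟨s, hs0, hs1, hsn⟩ := seg_ivt x p hxn hpn
  set y := x + s • (p - x) with hy
  obtain ⟨jm, hjm⟩ := pi_norm_exists_eq hd y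
  refine ⟨y, ?_, ⟨jm, by rw [hjm, hsn]⟩, ?_⟩
  · intro j
    have := norm_le_pi_norm y j
    rw [Real.norm_eq_abs] at this
    rw [hsn] at this
    exact this
  · have hyx : ∀ j, y j - x j = s * (p j - x j) := by
      intro j
      simp only [hy, Pi.add_apply, Pi.smul_apply, Pi.sub_apply, smul_eq_mul]
      ring
    have hsum : ∑ j, (y j - x j) • w j = s • ∑ j, (p j - x j) • w j := by
      rw [Finset.smul_sum]
      exact Finset.sum_congr rfl fun j _ => by rw [hyx j, ← smul_smul]
    have hconv : e + ∑ j, (y j - x j) • w j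
        = (1 - s) • e + s • (e + ∑ j, (p j - x j) • w j) := by
      rw [hsum, smul_add, sub_smul, one_smul]; abel
    rw [hconv]
    calc ‖(1 - s) • e + s • (e + ∑ j, (p j - x j) • w j)‖
        ≤ ‖(1 - s) • e‖ + ‖s • (e + ∑ j, (p j - x j) • w j)‖ := norm_add_le _ _
    _ = |1 - s| * ‖e‖ + |s| * ‖e + ∑ j, (p j - x j) • w j‖ := by
        rw [norm_smul, norm_smul, Real.norm_eq_abs, Real.norm_eq_abs]
    _ ≤ (1 - s) * 1 + s * 1 := by
        rw [abs_of_nonneg (by linarith), abs_of_nonneg hs0]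
        have h1 : 0 ≤ 1 - s := by linarith
        have := mul_le_mul_of_nonneg_left he h1
        have := mul_le_mul_of_nonneg_left hP hs0
        nlinarith
    _ = 1 := by ring

end


open Finset

section process
variable {E : Type*} [NormedAddCommGroup E] [NormedSpace ℝ E] [FiniteDimensional ℝ E]


def BGGood (d : ℕ) (v : ℕ → E) (t : ℕ) (lam : ℕ → ℝ) : Prop :=
  (∀ i, t ≤ i → lam i = 0) ∧ (∀ i, |lam i| ≤ 1) ∧
    ‖∑ i ∈ Finset.range t, lam i • v i‖ ≤ 1 ∧
    ((Finset.range t).filter (fun i => |lam i| < 1)).card ≤ d - 1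

lemma bg_step {d : ℕ} (hd : 0 < d) (hdim : Module.finrank ℝ E = d) (v : ℕ → E)
    (hv : ∀ i, ‖v i‖ ≤ 1) (t : ℕ) (lam : ℕ → ℝ) (h : BGGood d v t lam) :
    ∃ lam', BGGood d v (t+1) lam' ∧ ∀ i, |lam i| = 1 → lam' i = lam i := by
  obtain ⟨hsupp, hbd, hnorm, hcard⟩ := h
  set F := (Finset.range t).filter (fun i => |lam i| < 1) with hF
  have hlamt : lam t = 0 := hsupp t le_rfl
  have htF : t ∉ F := fun hmem =>
    absurd (Finset.mem_range.mp (Finset.mem_filter.mp hmem).1) (lt_irrefl t)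
  set s := insert t F with hs
  have hscard : s.card = F.card + 1 := Finset.card_insert_of_notMem htF
  have hssub : s ⊆ Finset.range (t+1) := by
    intro i hi
    rcases Finset.mem_insert.mp hi with h1 | h2
    · rw [Finset.mem_range, h1]; omega
    · have := Finset.mem_range.mp (Finset.mem_filter.mp h2).1
      rw [Finset.mem_range]; omega
  have hEt1 : ∑ i ∈ Finset.range (t+1), lam i • v i = ∑ i ∈ Finset.range t, lam i • v i := by
    rw [Finset.sum_range_succ, hlamt, zero_smul, add_zero]
  have hfilt1 : (Finset.range (t+1)).filter (fun i => |lam i| < 1) = s := by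
    rw [Finset.range_add_one, Finset.filter_insert, if_pos (by rw [hlamt]; norm_num)]
  by_cases hcase : s.card ≤ d - 1
  · refine ⟨lam, ⟨?_, hbd, ?_, ?_⟩, fun i _ => rfl⟩
    · intro i hi; exact hsupp i (le_trans (Nat.le_succ t) hi)
    · rw [hEt1]; exact hnorm
    · rw [hfilt1]; exact hcase
  · have hsd : s.card = d := by omega
    set g := Finset.equivFinOfCardEq hsd with hg
    set ge := g.symm with hge
    set w : Fin d → E := fun j => v ↑(ge j) with hw
    set x : Fin d → ℝ := fun j => lam ↑(ge j) with hx
    obtain ⟨y, hy1, ⟨j0, hyj0⟩, hynorm⟩ :=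
      claimC hd hdim w (fun j => hv _) x (fun j => hbd _)
        (∑ i ∈ Finset.range (t+1), lam i • v i) (by rw [hEt1]; exact hnorm)
    set lam' : ℕ → ℝ := fun i => if hi : i ∈ s then y (g ⟨i, hi⟩) else lam i with hlam'
    have hlam'_on : ∀ j : Fin d, lam' ↑(ge j) = y j := by
      intro j
      have hmem : ↑(ge j) ∈ s := (ge j).2
      simp only [hlam']
      rw [dif_pos hmem]
      congr 1
      have : (⟨↑(ge j), hmem⟩ : {i // i ∈ s}) = ge j := Subtype.ext rfl
      rw [this, hge, Equiv.apply_symm_apply]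
    have hlam'_off : ∀ i, i ∉ s → lam' i = lam i := by
      intro i hi; simp only [hlam']; rw [dif_neg hi]
    have hts : t ∈ s := Finset.mem_insert_self t F
    have hfree : ∀ i, |lam i| = 1 → i ∉ s := by
      intro i hi hmem
      rcases Finset.mem_insert.mp hmem with h1 | h2
      · subst h1; rw [hlamt] at hi; norm_num at hi
      · have := (Finset.mem_filter.mp h2).2
        rw [hi] at this; exact lt_irrefl 1 this
    have hsum : ∑ i ∈ Finset.range (t+1), lam' i • v i
        = (∑ i ∈ Finset.range (t+1), lam i • v i) + ∑ j : Fin d, (y j - x j) • w j := by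
      have h1 : ∑ i ∈ Finset.range (t+1), lam' i • v i
          = ∑ i ∈ Finset.range (t+1), (lam i • v i + (lam' i - lam i) • v i) := by
        refine Finset.sum_congr rfl fun i _ => ?_
        rw [← add_smul]; congr 1; ring
      rw [h1, Finset.sum_add_distrib]
      congr 1
      rw [← Finset.sum_subset hssub (fun i _ hi => by rw [hlam'_off i hi, sub_self, zero_smul])]
      rw [← Finset.sum_coe_sort s (fun i => (lam' i - lam i) • v i)]
      rw [← Equiv.sum_comp ge (fun a : {i // i ∈ s} => (lam' ↑a - lam ↑a) • v ↑a)]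
      refine Finset.sum_congr rfl fun j _ => ?_
      rw [hlam'_on j]
    refine ⟨lam', ⟨?_, ?_, ?_, ?_⟩, ?_⟩
    · intro i hi
      rw [hlam'_off i (fun hmem => absurd (hssub hmem) (by simp; omega))]
      exact hsupp i (le_trans (Nat.le_succ t) hi)
    · intro i
      by_cases hi : i ∈ s
      · simp only [hlam']; rw [dif_pos hi]; exact hy1 _
      · rw [hlam'_off i hi]; exact hbd i
    · rw [hsum]; exact hynorm
    · have hsub : (Finset.range (t+1)).filter (fun i => |lam' i| < 1)
          ⊆ s.erase ↑(ge j0) := by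
        intro i hi
        obtain ⟨hir, hil⟩ := Finset.mem_filter.mp hi
        have his : i ∈ s := by
          by_contra hns
          rw [hlam'_off i hns] at hil
          have : i ∈ (Finset.range (t+1)).filter (fun i => |lam i| < 1) :=
            Finset.mem_filter.mpr ⟨hir, hil⟩
          rw [hfilt1] at this
          exact hns this
        refine Finset.mem_erase.mpr ⟨?_, his⟩
        intro heq
        have : lam' i = y j0 := by
          rw [heq]; exact hlam'_on j0
        rw [this, hyj0] at hil
        exact lt_irrefl 1 hil
      calc ((Finset.range (t+1)).filter (fun i => |lam' i| < 1)).card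
          ≤ (s.erase ↑(ge j0)).card := Finset.card_le_card hsub
        _ = d - 1 := by rw [Finset.card_erase_of_mem (ge j0).2, hsd]
    · intro i hi
      exact hlam'_off i (hfree i hi)

lemma bg_chain {d : ℕ} (hd : 0 < d) (hdim : Module.finrank ℝ E = d) (v : ℕ → E)
    (hv : ∀ i, ‖v i‖ ≤ 1) (N : ℕ) :
    ∃ L : ℕ → ℕ → ℝ, (∀ t, t ≤ N → BGGood d v t (L t)) ∧
      (∀ t, t < N → ∀ i, |L t i| = 1 → L (t+1) i = L t i) := by
  induction N with
  | zero =>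
    refine ⟨fun _ _ => 0, fun t ht => ?_, fun t ht => by omega⟩
    have ht0 : t = 0 := Nat.le_zero.mp ht
    subst ht0
    exact ⟨fun _ _ => rfl, fun i => by norm_num, by simp, by simp⟩
  | succ N ih =>
    obtain ⟨L, h1, h2⟩ := ih
    obtain ⟨lam', h3, h4⟩ := bg_step hd hdim v hv N (L N) (h1 N le_rfl)
    refine ⟨fun t => if t = N+1 then lam' else L t, ?_, ?_⟩
    · intro t ht
      by_cases h : t = N+1
      · subst h; simpa using h3
      · have : t ≤ N := by omega
        simpa [h] using h1 t this
    · intro t ht i hi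
      beta_reduce at hi ⊢
      by_cases h : t = N
      · rw [if_neg (by omega : ¬ t = N+1)] at hi ⊢
        rw [if_pos (by omega : t + 1 = N + 1)]
        rw [h] at hi ⊢
        exact h4 i hi
      · rw [if_neg (by omega : ¬ t = N+1)] at hi ⊢
        rw [if_neg (by omega : ¬ t + 1 = N+1)]
        exact h2 t (by omega) i hi

lemma bg_seq {d : ℕ} (hd : 0 < d) (hdim : Module.finrank ℝ E = d) (N : ℕ) (v : ℕ → E)
    (hv : ∀ i, ‖v i‖ ≤ 1) :
    ∃ ε : ℕ → ℝ, (∀ i, ε i = 1 ∨ ε i = -1) ∧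
      ∀ t, t ≤ N → ‖∑ i ∈ Finset.range t, ε i • v i‖ ≤ 2 * d - 1 := by
  obtain ⟨L, hgood, hpers⟩ := bg_chain hd hdim v hv N
  set ε : ℕ → ℝ := fun i => if 0 ≤ L N i then 1 else -1 with hε
  have hsigns : ∀ i, ε i = 1 ∨ ε i = -1 := by
    intro i
    by_cases h : 0 ≤ L N i
    · left; rw [hε]; simp [h]
    · right; rw [hε]; simp [h]
  have hpersN : ∀ t, t ≤ N → ∀ i, |L t i| = 1 → L N i = L t i := by
    intro t htN i hi
    have key : ∀ s, t ≤ s → s ≤ N → L s i = L t i := by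
      intro s
      induction s with
      | zero => intro h1 _; have : t = 0 := Nat.le_zero.mp h1; subst this; rfl
      | succ s ihs =>
        intro h1 h2
        by_cases h : t = s + 1
        · subst h; rfl
        · have hts : t ≤ s := by omega
          have hsN : s ≤ N := by omega
          have hrec := ihs hts hsN
          have habs : |L s i| = 1 := by rw [hrec]; exact hi
          rw [hpers s (by omega) i habs, hrec]
    exact key N htN le_rfl
  have hmatch : ∀ t, t ≤ N → ∀ i, |L t i| = 1 → ε i = L t i := by
    intro t ht i hi
    have hLN : L N i = L t i := hpersN t ht i hi
    rcases abs_eq (by norm_num : (0:ℝ) ≤ 1) |>.mp hi with h1 | h1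
    · rw [hε]; simp only; rw [if_pos (by rw [hLN, h1]; norm_num), h1]
    · rw [hε]; simp only; rw [if_neg (by rw [hLN, h1]; norm_num), h1]
  refine ⟨ε, hsigns, ?_⟩
  intro t ht
  obtain ⟨hsupp, hbd, hnorm, hcard⟩ := hgood t ht
  have hsplit : ∑ i ∈ Finset.range t, ε i • v i
      = (∑ i ∈ Finset.range t, L t i • v i)
        + ∑ i ∈ (Finset.range t).filter (fun i => |L t i| < 1), (ε i - L t i) • v i := by
    have h1 : ∑ i ∈ Finset.range t, ε i • v i
        = ∑ i ∈ Finset.range t, (L t i • v i + (ε i - L t i) • v i) := by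
      refine Finset.sum_congr rfl fun i _ => ?_
      rw [← add_smul]; congr 1; ring
    rw [h1, Finset.sum_add_distrib]
    congr 1
    rw [Finset.sum_filter_of_ne]
    intro i hir hne
    by_contra hlt
    push_neg at hlt
    have h1 : |L t i| = 1 := le_antisymm (hbd i) hlt
    have := hmatch t ht i h1
    rw [this, sub_self, zero_smul] at hne
    exact hne rfl
  rw [hsplit]
  have hterm : ∀ i ∈ (Finset.range t).filter (fun i => |L t i| < 1),
      ‖(ε i - L t i) • v i‖ ≤ 2 := by
    intro i _
    rw [norm_smul, Real.norm_eq_abs]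
    have h1 : |ε i - L t i| ≤ 2 := by
      have := hbd i
      rcases hsigns i with h | h <;> rw [h] <;> rw [abs_le] at this ⊢ <;> constructor <;> linarith [this.1, this.2]
    calc |ε i - L t i| * ‖v i‖ ≤ 2 * 1 :=
          mul_le_mul h1 (hv i) (norm_nonneg _) (by norm_num)
      _ = 2 := by norm_num
  have hcard' : ((Finset.range t).filter (fun i => |L t i| < 1)).card ≤ d - 1 := hcard
  calc ‖(∑ i ∈ Finset.range t, L t i • v i)
        + ∑ i ∈ (Finset.range t).filter (fun i => |L t i| < 1), (ε i - L t i) • v i‖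
      ≤ ‖∑ i ∈ Finset.range t, L t i • v i‖
        + ‖∑ i ∈ (Finset.range t).filter (fun i => |L t i| < 1), (ε i - L t i) • v i‖ :=
        norm_add_le _ _
    _ ≤ 1 + ∑ i ∈ (Finset.range t).filter (fun i => |L t i| < 1), (2:ℝ) :=
        add_le_add hnorm (le_trans (norm_sum_le _ _) (Finset.sum_le_sum hterm))
    _ = 1 + 2 * ((Finset.range t).filter (fun i => |L t i| < 1)).card := by
        rw [Finset.sum_const, nsmul_eq_mul]; ring
    _ ≤ 1 + 2 * ((d:ℝ) - 1) := by
        have h1 : (((Finset.range t).filter (fun i => |L t i| < 1)).card : ℝ) ≤ (d:ℝ) - 1 := by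
          have := Nat.cast_le (α := ℝ) |>.mpr hcard'
          rw [Nat.cast_sub hd] at this
          simpa using this
        linarith
    _ = 2 * d - 1 := by ring

end process


open Finset


lemma bg_sum_block {M : Type*} [AddCommMonoid M] (f : ℕ → M) (k : ℕ) :
    ∀ m : ℕ, ∑ ℓ ∈ Finset.range (m * k), f ℓ
      = ∑ i ∈ Finset.range m, ∑ j ∈ Finset.range k, f (i * k + j) := by
  intro m
  induction m with
  | zero => simp
  | succ m ih =>
    rw [Finset.sum_range_succ, ← ih, Nat.succ_mul]
    rw [Finset.range_eq_Ico,
      ← Finset.sum_Ico_consecutive f (Nat.zero_le (m*k)) (by omega : m*k ≤ m*k + k)]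
    congr 1
    · rw [Finset.range_eq_Ico]
    rw [Finset.sum_Ico_eq_sum_range]
    have hkk : m * k + k - m * k = k := by omega
    rw [hkk]

/-- The matrix form of the Bárány–Grinberg sign-sequence theorem: for any
`k × n` matrix `B` whose entries are vectors of norm at most `1` in a
`d`-dimensional real normed space, there is a `k × n` sign matrix
`ε = (ε_i^j)`, `ε_i^j ∈ {-1, 1}`, such that the sum of the entries in the
first `m` columns of the signed matrix `B^ε = (ε_i^j b_i^j)` has norm at most
`2d - 1` for every `m ∈ {1, …, n}`. -/
theorem matrix_signs
    (d k n : ℕ) (hd : 0 < d) (hk : 0 < k) (hn : 0 < n)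
    {E : Type*} [NormedAddCommGroup E] [NormedSpace ℝ E]
    [FiniteDimensional ℝ E] (hdim : Module.finrank ℝ E = d)
    (B : Fin k → Fin n → E)
    (hB : ∀ j i, ‖B j i‖ ≤ 1) :
    ∃ ε : Fin k → Fin n → ℝ, (∀ j i, ε j i = 1 ∨ ε j i = -1) ∧
      ∀ m : ℕ, 1 ≤ m → m ≤ n →
        ‖∑ j : Fin k, ∑ i ∈ Finset.univ.filter (fun i : Fin n => (i : ℕ) < m),
            ε j i • B j i‖ ≤ 2 * d - 1 := by
  classical
  set v : ℕ → E := fun ℓ =>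
    if h : ℓ < k * n then
      B ⟨ℓ % k, Nat.mod_lt ℓ hk⟩ ⟨ℓ / k, by
        rw [Nat.div_lt_iff_lt_mul hk]
        rw [mul_comm] at h
        exact h⟩
    else 0 with hvdef
  have hv : ∀ ℓ, ‖v ℓ‖ ≤ 1 := by
    intro ℓ
    simp only [hvdef]
    by_cases h : ℓ < k * n
    · rw [dif_pos h]; exact hB _ _
    · rw [dif_neg h]; simp
  obtain ⟨εs, hsigns, hpre⟩ := bg_seq hd hdim (k * n) v hv
  have hval : ∀ (i : Fin n) (j : Fin k), v ((i:ℕ) * k + (j:ℕ)) = B j i := by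
    intro i j
    have hlt : (i:ℕ) * k + (j:ℕ) < k * n := by
      calc (i:ℕ) * k + (j:ℕ) < (i:ℕ) * k + k := Nat.add_lt_add_left j.isLt _
      _ = ((i:ℕ) + 1) * k := (Nat.succ_mul _ _).symm
      _ ≤ n * k := Nat.mul_le_mul_right k i.isLt
      _ = k * n := Nat.mul_comm n k
    have hmod : ((i:ℕ) * k + (j:ℕ)) % k = (j:ℕ) := by
      rw [Nat.mul_comm (i:ℕ) k, Nat.mul_add_mod]; exact Nat.mod_eq_of_lt j.isLt
    have hdiv : ((i:ℕ) * k + (j:ℕ)) / k = (i:ℕ) := by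
      rw [Nat.add_comm, Nat.add_mul_div_right _ _ hk, Nat.div_eq_of_lt j.isLt]
      exact Nat.zero_add _
    simp only [hvdef]
    rw [dif_pos hlt]
    congr 1 <;> apply Fin.ext <;> simp [hmod, hdiv]
  refine ⟨fun j i => εs ((i:ℕ) * k + (j:ℕ)), fun j i => hsigns _, ?_⟩
  intro m hm1 hmn
  have hrw : ∑ j : Fin k, ∑ i ∈ Finset.univ.filter (fun i : Fin n => (i : ℕ) < m),
      εs ((i:ℕ) * k + (j:ℕ)) • B j i
      = ∑ ℓ ∈ Finset.range (m * k), εs ℓ • v ℓ := by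
    rw [Finset.sum_comm]
    rw [bg_sum_block (fun ℓ => εs ℓ • v ℓ) k m]
    refine Finset.sum_bij' (fun (a : Fin n) _ => (a : ℕ))
      (fun b hb => (⟨b, lt_of_lt_of_le (Finset.mem_range.mp hb) hmn⟩ : Fin n))
      ?_ ?_ ?_ ?_ ?_
    · intro a ha
      exact Finset.mem_range.mpr ((Finset.mem_filter.mp ha).2)
    · intro b hb
      exact Finset.mem_filter.mpr ⟨Finset.mem_univ _, Finset.mem_range.mp hb⟩
    · intro a ha; rfl
    · intro b hb; rfl
    · intro a ha
      rw [Finset.sum_range fun j => εs ((a:ℕ) * k + j) • v ((a:ℕ) * k + j)]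
      refine Finset.sum_congr rfl fun j _ => ?_
      rw [hval a j]
  rw [hrw]
  exact hpre (m * k) (by calc m * k ≤ n * k := Nat.mul_le_mul_right k hmn
    _ = k * n := Nat.mul_comm n k)
end

section
/- Let d, k be positive integers, let ‖·‖ be any norm on ℝ^d, and let V ≥ 0 be a real number with the following property: for every positive integer p and every k×p matrix B = (b_i^j) with entries in ℝ^d of norm at most 1, there exists a sign matrix ε = (ε_i^j), ε_i^j ∈ {−1,1}, such that ‖∑_{j=1}^k ∑_{i=1}^m ε_i^j b_i^j‖ ≤ V for every m ∈ {1,…,p}. Then for every positive integer n and every k×n matrix A = (a_i^j) with entries in ℝ^d of norm at most 1 whose total sum of entries is zero, there exist permutations π_1, …, π_k of {1,…,n} such that the row-permuted matrix C with c_i^j = a_{π_j(i)}^j satisfies ‖∑_{j=1}^k ∑_{i=1}^m c_i^j‖ ≤ 2V for every m ∈ {1,…,n}. -/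
open Finset

private lemma filter_fin_sum {M : Type*} [AddCommMonoid M] (p m : ℕ) (h : m ≤ p) (f : ℕ → M) :
    ∑ i ∈ Finset.univ.filter (fun i : Fin p => (i : ℕ) < m), f (i : ℕ)
      = ∑ t ∈ Finset.range m, f t := by
  rw [Finset.sum_filter, Fin.sum_univ_eq_sum_range (fun i => if i < m then f i else 0) p,
    ← Finset.sum_filter]
  congr 1
  ext t
  simp only [Finset.mem_filter, Finset.mem_range]
  omega

private lemma sum_reflect {M : Type*} [AddCommMonoid M] (f : ℕ → M) (q mm : ℕ) (h : mm ≤ q) :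
    ∑ t ∈ Finset.range mm, f (q - 1 - t) = ∑ i ∈ Finset.Ico (q - mm) q, f i := by
  rw [Finset.sum_Ico_eq_sum_range]
  have h1 : q - (q - mm) = mm := by omega
  rw [h1, ← Finset.sum_range_reflect (fun t => f (q - mm + t)) mm]
  refine Finset.sum_congr rfl fun t ht => ?_
  have ht' := Finset.mem_range.mp ht
  congr 1
  omega

private lemma sum_pairs {M : Type*} [AddCommGroup M] (f : ℕ → M) (r : ℕ) (u : ℕ) :
    ∑ t ∈ Finset.range u, (f (r + 2 * t) + f (r + 2 * t + 1))
      = ∑ t ∈ Finset.range (r + 2 * u), f t - ∑ t ∈ Finset.range r, f t := by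
  induction u with
  | zero => simp
  | succ u ih =>
      rw [Finset.sum_range_succ, ih]
      have h2 : r + 2 * (u + 1) = (r + 2 * u) + 1 + 1 := by ring
      rw [h2, Finset.sum_range_succ, Finset.sum_range_succ]
      abel

private lemma core_step {E : Type*} [NormedAddCommGroup E] [NormedSpace ℝ E] (k : ℕ)
    (V : ℝ) (hV : 0 ≤ V)
    (hsigns : ∀ p : ℕ, 0 < p → ∀ B : Fin k → Fin p → E,
      (∀ j i, ‖B j i‖ ≤ 1) →
      ∃ ε : Fin k → Fin p → ℝ, (∀ j i, ε j i = 1 ∨ ε j i = -1) ∧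
        ∀ m : ℕ, 1 ≤ m → m ≤ p →
          ‖∑ j : Fin k, ∑ i ∈ Finset.univ.filter (fun i : Fin p => (i : ℕ) < m),
              ε j i • B j i‖ ≤ V)
    (n : ℕ) (hn : 0 < n) (Bd : ℝ) (hBd : 0 ≤ Bd)
    (C : Fin k → ℕ → E) (hC : ∀ j, ∀ i, i < n → ‖C j i‖ ≤ 1)
    (htot : ∑ j : Fin k, ∑ t ∈ Finset.range n, C j t = 0)
    (hpre : ∀ m, m ≤ n → ‖∑ j : Fin k, ∑ t ∈ Finset.range m, C j t‖ ≤ Bd) :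
    ∃ τ : Fin k → ℕ → ℕ,
      (∀ j m, m < n → τ j m < n) ∧
      (∀ j m₁ m₂, m₁ < n → m₂ < n → τ j m₁ = τ j m₂ → m₁ = m₂) ∧
      (∀ m, m ≤ n → ‖∑ j : Fin k, ∑ t ∈ Finset.range m, C j (τ j t)‖ ≤ Bd / 2 + V) := by
  have keybound : ∀ (x w : E), ‖x‖ ≤ Bd → ‖w‖ ≤ V → ‖(2⁻¹ : ℝ) • x + w‖ ≤ Bd / 2 + V := by
    intro x w hx hw
    have h1 : ‖(2⁻¹ : ℝ) • x + w‖ ≤ ‖(2⁻¹ : ℝ) • x‖ + ‖w‖ := norm_add_le _ _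
    have h2 : ‖(2⁻¹ : ℝ) • x‖ = 2⁻¹ * ‖x‖ := by
      rw [norm_smul, Real.norm_eq_abs]
      norm_num
    rw [h2] at h1
    have h3 : (2⁻¹ : ℝ) * ‖x‖ ≤ Bd / 2 := by linarith
    linarith
  rcases Nat.lt_or_ge n 2 with h2 | h2
  · -- n = 1
    have hn1 : n = 1 := by omega
    subst hn1
    refine ⟨fun _ m => m, fun j m hm => hm, fun j m₁ m₂ _ _ h => h, ?_⟩
    intro m hm
    interval_cases m
    · simpa using by positivity
    · have h0 : ‖∑ j : Fin k, ∑ t ∈ Finset.range 1, C j t‖ ≤ Bd / 2 + V := by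
        rw [htot, norm_zero]; positivity
      simpa using h0
  · set q := n / 2 with hq
    set r := n % 2 with hrdef
    have hq1 : 0 < q := by omega
    have hnqr : n = 2 * q + r := by omega
    have hr1 : r ≤ 1 := by omega
    set d : Fin k → ℕ → E := fun j i => (2⁻¹ : ℝ) • (C j (r + 2 * i) - C j (r + 2 * i + 1)) with hd
    have hdnorm : ∀ j i, i < q → ‖d j i‖ ≤ 1 := by
      intro j i hi
      have ha : ‖C j (r + 2 * i)‖ ≤ 1 := hC j _ (by omega)
      have hb : ‖C j (r + 2 * i + 1)‖ ≤ 1 := hC j _ (by omega)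
      have hc : ‖d j i‖ = 2⁻¹ * ‖C j (r + 2 * i) - C j (r + 2 * i + 1)‖ := by
        simp only [hd]
        rw [norm_smul, Real.norm_eq_abs]
        norm_num
      rw [hc]
      have hs := norm_sub_le (C j (r + 2 * i)) (C j (r + 2 * i + 1))
      linarith
    set D : Fin k → Fin q → E := fun j t => d j (q - 1 - (t : ℕ)) with hD
    obtain ⟨η, hηsign, hηbound⟩ := hsigns q hq1 D (fun j t => hdnorm j _ (by omega))
    set ε : Fin k → ℕ → ℝ := fun j i => if h : i < q then η j ⟨q - 1 - i, by omega⟩ else 1 with hε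
    have hεsign : ∀ j i, ε j i = 1 ∨ ε j i = -1 := by
      intro j i
      simp only [hε]
      by_cases h : i < q
      · simpa [h] using hηsign j _
      · simp [h]
    -- window bounds
    have hWbound : ∀ u, u ≤ q → ‖∑ j : Fin k, ∑ i ∈ Finset.Ico u q, ε j i • d j i‖ ≤ V := by
      intro u hu
      rcases eq_or_lt_of_le hu with rfl | hlt
      · simpa using hV
      · have hmm1 : 1 ≤ q - u := by omega
        have hmm2 : q - u ≤ q := by omega
        have hb := hηbound (q - u) hmm1 hmm2
        have heq : ∀ j : Fin k,
            ∑ i ∈ Finset.univ.filter (fun i : Fin q => (i : ℕ) < q - u), η j i • D j i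
              = ∑ i ∈ Finset.Ico u q, ε j i • d j i := by
          intro j
          calc ∑ i ∈ Finset.univ.filter (fun i : Fin q => (i : ℕ) < q - u), η j i • D j i
              = ∑ i ∈ Finset.univ.filter (fun i : Fin q => (i : ℕ) < q - u),
                  ε j (q - 1 - (i : ℕ)) • d j (q - 1 - (i : ℕ)) := by
                refine Finset.sum_congr rfl fun i _ => ?_
                have hi := i.isLt
                have hεi : ε j (q - 1 - (i : ℕ)) = η j i := by
                  simp only [hε]
                  rw [dif_pos (show q - 1 - (i : ℕ) < q by omega)]
                  congr 1
                  exact Fin.ext (show q - 1 - (q - 1 - (i : ℕ)) = (i : ℕ) by omega)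
                rw [hεi]
            _ = ∑ t ∈ Finset.range (q - u), ε j (q - 1 - t) • d j (q - 1 - t) :=
                filter_fin_sum q (q - u) hmm2 (fun t => ε j (q - 1 - t) • d j (q - 1 - t))
            _ = ∑ i ∈ Finset.Ico u q, ε j i • d j i := by
                have hqu : q - (q - u) = u := by omega
                have := sum_reflect (fun i => ε j i • d j i) q (q - u) hmm2
                rw [hqu] at this
                exact this
        calc ‖∑ j : Fin k, ∑ i ∈ Finset.Ico u q, ε j i • d j i‖
            = ‖∑ j : Fin k, ∑ i ∈ Finset.univ.filter (fun i : Fin q => (i : ℕ) < q - u),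
                η j i • D j i‖ := by rw [Finset.sum_congr rfl fun j _ => heq j]
          _ ≤ V := hb
    set selIdx : Fin k → ℕ → ℕ := fun j i => if ε j i = 1 then r + 2 * i else r + 2 * i + 1
      with hselIdx
    set rejIdx : Fin k → ℕ → ℕ := fun j i => if ε j i = 1 then r + 2 * i + 1 else r + 2 * i
      with hrejIdx
    have hkey : ∀ j i, (selIdx j i = r + 2 * i ∨ selIdx j i = r + 2 * i + 1)
        ∧ (rejIdx j i = r + 2 * i ∨ rejIdx j i = r + 2 * i + 1)
        ∧ selIdx j i ≠ rejIdx j i := by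
      intro j i
      by_cases h : ε j i = 1
      · have hs : selIdx j i = r + 2 * i := by simp only [hselIdx, if_pos h]
        have hr' : rejIdx j i = r + 2 * i + 1 := by simp only [hrejIdx, if_pos h]
        exact ⟨Or.inl hs, Or.inr hr', by omega⟩
      · have hs : selIdx j i = r + 2 * i + 1 := by simp only [hselIdx, if_neg h]
        have hr' : rejIdx j i = r + 2 * i := by simp only [hrejIdx, if_neg h]
        exact ⟨Or.inr hs, Or.inl hr', by omega⟩
    have hselC : ∀ j i, C j (selIdx j i)
        = (2⁻¹ : ℝ) • (C j (r + 2 * i) + C j (r + 2 * i + 1)) + ε j i • d j i := by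
      intro j i
      rcases hεsign j i with h | h
      · simp only [hselIdx, if_pos h, h, one_smul, hd]
        module
      · have hne : ¬(ε j i = 1) := by rw [h]; norm_num
        simp only [hselIdx, if_neg hne, h, hd]
        module
    have hrejC : ∀ j i, C j (rejIdx j i)
        = (2⁻¹ : ℝ) • (C j (r + 2 * i) + C j (r + 2 * i + 1)) - ε j i • d j i := by
      intro j i
      rcases hεsign j i with h | h
      · simp only [hrejIdx, if_pos h, h, one_smul, hd]
        module
      · have hne : ¬(ε j i = 1) := by rw [h]; norm_num
        simp only [hrejIdx, if_neg hne, h, hd]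
        module
    set τ : Fin k → ℕ → ℕ := fun j m => if m < q then selIdx j (q - 1 - m)
      else if m < q + r then 0 else rejIdx j (m - (q + r)) with hτ
    have hτlt : ∀ j m, m < n → τ j m < n := by
      intro j m hm
      simp only [hτ]
      split_ifs with h1 h2
      · rcases (hkey j (q - 1 - m)).1 with h | h <;> omega
      · omega
      · rcases (hkey j (m - (q + r))).2.1 with h | h <;> omega
    have hτinj : ∀ j m₁ m₂, m₁ < n → m₂ < n → τ j m₁ = τ j m₂ → m₁ = m₂ := by
      intro j m₁ m₂ h₁ h₂ heq
      simp only [hτ] at heq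
      split_ifs at heq with a1 a3 a4 a2 a5 a6
      · -- sel / sel
        rcases (hkey j (q - 1 - m₁)).1 with e1 | e1 <;>
          rcases (hkey j (q - 1 - m₂)).1 with e2 | e2 <;> omega
      · -- sel / mid
        rcases (hkey j (q - 1 - m₁)).1 with e1 | e1 <;> omega
      · -- sel / rej
        rcases (hkey j (q - 1 - m₁)).1 with e1 | e1 <;>
          rcases (hkey j (m₂ - (q + r))).2.1 with e4 | e4 <;>
          first
            | omega
            | (have hii : q - 1 - m₁ = m₂ - (q + r) := by omega
               rw [hii] at heq
               exact absurd heq (hkey j (m₂ - (q + r))).2.2)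
      · -- mid / sel
        rcases (hkey j (q - 1 - m₂)).1 with e2 | e2 <;> omega
      · -- mid / mid
        omega
      · -- mid / rej
        rcases (hkey j (m₂ - (q + r))).2.1 with e4 | e4 <;> omega
      · -- rej / sel
        rcases (hkey j (m₁ - (q + r))).2.1 with e3 | e3 <;>
          rcases (hkey j (q - 1 - m₂)).1 with e2 | e2 <;>
          first
            | omega
            | (have hii : q - 1 - m₂ = m₁ - (q + r) := by omega
               rw [hii] at heq
               exact absurd heq.symm (hkey j (m₁ - (q + r))).2.2)
      · -- rej / mid
        rcases (hkey j (m₁ - (q + r))).2.1 with e3 | e3 <;> omega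
      · -- rej / rej
        rcases (hkey j (m₁ - (q + r))).2.1 with e3 | e3 <;>
          rcases (hkey j (m₂ - (q + r))).2.1 with e4 | e4 <;> omega
    have hWsplit' : ∀ u, u ≤ q → ∑ j : Fin k, ∑ i ∈ Finset.range u, ε j i • d j i
        = (∑ j : Fin k, ∑ i ∈ Finset.Ico 0 q, ε j i • d j i)
          - ∑ j : Fin k, ∑ i ∈ Finset.Ico u q, ε j i • d j i := by
      intro u hu
      rw [eq_sub_iff_add_eq, ← Finset.sum_add_distrib]
      refine Finset.sum_congr rfl fun j _ => ?_
      rw [Finset.range_eq_Ico]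
      exact Finset.sum_Ico_consecutive _ (Nat.zero_le u) hu
    have hpavgr : ∀ (j : Fin k) (u : ℕ),
        ∑ i ∈ Finset.range u, (2⁻¹ : ℝ) • (C j (r + 2 * i) + C j (r + 2 * i + 1))
          = (2⁻¹ : ℝ) • (∑ t ∈ Finset.range (r + 2 * u), C j t - ∑ t ∈ Finset.range r, C j t) := by
      intro j u
      rw [← Finset.smul_sum, sum_pairs (C j) r u]
    have hpavgI : ∀ (j : Fin k) (u : ℕ), u ≤ q →
        ∑ i ∈ Finset.Ico u q, (2⁻¹ : ℝ) • (C j (r + 2 * i) + C j (r + 2 * i + 1))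
          = (2⁻¹ : ℝ) • (∑ t ∈ Finset.range n, C j t - ∑ t ∈ Finset.range (r + 2 * u), C j t) := by
      intro j u hu
      rw [Finset.sum_Ico_eq_sub _ hu, hpavgr, hpavgr]
      have hn' : r + 2 * q = n := by omega
      rw [hn']
      module
    have hpart1 : ∀ m, m ≤ q → ∑ j : Fin k, ∑ t ∈ Finset.range m, C j (τ j t)
        = (2⁻¹ : ℝ) • (0 - ∑ j : Fin k, ∑ t ∈ Finset.range (r + 2 * (q - m)), C j t)
          + ∑ j : Fin k, ∑ i ∈ Finset.Ico (q - m) q, ε j i • d j i := by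
      intro m hm
      have step1 : ∀ j : Fin k, ∑ t ∈ Finset.range m, C j (τ j t)
          = ∑ i ∈ Finset.Ico (q - m) q,
              ((2⁻¹ : ℝ) • (C j (r + 2 * i) + C j (r + 2 * i + 1)) + ε j i • d j i) := by
        intro j
        have e1 : ∀ t ∈ Finset.range m, C j (τ j t)
            = (fun i => (2⁻¹ : ℝ) • (C j (r + 2 * i) + C j (r + 2 * i + 1)) + ε j i • d j i)
                (q - 1 - t) := by
          intro t ht
          have ht' := Finset.mem_range.mp ht
          have hτt : τ j t = selIdx j (q - 1 - t) := by
            simp only [hτ]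
            rw [if_pos (by omega)]
          rw [hτt, hselC]
        rw [Finset.sum_congr rfl e1]
        exact sum_reflect
          (fun i => (2⁻¹ : ℝ) • (C j (r + 2 * i) + C j (r + 2 * i + 1)) + ε j i • d j i) q m hm
      calc ∑ j : Fin k, ∑ t ∈ Finset.range m, C j (τ j t)
          = ∑ j : Fin k,
              (∑ i ∈ Finset.Ico (q - m) q, (2⁻¹ : ℝ) • (C j (r + 2 * i) + C j (r + 2 * i + 1))
               + ∑ i ∈ Finset.Ico (q - m) q, ε j i • d j i) := by
            refine Finset.sum_congr rfl fun j _ => ?_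
            rw [step1 j, Finset.sum_add_distrib]
        _ = (∑ j : Fin k, (2⁻¹ : ℝ) • (∑ t ∈ Finset.range n, C j t
                - ∑ t ∈ Finset.range (r + 2 * (q - m)), C j t))
            + ∑ j : Fin k, ∑ i ∈ Finset.Ico (q - m) q, ε j i • d j i := by
            rw [Finset.sum_add_distrib]
            congr 1
            exact Finset.sum_congr rfl fun j _ => hpavgI j _ (by omega)
        _ = (2⁻¹ : ℝ) • (0 - ∑ j : Fin k, ∑ t ∈ Finset.range (r + 2 * (q - m)), C j t)
            + ∑ j : Fin k, ∑ i ∈ Finset.Ico (q - m) q, ε j i • d j i := by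
            rw [← Finset.smul_sum, Finset.sum_sub_distrib, htot]
    have hpart2 : ∀ m, q + r ≤ m → m ≤ n →
        ∑ j : Fin k, ∑ t ∈ Finset.range m, C j (τ j t)
          = (2⁻¹ : ℝ) • (∑ j : Fin k, ∑ t ∈ Finset.range (r + 2 * (m - (q + r))), C j t)
            + ∑ j : Fin k, ∑ i ∈ Finset.Ico (m - (q + r)) q, ε j i • d j i := by
      intro m hm1 hm2
      have ht'q : m - (q + r) ≤ q := by omega
      have hperj : ∀ j : Fin k, ∑ t ∈ Finset.range m, C j (τ j t)
          = ((2⁻¹ : ℝ) • (∑ t ∈ Finset.range n, C j t - ∑ t ∈ Finset.range r, C j t)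
              + ∑ i ∈ Finset.Ico 0 q, ε j i • d j i)
            + (∑ t ∈ Finset.range r, C j t)
            + ((2⁻¹ : ℝ) • (∑ t ∈ Finset.range (r + 2 * (m - (q + r))), C j t
                  - ∑ t ∈ Finset.range r, C j t)
              - ∑ i ∈ Finset.range (m - (q + r)), ε j i • d j i) := by
        intro j
        have s1 : ∑ t ∈ Finset.range m, C j (τ j t)
            = (∑ t ∈ Finset.Ico 0 (q + r), C j (τ j t))
              + ∑ t ∈ Finset.Ico (q + r) m, C j (τ j t) := by
          rw [Finset.range_eq_Ico]
          exact (Finset.sum_Ico_consecutive _ (Nat.zero_le _) hm1).symm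
        have s2 : ∑ t ∈ Finset.Ico 0 (q + r), C j (τ j t)
            = (∑ t ∈ Finset.Ico 0 q, C j (τ j t))
              + ∑ t ∈ Finset.Ico q (q + r), C j (τ j t) :=
          (Finset.sum_Ico_consecutive _ (Nat.zero_le _) (Nat.le_add_right _ _)).symm
        have s3 : ∑ t ∈ Finset.Ico 0 q, C j (τ j t)
            = (2⁻¹ : ℝ) • (∑ t ∈ Finset.range n, C j t - ∑ t ∈ Finset.range r, C j t)
              + ∑ i ∈ Finset.Ico 0 q, ε j i • d j i := by
          rw [← Finset.range_eq_Ico]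
          have e1 : ∀ t ∈ Finset.range q, C j (τ j t)
              = (fun i => (2⁻¹ : ℝ) • (C j (r + 2 * i) + C j (r + 2 * i + 1)) + ε j i • d j i)
                  (q - 1 - t) := by
            intro t ht
            have ht' := Finset.mem_range.mp ht
            have hτt : τ j t = selIdx j (q - 1 - t) := by
              simp only [hτ]
              rw [if_pos (by omega)]
            rw [hτt, hselC]
          rw [Finset.sum_congr rfl e1,
            sum_reflect
              (fun i => (2⁻¹ : ℝ) • (C j (r + 2 * i) + C j (r + 2 * i + 1)) + ε j i • d j i)
              q q le_rfl]
          have h0 : q - q = 0 := by omega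
          rw [h0, Finset.sum_add_distrib]
          congr 1
          · have hx := hpavgI j 0 (Nat.zero_le q)
            simpa using hx
          · rw [Finset.range_eq_Ico]
        have s4 : ∑ t ∈ Finset.Ico q (q + r), C j (τ j t) = ∑ t ∈ Finset.range r, C j t := by
          rcases (by omega : r = 0 ∨ r = 1) with h | h
          · rw [h]
            simp
          · rw [h, Finset.sum_Ico_eq_sum_range]
            have hq1' : q + 1 - q = 1 := by omega
            rw [hq1', Finset.sum_range_one, Finset.sum_range_one]
            have hτq : τ j (q + 0) = 0 := by
              simp only [hτ]
              rw [if_neg (by omega), if_pos (by omega)]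
            rw [hτq]
        have s5 : ∑ t ∈ Finset.Ico (q + r) m, C j (τ j t)
            = (2⁻¹ : ℝ) • (∑ t ∈ Finset.range (r + 2 * (m - (q + r))), C j t
                - ∑ t ∈ Finset.range r, C j t)
              - ∑ i ∈ Finset.range (m - (q + r)), ε j i • d j i := by
          rw [Finset.sum_Ico_eq_sum_range]
          have e1 : ∀ i ∈ Finset.range (m - (q + r)), C j (τ j (q + r + i))
              = (2⁻¹ : ℝ) • (C j (r + 2 * i) + C j (r + 2 * i + 1)) - ε j i • d j i := by
            intro i hi
            have hi' := Finset.mem_range.mp hi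
            have hτt : τ j (q + r + i) = rejIdx j i := by
              simp only [hτ]
              rw [if_neg (by omega), if_neg (by omega)]
              congr 1
              omega
            rw [hτt, hrejC]
          rw [Finset.sum_congr rfl e1, Finset.sum_sub_distrib, hpavgr]
        rw [s1, s2, s3, s4, s5]
      have hsum : ∑ j : Fin k, ∑ t ∈ Finset.range m, C j (τ j t)
          = ∑ j : Fin k,
            (((2⁻¹ : ℝ) • (∑ t ∈ Finset.range n, C j t - ∑ t ∈ Finset.range r, C j t)
              + ∑ i ∈ Finset.Ico 0 q, ε j i • d j i)
            + (∑ t ∈ Finset.range r, C j t)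
            + ((2⁻¹ : ℝ) • (∑ t ∈ Finset.range (r + 2 * (m - (q + r))), C j t
                  - ∑ t ∈ Finset.range r, C j t)
              - ∑ i ∈ Finset.range (m - (q + r)), ε j i • d j i)) :=
        Finset.sum_congr rfl fun j _ => hperj j
      rw [hsum]
      simp only [Finset.sum_add_distrib, Finset.sum_sub_distrib, ← Finset.smul_sum]
      rw [htot, hWsplit' _ ht'q]
      module
    refine ⟨τ, hτlt, hτinj, ?_⟩
    intro m hm
    rcases le_or_gt m q with hmq | hmq
    · rw [hpart1 m hmq]
      have hP : ‖(0 : E) - ∑ j : Fin k, ∑ t ∈ Finset.range (r + 2 * (q - m)), C j t‖ ≤ Bd := by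
        rw [zero_sub, norm_neg]
        exact hpre _ (by omega)
      exact keybound _ _ hP (hWbound (q - m) (by omega))
    · have hm1 : q + r ≤ m := by omega
      rw [hpart2 m hm1 hm]
      exact keybound _ _ (hpre _ (by omega)) (hWbound _ (by omega))

private lemma filter_univ_eq {n : ℕ} :
    Finset.univ.filter (fun i : Fin n => (i : ℕ) < n) = Finset.univ := by
  ext i
  simp [i.isLt]



/-- The matrix transference theorem `U(K) ≤ 2 V(K)`: if `V ≥ 0` is such that
every `k × p` matrix with entries of norm at most `1` in a `d`-dimensional real
normed space admits a choice of signs `ε_i^j ∈ {-1, 1}` making the norm of the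
sum of the entries in the first `m` columns of the signed matrix at most `V`
for every `m`, then every `k × n` matrix with entries of norm at most `1` whose
total sum of entries is zero admits a row-wise rearrangement in which the sum
of the entries in the first `m` columns has norm at most `2V` for every `m`. -/
theorem transference
    (d k : ℕ) (hd : 0 < d) (hk : 0 < k)
    {E : Type*} [NormedAddCommGroup E] [NormedSpace ℝ E]
    [FiniteDimensional ℝ E] (hdim : Module.finrank ℝ E = d)
    (V : ℝ) (hV : 0 ≤ V)
    (hsigns : ∀ p : ℕ, 0 < p → ∀ B : Fin k → Fin p → E,
      (∀ j i, ‖B j i‖ ≤ 1) →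
      ∃ ε : Fin k → Fin p → ℝ, (∀ j i, ε j i = 1 ∨ ε j i = -1) ∧
        ∀ m : ℕ, 1 ≤ m → m ≤ p →
          ‖∑ j : Fin k, ∑ i ∈ Finset.univ.filter (fun i : Fin p => (i : ℕ) < m),
              ε j i • B j i‖ ≤ V) :
    ∀ n : ℕ, 0 < n → ∀ A : Fin k → Fin n → E,
      (∀ j i, ‖A j i‖ ≤ 1) →
      (∑ j : Fin k, ∑ i : Fin n, A j i = 0) →
      ∃ π : Fin k → Equiv.Perm (Fin n),
        ∀ m : ℕ, 1 ≤ m → m ≤ n →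
          ‖∑ j : Fin k, ∑ i ∈ Finset.univ.filter (fun i : Fin n => (i : ℕ) < m),
              A j (π j i)‖ ≤ 2 * V := by
  intro n hn A hA hAsum
  have hIcc : (Finset.Icc 1 n).Nonempty := ⟨1, Finset.mem_Icc.mpr ⟨le_rfl, hn⟩⟩
  set F : (Fin k → Equiv.Perm (Fin n)) → ℝ := fun π => (Finset.Icc 1 n).sup' hIcc
    (fun m => ‖∑ j : Fin k, ∑ i ∈ Finset.univ.filter (fun i : Fin n => (i : ℕ) < m),
        A j (π j i)‖) with hF
  have hFle : ∀ π m, 1 ≤ m → m ≤ n →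
      ‖∑ j : Fin k, ∑ i ∈ Finset.univ.filter (fun i : Fin n => (i : ℕ) < m),
          A j (π j i)‖ ≤ F π := by
    intro π m h1 h2
    simp only [hF]
    exact Finset.le_sup'
      (fun m => ‖∑ j : Fin k, ∑ i ∈ Finset.univ.filter (fun i : Fin n => (i : ℕ) < m),
        A j (π j i)‖) (Finset.mem_Icc.mpr ⟨h1, h2⟩)
  have hFub : ∀ (π : Fin k → Equiv.Perm (Fin n)) (x : ℝ),
      (∀ m, 1 ≤ m → m ≤ n →
        ‖∑ j : Fin k, ∑ i ∈ Finset.univ.filter (fun i : Fin n => (i : ℕ) < m),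
            A j (π j i)‖ ≤ x) → F π ≤ x := by
    intro π x hx
    simp only [hF]
    exact Finset.sup'_le hIcc
      (fun m => ‖∑ j : Fin k, ∑ i ∈ Finset.univ.filter (fun i : Fin n => (i : ℕ) < m),
        A j (π j i)‖) fun m hm =>
      hx m (Finset.mem_Icc.mp hm).1 (Finset.mem_Icc.mp hm).2
  obtain ⟨π₀, -, hπ₀min⟩ := Finset.exists_min_image Finset.univ F Finset.univ_nonempty
  set Bd : ℝ := F π₀ with hBdd
  have hBd0 : 0 ≤ Bd := le_trans (norm_nonneg _) (hFle π₀ 1 le_rfl hn)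
  set C : Fin k → ℕ → E := fun j t => if ht : t < n then A j (π₀ j ⟨t, ht⟩) else 0 with hCdef
  have hCnorm : ∀ j, ∀ i, i < n → ‖C j i‖ ≤ 1 := by
    intro j i hi
    simp only [hCdef]
    rw [dif_pos hi]
    exact hA j _
  have e2 : ∀ (m : ℕ), m ≤ n → ∀ j : Fin k, ∑ t ∈ Finset.range m, C j t
      = ∑ i ∈ Finset.univ.filter (fun i : Fin n => (i : ℕ) < m), A j (π₀ j i) := by
    intro m hm j
    calc ∑ t ∈ Finset.range m, C j t
        = ∑ i ∈ Finset.univ.filter (fun i : Fin n => (i : ℕ) < m), C j (i : ℕ) :=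
          (filter_fin_sum n m hm (fun t => C j t)).symm
      _ = ∑ i ∈ Finset.univ.filter (fun i : Fin n => (i : ℕ) < m), A j (π₀ j i) := by
          refine Finset.sum_congr rfl fun i _ => ?_
          simp only [hCdef]
          rw [dif_pos i.isLt, Fin.eta]
  have htot : ∑ j : Fin k, ∑ t ∈ Finset.range n, C j t = 0 := by
    calc ∑ j : Fin k, ∑ t ∈ Finset.range n, C j t
        = ∑ j : Fin k, ∑ i : Fin n, A j (π₀ j i) := by
          refine Finset.sum_congr rfl fun j _ => ?_
          rw [e2 n le_rfl j, filter_univ_eq]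
      _ = ∑ j : Fin k, ∑ i : Fin n, A j i :=
          Finset.sum_congr rfl fun j _ => Equiv.sum_comp (π₀ j) (A j)
      _ = 0 := hAsum
  have hpre : ∀ m, m ≤ n → ‖∑ j : Fin k, ∑ t ∈ Finset.range m, C j t‖ ≤ Bd := by
    intro m hm
    rcases Nat.eq_zero_or_pos m with rfl | hm1
    · simpa using hBd0
    · rw [Finset.sum_congr rfl fun j _ => e2 m hm j]
      exact hFle π₀ m hm1 hm
  obtain ⟨τ, hτlt, hτinj, hτbound⟩ :=
    core_step k V hV hsigns n hn Bd hBd0 C hCnorm htot hpre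
  have hinj : ∀ j, Function.Injective
      (fun i : Fin n => (⟨τ j (i : ℕ), hτlt j _ i.isLt⟩ : Fin n)) := by
    intro j a b hab
    exact Fin.ext (hτinj j _ _ a.isLt b.isLt (congrArg Fin.val hab))
  set σ : Fin k → Equiv.Perm (Fin n) := fun j =>
    Equiv.ofBijective _ (Finite.injective_iff_bijective.mp (hinj j)) with hσdef
  set π' : Fin k → Equiv.Perm (Fin n) := fun j => (σ j).trans (π₀ j) with hπ'def
  have hconv : ∀ (m : ℕ), m ≤ n → ∀ j : Fin k,
      ∑ i ∈ Finset.univ.filter (fun i : Fin n => (i : ℕ) < m), A j (π' j i)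
        = ∑ t ∈ Finset.range m, C j (τ j t) := by
    intro m hm j
    calc ∑ i ∈ Finset.univ.filter (fun i : Fin n => (i : ℕ) < m), A j (π' j i)
        = ∑ i ∈ Finset.univ.filter (fun i : Fin n => (i : ℕ) < m),
            (fun t => C j (τ j t)) (i : ℕ) := by
          refine Finset.sum_congr rfl fun i _ => ?_
          show A j (π₀ j (σ j i)) = C j (τ j (i : ℕ))
          have hσi : σ j i = (⟨τ j (i : ℕ), hτlt j _ i.isLt⟩ : Fin n) := rfl
          rw [hσi]
          simp only [hCdef]
          rw [dif_pos (hτlt j _ i.isLt)]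
      _ = ∑ t ∈ Finset.range m, C j (τ j t) :=
          filter_fin_sum n m hm (fun t => C j (τ j t))
  have hFπ' : F π' ≤ Bd / 2 + V := by
    refine hFub π' _ fun m h1 h2 => ?_
    rw [Finset.sum_congr rfl fun j _ => hconv m h2 j]
    exact hτbound m h2
  have hBle : Bd ≤ F π' := hπ₀min π' (Finset.mem_univ _)
  have hB2V : Bd ≤ 2 * V := by linarith
  refine ⟨π₀, fun m h1 h2 => ?_⟩
  exact le_trans (hFle π₀ m h1 h2) hB2V
end

section
/- Let d be a positive integer and equip ℝ^d with the ℓ1 norm. Let e_1, …, e_d be the standard basis of ℝ^d and e = e_1 + ⋯ + e_d. Let A be the d×(2d) matrix each of whose d rows equals (e_1, e_2, …, e_d, −e/d, −e/d, …, −e/d) (with d copies of −e/d). Then every entry of A has ℓ1 norm at most 1, the total sum of the entries of A is zero, and for every row-permuted copy C of A the sum of the entries in the first column of C has ℓ1 norm at least d/2. -/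
private lemma l1_norm_eq' {d : ℕ} (x : PiLp 1 (fun _ : Fin d => ℝ)) : ‖x‖ = ∑ t, |x t| := by
  rw [PiLp.norm_eq_sum (by norm_num)]
  simp [Real.norm_eq_abs]


private lemma abs_sub_ge' (n : ℕ) (α : ℝ) (h0 : 0 ≤ α) (h1 : α ≤ 1) :
    (n : ℝ) * (1 - α) + (if n = 0 then α else 0) ≤ |(n : ℝ) - α| := by
  rcases Nat.eq_zero_or_pos n with h | h
  · subst h
    simp only [Nat.cast_zero, zero_mul, if_pos rfl, zero_add, zero_sub, abs_neg]
    exact le_abs_self α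
  · have hn : (1:ℝ) ≤ n := by exact_mod_cast h
    rw [if_neg (by omega), add_zero, abs_of_nonneg (by linarith)]
    nlinarith

private lemma aux_lb (d : ℕ) (hd : 0 < d) (P : Fin d → Prop) [DecidablePred P]
    (key : Fin d → Fin d) :
    (d : ℝ)/2 ≤ ∑ t : Fin d,
      |∑ j : Fin d, (if P j then (if key j = t then (1:ℝ) else 0) else -(1/(d:ℝ)))| := by
  classical
  have hD : (0:ℝ) < d := by exact_mod_cast hd
  set m := (Finset.univ.filter P).card with hm
  set mc := (Finset.univ.filter (fun j => ¬ P j)).card with hmc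
  have hsplit : m + mc = d := by
    rw [hm, hmc, Finset.card_filter_add_card_filter_not,
      Finset.card_univ, Fintype.card_fin]
  set c : Fin d → ℕ := fun t => ((Finset.univ.filter P).filter (fun j => key j = t)).card
    with hc
  have hsum_c : ∑ t, c t = m :=
    (Finset.card_eq_sum_card_fiberwise (fun j _ => Finset.mem_univ (key j))).symm
  -- coordinate formula
  have hxt : ∀ t : Fin d,
      ∑ j : Fin d, (if P j then (if key j = t then (1:ℝ) else 0) else -(1/(d:ℝ)))
        = (c t : ℝ) - (mc : ℝ)/d := by
    intro t
    rw [Finset.sum_ite, Finset.sum_boole, Finset.sum_const, nsmul_eq_mul]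
    rw [hc]
    push_cast
    ring
  have hα0 : (0:ℝ) ≤ (mc : ℝ)/d := by positivity
  have hα1 : (mc : ℝ)/d ≤ 1 := by
    rw [div_le_one hD]
    have : mc ≤ d := by omega
    exact_mod_cast this
  have h1α : 1 - (mc : ℝ)/d = (m : ℝ)/d := by
    have : (m:ℝ) + mc = d := by exact_mod_cast hsplit
    field_simp
    linarith
  have hlb : ∀ t : Fin d,
      (c t : ℝ) * ((m:ℝ)/d) + (if c t = 0 then (mc:ℝ)/d else 0)
        ≤ |(c t : ℝ) - (mc : ℝ)/d| := by
    intro t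
    have := abs_sub_ge' (c t) ((mc:ℝ)/d) hα0 hα1
    rwa [h1α] at this
  set z := (Finset.univ.filter (fun t => c t = 0)).card with hz
  have hzmc : mc ≤ z := by
    have h2 : z + (Finset.univ.filter (fun t => ¬ c t = 0)).card = d := by
      rw [hz, Finset.card_filter_add_card_filter_not,
        Finset.card_univ, Fintype.card_fin]
    have h3 : (Finset.univ.filter (fun t => ¬ c t = 0)).card ≤ ∑ t, c t := by
      calc (Finset.univ.filter (fun t => ¬ c t = 0)).card
          = ∑ t ∈ Finset.univ.filter (fun t => ¬ c t = 0), 1 := by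
            rw [Finset.card_eq_sum_ones]
        _ ≤ ∑ t ∈ Finset.univ.filter (fun t => ¬ c t = 0), c t :=
            Finset.sum_le_sum (fun t ht => by
              have := (Finset.mem_filter.mp ht).2
              omega)
        _ ≤ ∑ t, c t := Finset.sum_le_sum_of_subset (Finset.filter_subset _ _)
    omega
  calc (d : ℝ)/2
      ≤ (m:ℝ) * ((m:ℝ)/d) + (mc:ℝ) * ((mc:ℝ)/d) := by
        have hMC : (m:ℝ) + mc = d := by exact_mod_cast hsplit
        have key2 : (m:ℝ) * ((m:ℝ)/d) + (mc:ℝ) * ((mc:ℝ)/d)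
            = ((m:ℝ)^2 + (mc:ℝ)^2)/d := by field_simp
        rw [key2, div_le_div_iff₀ (by norm_num) hD]
        nlinarith [sq_nonneg ((m:ℝ) - (mc:ℝ))]
    _ ≤ (m:ℝ) * ((m:ℝ)/d) + (z:ℝ) * ((mc:ℝ)/d) := by
        have : (mc:ℝ) ≤ z := by exact_mod_cast hzmc
        nlinarith
    _ = ∑ t : Fin d, ((c t : ℝ) * ((m:ℝ)/d) + (if c t = 0 then (mc:ℝ)/d else 0)) := by
        rw [Finset.sum_add_distrib, ← Finset.sum_mul]
        congr 1
        · congr 1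
          rw [← hsum_c]
          push_cast
          rfl
        · rw [← Finset.sum_filter, Finset.sum_const, nsmul_eq_mul]
    _ ≤ ∑ t : Fin d, |(c t : ℝ) - (mc : ℝ)/d| := Finset.sum_le_sum (fun t _ => hlb t)
    _ = _ := by rw [Finset.sum_congr rfl (fun t _ => (congrArg abs (hxt t)).symm)]

/-- The lower-bound example in the ℓ1 norm: let `A` be the `d × 2d` matrix each
of whose rows is `(e_1, …, e_d, -e/d, …, -e/d)`, where `e_1, …, e_d` is the
standard basis of `ℝ^d` (with the ℓ1 norm) and `e = e_1 + ⋯ + e_d`. Then every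
entry of `A` has ℓ1 norm at most `1`, the total sum of the entries is zero, and
in every row-permuted copy of `A` the sum of the entries in the first column
has ℓ1 norm at least `d/2`. -/
theorem l1_lower_bound_example
    (d : ℕ) (hd : 0 < d)
    (A : Fin d → Fin (2 * d) → PiLp 1 (fun _ : Fin d => ℝ))
    (hA : ∀ j i, A j i =
      if h : (i : ℕ) < d
      then (WithLp.equiv 1 (Fin d → ℝ)).symm (Pi.single ⟨(i : ℕ), h⟩ 1)
      else -((1 : ℝ) / d) • (WithLp.equiv 1 (Fin d → ℝ)).symm (fun _ => 1)) :
    (∀ j i, ‖A j i‖ ≤ 1) ∧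
    (∑ j : Fin d, ∑ i : Fin (2 * d), A j i = 0) ∧
    ∀ π : Fin d → Equiv.Perm (Fin (2 * d)),
      (d : ℝ) / 2 ≤ ‖∑ j : Fin d, A j (π j ⟨0, by omega⟩)‖ := by
  have hD : (0:ℝ) < d := by exact_mod_cast hd
  -- coordinate description of entries
  have hcoord : ∀ j i (t : Fin d), A j i t =
      if (i : ℕ) < d then (if (t : ℕ) = (i : ℕ) then 1 else 0) else -(1/(d:ℝ)) := by
    intro j i t
    rw [hA j i]
    by_cases h : (i : ℕ) < d
    · rw [dif_pos h, if_pos h, WithLp.equiv_symm_apply, PiLp.toLp_apply, Pi.single_apply]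
      simp [Fin.ext_iff]
    · rw [dif_neg h, if_neg h, PiLp.smul_apply, WithLp.equiv_symm_apply, PiLp.toLp_apply]
      show -((1:ℝ)/d) * 1 = -(1/(d:ℝ))
      ring
  refine ⟨?_, ?_, ?_⟩
  · intro j i
    rw [l1_norm_eq']
    rcases lt_or_ge (i : ℕ) d with h | h
    · have key : ∀ t : Fin d, |A j i t| = if t = (⟨(i:ℕ), h⟩ : Fin d) then 1 else 0 := by
        intro t
        rw [hcoord j i t, if_pos h]
        simp only [Fin.ext_iff]
        split_ifs <;> simp
      rw [Finset.sum_congr rfl (fun t _ => key t), Finset.sum_ite_eq' Finset.univ]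
      simp
    · have key : ∀ t : Fin d, |A j i t| = 1/(d:ℝ) := by
        intro t
        rw [hcoord j i t, if_neg (by omega), abs_neg, abs_of_nonneg (by positivity)]
      rw [Finset.sum_congr rfl (fun t _ => key t)]
      rw [Finset.sum_const, Finset.card_univ, Fintype.card_fin, nsmul_eq_mul]
      rw [mul_one_div, div_self (by positivity)]
  · apply Finset.sum_eq_zero
    intro j _
    ext t
    rw [WithLp.ofLp_sum, Finset.sum_apply]
    have key : ∀ i : Fin (2*d), A j i t =
        (fun n : ℕ => if n < d then (if (t : ℕ) = n then 1 else 0) else -(1/(d:ℝ))) (i : ℕ) :=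
      fun i => hcoord j i t
    have hsum := Fin.sum_univ_eq_sum_range
      (fun n : ℕ => if n < d then (if (t : ℕ) = n then (1:ℝ) else 0) else -(1/(d:ℝ))) (2*d)
    rw [Finset.sum_congr rfl (fun i _ => key i), hsum]
    rw [Finset.range_eq_Ico, ← Finset.sum_Ico_consecutive _ (Nat.zero_le d) (by omega : d ≤ 2*d)]
    have h1 : ∑ n ∈ Finset.Ico 0 d,
        (if n < d then (if (t : ℕ) = n then (1:ℝ) else 0) else -(1/(d:ℝ))) = 1 := by
      rw [← Finset.range_eq_Ico,
        Finset.sum_congr rfl (fun n hn => if_pos (Finset.mem_range.mp hn)),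
        Finset.sum_ite_eq (Finset.range d) (t : ℕ) (fun _ => (1:ℝ))]
      simp [t.isLt]
    have h2 : ∑ n ∈ Finset.Ico d (2*d),
        (if n < d then (if (t : ℕ) = n then (1:ℝ) else 0) else -(1/(d:ℝ))) = -1 := by
      rw [Finset.sum_congr rfl (fun n hn => if_neg (by
        have := (Finset.mem_Ico.mp hn).1; omega))]
      rw [Finset.sum_const, Nat.card_Ico, nsmul_eq_mul]
      have : (2*d - d : ℕ) = d := by omega
      rw [this]
      field_simp
    rw [h1, h2]
    simp
  · intro π
    rw [l1_norm_eq']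
    refine le_trans (aux_lb d hd
        (fun j => ((π j ⟨0, by omega⟩ : Fin (2*d)) : ℕ) < d)
        (fun j => if h : ((π j ⟨0, by omega⟩ : Fin (2*d)) : ℕ) < d
          then ⟨((π j ⟨0, by omega⟩ : Fin (2*d)) : ℕ), h⟩ else ⟨0, hd⟩))
      (le_of_eq (Finset.sum_congr rfl (fun t _ => ?_)))
    rw [WithLp.ofLp_sum, Finset.sum_apply]
    congr 1
    refine Finset.sum_congr rfl (fun j _ => ?_)
    rw [hcoord]
    by_cases h : ((π j ⟨0, by omega⟩ : Fin (2*d)) : ℕ) < d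
    · rw [if_pos h, if_pos h, dif_pos h]
      simp [Fin.ext_iff, eq_comm]
    · rw [if_neg h, if_neg h]
end
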